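/- arXiv:1310.1386 — 7 statements merged into one kernel-verified Lean document; each statement's English description precedes it below -/
import Mathlib

section
/- For every integer r ≥ 2 there exists a constant C_r such that the following holds: for every natural number k, every surjective colouring Δ: ℕ^(r) ↠ [k], and every natural number m with m ≤ k, there exists m' ∈ F_Δ such that |m - m'| ≤ (r/(2·(r!)^{1/r}))·m^{1-1/r} + C_r·m^{1-2/r}. -/
open Finset

/-- The set of colours attained by `Δ` on `r`-element subsets of `X`. -/
def coloursOn {α : Type*} (r : ℕ) (Δ : Finset ℕ → α) (X : Set ℕ) : Set α :=
  Δ '' {e : Finset ℕ | ↑e ⊆ X ∧ e.card = r}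

/-- `γ(X)`: the number of colours attained by `Δ` on `r`-element subsets of `X`. -/
noncomputable def gamma {α : Type*} (r : ℕ) (Δ : Finset ℕ → α) (X : Set ℕ) : ℕ :=
  (coloursOn r Δ X).ncard

/-- `F_Δ`: the set of values `γ(X)` over infinite subsets `X ⊆ ℕ`. -/
def Fdelta {α : Type*} (r : ℕ) (Δ : Finset ℕ → α) : Set ℕ :=
  {m | ∃ X : Set ℕ, X.Infinite ∧ gamma r Δ X = m}

/-- `Δ` is a surjective colouring of `ℕ^(r)`, the `r`-element subsets of `ℕ`,
onto the colour set `[k] = {1, …, k}`. -/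
def IsColouring (r k : ℕ) (Δ : Finset ℕ → ℕ) : Prop :=
  (∀ e : Finset ℕ, e.card = r → Δ e ∈ Finset.Icc 1 k) ∧
  ∀ c ∈ Finset.Icc 1 k, ∃ e : Finset ℕ, e.card = r ∧ Δ e = c

lemma exists_finset_in_infinite {S : Set ℕ} (hS : S.Infinite) (n : ℕ) :
    ∃ t : Finset ℕ, ↑t ⊆ S ∧ t.card = n := by
  obtain ⟨t, hts, htfin, hcard⟩ := hS.exists_subset_ncard_eq n
  exact ⟨htfin.toFinset, by simpa using hts,
    by rwa [← Set.ncard_coe_finset, htfin.coe_toFinset]⟩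

/-- Infinite Ramsey theorem for `s`-uniform colourings with colours ≤ k. -/
lemma inf_ramsey (k : ℕ) : ∀ (s : ℕ) (f : Finset ℕ → ℕ), (∀ e, f e ≤ k) →
    ∀ S : Set ℕ, S.Infinite →
    ∃ M : Set ℕ, M ⊆ S ∧ M.Infinite ∧ ∃ c, c ≤ k ∧
      ∀ e : Finset ℕ, ↑e ⊆ M → e.card = s → f e = c := by
  intro s
  induction s with
  | zero =>
    intro f hf S hS
    refine ⟨S, subset_rfl, hS, f ∅, hf ∅, fun e _ hc => ?_⟩
    rw [Finset.card_eq_zero.mp hc]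
  | succ s IH =>
    intro f hf S hS
    have key : ∀ T : {T : Set ℕ // T.Infinite}, ∃ (a : ℕ) (U : Set ℕ) (c : ℕ),
        a ∈ T.1 ∧ U ⊆ T.1 ∧ (∀ x ∈ U, a < x) ∧ U.Infinite ∧ c ≤ k ∧
        ∀ e : Finset ℕ, ↑e ⊆ U → e.card = s → f (insert a e) = c := by
      rintro ⟨T, hT⟩
      have hne : T.Nonempty := hT.nonempty
      set a := sInf T with ha
      have haT : a ∈ T := Nat.sInf_mem hne
      have hT' : (T \ Set.Iic a).Infinite := hT.diff (Set.finite_Iic a)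
      obtain ⟨M, hMsub, hMinf, c, hck, hc⟩ :=
        IH (fun e => f (insert a e)) (fun e => hf _) _ hT'
      exact ⟨a, M, c, haT, hMsub.trans Set.diff_subset,
        fun x hx => by simpa using (hMsub hx).2, hMinf, hck, hc⟩
    choose av Uv cv hmem hsub hlt hinf hck hconst using key
    let step : {T : Set ℕ // T.Infinite} → {T : Set ℕ // T.Infinite} :=
      fun T => ⟨Uv T, hinf T⟩
    let Ss : ℕ → {T : Set ℕ // T.Infinite} := fun n => step^[n] ⟨S, hS⟩
    have hSs_succ : ∀ n, Ss (n+1) = step (Ss n) := fun n =>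
      Function.iterate_succ_apply' _ _ _
    let A : ℕ → ℕ := fun n => av (Ss n)
    let Cc : ℕ → ℕ := fun n => cv (Ss n)
    have hmemA : ∀ n, A n ∈ (Ss n).1 := fun n => hmem _
    have hsubstep : ∀ n, (Ss (n+1)).1 ⊆ (Ss n).1 := by
      intro n; rw [hSs_succ]; exact hsub _
    have hltstep : ∀ n, ∀ x ∈ (Ss (n+1)).1, A n < x := by
      intro n; rw [hSs_succ]; exact hlt _
    have hchain : ∀ i j, i ≤ j → (Ss j).1 ⊆ (Ss i).1 := by
      intro i j hij
      induction j with
      | zero => simp_all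
      | succ j IHj =>
        rcases Nat.lt_or_ge i (j+1) with h | h
        · exact (hsubstep j).trans (IHj (Nat.lt_succ_iff.mp h))
        · have : i = j + 1 := le_antisymm hij h
          subst this; exact subset_rfl
    have hAmono : StrictMono A :=
      strictMono_nat_of_lt_succ (fun n => hltstep n _ (hmemA (n+1)))
    -- pigeonhole on colours
    obtain ⟨c0, hc0⟩ := Finite.exists_infinite_fiber
      (fun n => (⟨Cc n, Nat.lt_succ_of_le (hck (Ss n))⟩ : Fin (k+1)))
    set I : Set ℕ := {n | Cc n = (c0 : ℕ)} with hI
    have hIinf : I.Infinite := by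
      have := Set.infinite_coe_iff.mp hc0
      refine this.mono ?_
      intro n hn
      have : (⟨Cc n, _⟩ : Fin (k+1)) = c0 := hn
      simpa [hI] using congrArg Fin.val this
    refine ⟨A '' I, ?_, hIinf.image (hAmono.injective.injOn), (c0 : ℕ), ?_, ?_⟩
    · rintro x ⟨n, _, rfl⟩
      exact hchain 0 n (Nat.zero_le n) (hmemA n)
    · exact Nat.lt_succ_iff.mp c0.2
    · intro e he hcard
      have hne : e.Nonempty := Finset.card_pos.mp (by omega)
      set x := e.min' hne with hx
      obtain ⟨i, hiI, hxi⟩ := he (e.min'_mem hne)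
      have herase : ↑(e.erase x) ⊆ (Ss (i+1)).1 := by
        intro y hy
        have hy' : y ∈ e.erase x := hy
        obtain ⟨j, hjI, hyj⟩ := he (Finset.erase_subset _ _ hy')
        have hyx : y ≠ x := Finset.ne_of_mem_erase hy'
        have hxy : x ≤ y := e.min'_le y (Finset.mem_of_mem_erase hy')
        have hij : i < j := by
          have : A i < A j := by omega
          exact hAmono.lt_iff_lt.mp this
        rw [← hyj]
        exact hchain (i+1) j hij (hmemA j)
      have hcard' : (e.erase x).card = s := by
        rw [Finset.card_erase_of_mem (e.min'_mem hne)]; omega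
      have hUv : (Ss (i+1)).1 = Uv (Ss i) := by rw [hSs_succ]
      have := hconst (Ss i) (e.erase x) (by rw [← hUv]; exact herase) hcard'
      have hxA : av (Ss i) = x := hxi
      rw [hxA, Finset.insert_erase (by rw [hx]; exact e.min'_mem hne)] at this
      exact this.trans hiI

/-- Canonicalisation: given a finite set `W` and an infinite set `S`, there is an infinite
`M ⊆ S` avoiding `W` such that the colour of any `r`-set inside `W ∪ M` that meets `M`
depends only on its intersection with `W`. -/
lemma canonical_tail (r k : ℕ) (Δ : Finset ℕ → ℕ) (hΔ : ∀ e : Finset ℕ, e.card = r → Δ e ≤ k)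
    (W : Finset ℕ) (S : Set ℕ) (hS : S.Infinite) :
    ∃ (M : Set ℕ) (col : Finset ℕ → ℕ), M ⊆ S ∧ M.Infinite ∧ (∀ x ∈ M, x ∉ W) ∧
      ∀ e : Finset ℕ, e.card = r → ↑e ⊆ ↑W ∪ M → ¬ (e ⊆ W) → Δ e = col (e ∩ W) := by
  have hS' : (S \ ↑W).Infinite := hS.diff W.finite_toSet
  have main : ∀ 𝒯 : Finset (Finset ℕ), ∃ M : Set ℕ, M ⊆ S \ ↑W ∧ M.Infinite ∧
      ∃ col : Finset ℕ → ℕ, ∀ T ∈ 𝒯, ∀ u : Finset ℕ, ↑u ⊆ M → u.card = r - T.card →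
        min (Δ (T ∪ u)) k = col T := by
    intro 𝒯
    induction 𝒯 using Finset.induction_on with
    | empty => exact ⟨S \ ↑W, subset_rfl, hS', fun _ => 0, by simp⟩
    | @insert T₀ 𝒯 hT₀ IH =>
      obtain ⟨M, hMS, hMinf, col, hcol⟩ := IH
      obtain ⟨M', hM'M, hM'inf, c, -, hc⟩ :=
        inf_ramsey k (r - T₀.card) (fun u => min (Δ (T₀ ∪ u)) k)
          (fun u => min_le_right _ _) M hMinf
      refine ⟨M', hM'M.trans hMS, hM'inf, fun T => if T = T₀ then c else col T, ?_⟩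
      intro T hT u hu hucard
      by_cases hTT₀ : T = T₀
      · subst hTT₀
        simp only [if_pos rfl]
        exact hc u hu hucard
      · have hT' : T ∈ 𝒯 := Finset.mem_of_mem_insert_of_ne hT hTT₀
        simp only [if_neg hTT₀]
        exact hcol T hT' u (hu.trans hM'M) hucard
  obtain ⟨M, hMS, hMinf, col, hcol⟩ := main W.powerset
  refine ⟨M, col, fun x hx => (hMS hx).1, hMinf, fun x hx => by simpa using (hMS hx).2, ?_⟩
  intro e hecard hesub hnsub
  have hT : e ∩ W ∈ W.powerset := Finset.mem_powerset.mpr (Finset.inter_subset_right)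
  have husub : ↑(e \ W) ⊆ M := by
    intro x hx
    have hx' : x ∈ e \ W := hx
    have hxe : x ∈ e := (Finset.mem_sdiff.mp hx').1
    have hxW : x ∉ W := (Finset.mem_sdiff.mp hx').2
    rcases hesub hxe with h | h
    · exact absurd h hxW
    · exact h
  have hucard : (e \ W).card = r - (e ∩ W).card := by
    have := Finset.card_inter_add_card_sdiff e W
    omega
  have key := hcol (e ∩ W) hT (e \ W) husub hucard
  rw [Finset.union_comm, Finset.sdiff_union_inter] at key
  rw [← key]
  exact (min_eq_left (hΔ e hecard)).symm

/-- `(W, M, col)` is a canonical pair: `M` is infinite, avoids `W`, and colours of `r`-sets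
in `W ∪ M` meeting `M` are determined by their trace on `W` via `col`. -/
def IsCanon (r : ℕ) (Δ : Finset ℕ → ℕ) (W : Finset ℕ) (M : Set ℕ) (col : Finset ℕ → ℕ) : Prop :=
  M.Infinite ∧ (∀ x ∈ M, x ∉ W) ∧
  ∀ e : Finset ℕ, e.card = r → ↑e ⊆ ↑W ∪ M → ¬ e ⊆ W → Δ e = col (e ∩ W)

/-- The finite set of colours attained on `W ∪ M` for a canonical pair. -/
def AF (r : ℕ) (Δ : Finset ℕ → ℕ) (W : Finset ℕ) (col : Finset ℕ → ℕ) : Finset ℕ :=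
  ((W.powersetCard r).image Δ) ∪ ((W.powerset.filter fun T => T.card < r).image col)

lemma IsCanon.subset {r : ℕ} {Δ : Finset ℕ → ℕ} {W V : Finset ℕ} {M : Set ℕ}
    {col : Finset ℕ → ℕ} (h : IsCanon r Δ W M col) (hVW : V ⊆ W) :
    IsCanon r Δ V M col := by
  obtain ⟨hMinf, hdisj, hcanon⟩ := h
  refine ⟨hMinf, fun x hx hxV => hdisj x hx (hVW hxV), ?_⟩
  intro e hcard hesub hnsub
  have heW : ↑e ⊆ ↑W ∪ M := by
    intro x hx
    rcases hesub hx with h | h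
    · exact Or.inl (hVW h)
    · exact Or.inr h
  have hinter : e ∩ W = e ∩ V := by
    ext x
    simp only [Finset.mem_inter]
    constructor
    · rintro ⟨hxe, hxW⟩
      refine ⟨hxe, ?_⟩
      rcases hesub hxe with h | h
      · exact h
      · exact absurd hxW (hdisj x h)
    · rintro ⟨hxe, hxV⟩
      exact ⟨hxe, hVW hxV⟩
  have hnW : ¬ e ⊆ W := by
    intro hW
    apply hnsub
    intro x hx
    have : x ∈ e ∩ V := by rw [← hinter]; exact Finset.mem_inter.mpr ⟨hx, hW hx⟩
    exact (Finset.mem_inter.mp this).2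
  rw [hcanon e hcard heW hnW, hinter]

lemma coloursOn_canon_eq {r k : ℕ} {Δ : Finset ℕ → ℕ} (hr : 1 ≤ r)
    {W : Finset ℕ} {M : Set ℕ} {col : Finset ℕ → ℕ} (h : IsCanon r Δ W M col) :
    coloursOn r Δ (↑W ∪ M) = ↑(AF r Δ W col) := by
  obtain ⟨hMinf, hdisj, hcanon⟩ := h
  ext c
  constructor
  · rintro ⟨e, ⟨hesub, hecard⟩, rfl⟩
    by_cases heW : e ⊆ W
    · apply Finset.mem_coe.mpr
      apply Finset.mem_union_left
      exact Finset.mem_image_of_mem Δ (Finset.mem_powersetCard.mpr ⟨heW, hecard⟩)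
    · apply Finset.mem_coe.mpr
      apply Finset.mem_union_right
      rw [hcanon e hecard hesub heW]
      apply Finset.mem_image_of_mem
      refine Finset.mem_filter.mpr ⟨Finset.mem_powerset.mpr Finset.inter_subset_right, ?_⟩
      have hsub : e ∩ W ⊆ e := Finset.inter_subset_left
      have hne : e ∩ W ≠ e := by
        intro heq
        apply heW
        intro x hx
        have : x ∈ e ∩ W := heq.symm ▸ hx
        exact (Finset.mem_inter.mp this).2
      have := Finset.card_lt_card (Finset.ssubset_iff_subset_ne.mpr ⟨hsub, hne⟩)
      omega
  · intro hc
    rcases Finset.mem_union.mp (Finset.mem_coe.mp hc) with hc | hc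
    · obtain ⟨e, he, rfl⟩ := Finset.mem_image.mp hc
      obtain ⟨heW, hecard⟩ := Finset.mem_powersetCard.mp he
      exact ⟨e, ⟨fun x hx => Or.inl (heW hx), hecard⟩, rfl⟩
    · obtain ⟨T, hT, rfl⟩ := Finset.mem_image.mp hc
      obtain ⟨hTW, hTcard⟩ := Finset.mem_filter.mp hT
      have hTW' := Finset.mem_powerset.mp hTW
      obtain ⟨u, huM, hucard⟩ := exists_finset_in_infinite hMinf (r - T.card)
      have hdisjTu : Disjoint T u := by
        rw [Finset.disjoint_left]
        intro x hxT hxu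
        exact hdisj x (huM hxu) (hTW' hxT)
      have hecard : (T ∪ u).card = r := by
        rw [Finset.card_union_of_disjoint hdisjTu]; omega
      have hesub : ↑(T ∪ u) ⊆ ↑W ∪ M := by
        intro x hx
        rcases Finset.mem_union.mp hx with h | h
        · exact Or.inl (hTW' h)
        · exact Or.inr (huM h)
      have hune : u.Nonempty := Finset.card_pos.mp (by omega)
      have hnsub : ¬ (T ∪ u ⊆ W) := by
        intro hW
        obtain ⟨x, hxu⟩ := hune
        exact hdisj x (huM hxu) (hW (Finset.mem_union_right _ hxu))
      have hinter : (T ∪ u) ∩ W = T := by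
        ext x
        simp only [Finset.mem_inter, Finset.mem_union]
        constructor
        · rintro ⟨hx | hx, hxW⟩
          · exact hx
          · exact absurd hxW (hdisj x (huM hx))
        · intro hx
          exact ⟨Or.inl hx, hTW' hx⟩
      refine ⟨T ∪ u, ⟨hesub, hecard⟩, ?_⟩
      rw [hcanon _ hecard hesub hnsub, hinter]

lemma AF_subset_AF {r : ℕ} {Δ : Finset ℕ → ℕ} {V W : Finset ℕ} {col : Finset ℕ → ℕ}
    (h : V ⊆ W) : AF r Δ V col ⊆ AF r Δ W col := by
  unfold AF
  apply Finset.union_subset_union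
  · exact Finset.image_subset_image (Finset.powersetCard_mono h)
  · exact Finset.image_subset_image (Finset.filter_subset_filter _ (Finset.powerset_mono.mpr h))

lemma AF_card_le {r : ℕ} {Δ : Finset ℕ → ℕ} {W : Finset ℕ} {col : Finset ℕ → ℕ} :
    (AF r Δ W col).card ≤ W.card.choose r + ∑ j ∈ Finset.range r, W.card.choose j := by
  refine (Finset.card_union_le _ _).trans ?_
  gcongr
  · exact (Finset.card_image_le).trans_eq (by rw [Finset.card_powersetCard])
  · refine (Finset.card_image_le).trans ?_
    have hsub : W.powerset.filter (fun T => T.card < r) ⊆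
        (Finset.range r).biUnion (fun j => W.powersetCard j) := by
      intro T hT
      obtain ⟨hTW, hTcard⟩ := Finset.mem_filter.mp hT
      exact Finset.mem_biUnion.mpr ⟨T.card, Finset.mem_range.mpr hTcard,
        Finset.mem_powersetCard.mpr ⟨Finset.mem_powerset.mp hTW, rfl⟩⟩
    refine (Finset.card_le_card hsub).trans ?_
    refine (Finset.card_biUnion_le).trans ?_
    apply Finset.sum_le_sum
    intro j _
    rw [Finset.card_powersetCard]

lemma AF_card_le_pow {r : ℕ} {Δ : Finset ℕ → ℕ} {W : Finset ℕ} {col : Finset ℕ → ℕ} :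
    (AF r Δ W col).card ≤ 2 * 2 ^ W.card := by
  refine (Finset.card_union_le _ _).trans ?_
  rw [two_mul]
  gcongr
  · refine (Finset.card_image_le).trans ?_
    refine le_trans ?_ (le_of_eq (Finset.card_powerset W))
    apply Finset.card_le_card
    intro T hT
    exact Finset.mem_powerset.mpr (Finset.mem_powersetCard.mp hT).1
  · refine (Finset.card_image_le).trans ?_
    refine le_trans ?_ (le_of_eq (Finset.card_powerset W))
    exact Finset.card_le_card (Finset.filter_subset _ _)

lemma exists_good_w {r k : ℕ} {Δ : Finset ℕ → ℕ} (hr : 1 ≤ r)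
    {W : Finset ℕ} {M : Set ℕ} {col : Finset ℕ → ℕ} (h : IsCanon r Δ W M col)
    (hW : W.Nonempty) :
    ∃ w ∈ W, W.card * ((AF r Δ W col).card - (AF r Δ (W.erase w) col).card)
      ≤ r * (AF r Δ W col).card := by
  classical
  set A := AF r Δ W col with hA
  have hrep : ∀ c ∈ A, ∃ e : Finset ℕ, (↑e ⊆ ↑W ∪ M ∧ e.card = r) ∧ Δ e = c := by
    intro c hc
    have : c ∈ coloursOn r Δ (↑W ∪ M) := by
      rw [coloursOn_canon_eq (k := k) hr h]; exact_mod_cast hc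
    exact this
  choose! rep hrep1 hrep2 using hrep
  have hlost : ∀ w ∈ W, A \ AF r Δ (W.erase w) col ⊆ A.filter (fun c => w ∈ rep c) := by
    intro w hw c hc
    obtain ⟨hcA, hcA'⟩ := Finset.mem_sdiff.mp hc
    refine Finset.mem_filter.mpr ⟨hcA, ?_⟩
    by_contra hwrep
    apply hcA'
    have hsub : ↑(rep c) ⊆ ↑(W.erase w) ∪ M := by
      intro x hx
      rcases (hrep1 c hcA).1 hx with hxW | hxM
      · left
        refine Finset.mem_coe.mpr (Finset.mem_erase.mpr ⟨?_, hxW⟩)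
        rintro rfl
        exact hwrep hx
      · exact Or.inr hxM
    have : c ∈ coloursOn r Δ (↑(W.erase w) ∪ M) :=
      ⟨rep c, ⟨hsub, (hrep1 c hcA).2⟩, hrep2 c hcA⟩
    rw [coloursOn_canon_eq (k := k) hr (h.subset (Finset.erase_subset w W))] at this
    exact_mod_cast this
  have hsum : ∑ w ∈ W, (A.card - (AF r Δ (W.erase w) col).card) ≤ A.card * r := by
    calc ∑ w ∈ W, (A.card - (AF r Δ (W.erase w) col).card)
        = ∑ w ∈ W, (A \ AF r Δ (W.erase w) col).card := by
          refine Finset.sum_congr rfl fun w hw => ?_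
          rw [Finset.card_sdiff_of_subset (AF_subset_AF (Finset.erase_subset w W))]
      _ ≤ ∑ w ∈ W, (A.filter (fun c => w ∈ rep c)).card :=
          Finset.sum_le_sum fun w hw => Finset.card_le_card (hlost w hw)
      _ = ∑ w ∈ W, ∑ c ∈ A, (if w ∈ rep c then 1 else 0) := by
          refine Finset.sum_congr rfl fun w _ => ?_
          rw [Finset.card_filter]
      _ = ∑ c ∈ A, ∑ w ∈ W, (if w ∈ rep c then 1 else 0) := Finset.sum_comm
      _ = ∑ c ∈ A, (W.filter (fun w => w ∈ rep c)).card := by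
          refine Finset.sum_congr rfl fun c _ => ?_
          rw [Finset.card_filter]
      _ ≤ ∑ c ∈ A, r := by
          refine Finset.sum_le_sum fun c hc => ?_
          calc (W.filter (fun w => w ∈ rep c)).card
              ≤ (rep c).card := Finset.card_le_card fun w hw => (Finset.mem_filter.mp hw).2
            _ = r := (hrep1 c hc).2
      _ = A.card * r := by rw [Finset.sum_const, smul_eq_mul]
  obtain ⟨w, hw, hle⟩ := Finset.exists_le_of_sum_le hW
    (show ∑ w ∈ W, W.card * (A.card - (AF r Δ (W.erase w) col).card)
        ≤ ∑ _w ∈ W, r * A.card by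
      rw [← Finset.mul_sum, Finset.sum_const, smul_eq_mul]
      calc W.card * ∑ w ∈ W, (A.card - (AF r Δ (W.erase w) col).card)
          ≤ W.card * (A.card * r) := Nat.mul_le_mul_left _ hsum
        _ = W.card * (r * A.card) := by ring)
  exact ⟨w, hw, hle⟩

lemma choose_le_choose_of_le {n a b : ℕ} (hab : a ≤ b) (hb : 2 * b ≤ n + 1) :
    n.choose a ≤ n.choose b := by
  induction b with
  | zero =>
    have : a = 0 := by omega
    subst this; exact le_rfl
  | succ b IH =>
    rcases Nat.lt_or_ge a (b+1) with h | h
    · have h1 : n.choose a ≤ n.choose b := IH (by omega) (by omega)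
      have h2 := Nat.choose_succ_right_eq n b
      have h3 : n.choose b * (b+1) ≤ n.choose b * (n - b) :=
        Nat.mul_le_mul_left _ (by omega)
      have h4 : n.choose b * (b+1) ≤ n.choose (b+1) * (b+1) := by omega
      exact h1.trans (Nat.le_of_mul_le_mul_right h4 (by omega))
    · have : a = b + 1 := le_antisymm hab h
      subst this; exact le_rfl

lemma count_nat {r n m : ℕ} (hr : 2 ≤ r) (hn : 2*r ≤ n)
    (hm : m ≤ n.choose r + ∑ j ∈ Finset.range r, n.choose j) :
    r.factorial * m ≤ (n + r^2)^r := by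
  have h1 : r.factorial * n.choose r ≤ n ^ r := by
    rw [← Nat.descFactorial_eq_factorial_mul_choose]
    exact Nat.descFactorial_le_pow n r
  have h2 : ∑ j ∈ Finset.range r, n.choose j ≤ r * n.choose (r-1) := by
    calc ∑ j ∈ Finset.range r, n.choose j
        ≤ ∑ _j ∈ Finset.range r, n.choose (r-1) := by
          refine Finset.sum_le_sum fun j hj => ?_
          have hj' := Finset.mem_range.mp hj
          exact choose_le_choose_of_le (by omega) (by omega)
      _ = r * n.choose (r-1) := by rw [Finset.sum_const, Finset.card_range, smul_eq_mul]
  have h3 : (r-1).factorial * n.choose (r-1) ≤ n ^ (r-1) := by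
    rw [← Nat.descFactorial_eq_factorial_mul_choose]
    exact Nat.descFactorial_le_pow n (r-1)
  have hfact : r.factorial = r * (r-1).factorial := by
    conv_lhs => rw [show r = (r-1) + 1 by omega]
    rw [Nat.factorial_succ]
    congr 1
    omega
  have h4 : r.factorial * (r * n.choose (r-1)) ≤ r^2 * n^(r-1) := by
    calc r.factorial * (r * n.choose (r-1))
        = r * r * ((r-1).factorial * n.choose (r-1)) := by rw [hfact]; ring
      _ ≤ r * r * n^(r-1) := Nat.mul_le_mul_left _ h3
      _ = r^2 * n^(r-1) := by ring
  have h5 : r.factorial * m ≤ n ^ r + r^2 * n^(r-1) := by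
    calc r.factorial * m
        ≤ r.factorial * (n.choose r + r * n.choose (r-1)) :=
          Nat.mul_le_mul_left _ (hm.trans (by omega))
      _ = r.factorial * n.choose r + r.factorial * (r * n.choose (r-1)) := by ring
      _ ≤ n ^ r + r^2 * n^(r-1) := Nat.add_le_add h1 h4
  refine h5.trans ?_
  have h6 : (n + r^2)^r = (n + r^2)^(r-1) * (n + r^2) := by
    rw [← pow_succ]; congr 1; omega
  have h7 : n^(r-1) * (n + r^2) ≤ (n + r^2)^(r-1) * (n + r^2) :=
    Nat.mul_le_mul_right _ (Nat.pow_le_pow_left (by omega) _)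
  have h8 : n ^ r + r^2 * n^(r-1) = n^(r-1) * (n + r^2) := by
    have : n ^ r = n^(r-1) * n := by
      rw [← pow_succ]; congr 1; omega
    rw [this]; ring
  omega

set_option maxHeartbeats 1000000 in
lemma numeric (r m n γ γ' : ℕ) (hr : 2 ≤ r) (hm : 1 ≤ m)
    (h1 : γ' < m) (h2 : m ≤ γ)
    (hkey : n * (γ - γ') ≤ r * γ)
    (hpow : γ ≤ 2 * 2 ^ n)
    (hcnt : 2*r ≤ n → r.factorial * m ≤ (n + r^2)^r) :
    ∃ x : ℕ, (x = γ ∨ x = γ') ∧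
      |(m:ℝ) - (x:ℝ)| ≤
        ((r : ℝ) / (2 * ((Nat.factorial r : ℝ)) ^ ((1 : ℝ) / r))) * (m : ℝ) ^ (1 - 1 / (r : ℝ))
        + ((r:ℝ) * (2*(r:ℝ)^2+2*(r:ℝ))^r + 2*4^r + (r:ℝ)^3 + (r:ℝ)^2)
          * (m : ℝ) ^ (1 - 2 / (r : ℝ)) := by
  have hsub : γ' ≤ γ := by omega
  have hR2 : (2:ℝ) ≤ (r:ℝ) := by exact_mod_cast hr
  have hR0 : (0:ℝ) < (r:ℝ) := by linarith
  have hF1' : 1 ≤ r.factorial := Nat.factorial_pos r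
  have hF1 : (1:ℝ) ≤ (r.factorial : ℝ) := by exact_mod_cast hF1'
  have hF0 : (0:ℝ) < (r.factorial : ℝ) := by linarith
  have hm0 : (0:ℝ) < (m:ℝ) := by exact_mod_cast hm
  set B1 : ℝ := ((r : ℝ) / (2 * ((Nat.factorial r : ℝ)) ^ ((1 : ℝ) / r))) *
    (m : ℝ) ^ (1 - 1 / (r : ℝ)) with hB1def
  set C : ℝ := ((r:ℝ) * (2*(r:ℝ)^2+2*(r:ℝ))^r + 2*4^r + (r:ℝ)^3 + (r:ℝ)^2) with hCdef
  have hB1nn : 0 ≤ B1 := by positivity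
  have hm2r : (1:ℝ) ≤ (m:ℝ) ^ (1 - 2 / (r:ℝ)) := by
    apply Real.one_le_rpow (by exact_mod_cast hm)
    have : 2 / (r:ℝ) ≤ 1 := by
      rw [div_le_one hR0]; exact hR2
    linarith
  have hm2rnn : (0:ℝ) ≤ (m:ℝ) ^ (1 - 2 / (r:ℝ)) := by positivity
  -- real versions of the basic inequalities
  have hG'm : (γ':ℝ) ≤ (m:ℝ) - 1 := by
    have : (γ':ℝ) + 1 ≤ m := by exact_mod_cast h1
    linarith
  have hmG : (m:ℝ) ≤ (γ:ℝ) := by exact_mod_cast h2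
  set d : ℝ := (γ:ℝ) - (γ':ℝ) with hddef
  have hd0 : 0 ≤ d := by
    have : (γ':ℝ) ≤ γ := by exact_mod_cast hsub
    simp [hddef]; linarith
  have hkeyR : (n:ℝ) * d ≤ (r:ℝ) * (γ:ℝ) := by
    have := hkey
    have hc : ((n * (γ - γ') : ℕ) : ℝ) ≤ ((r * γ : ℕ) : ℝ) := by exact_mod_cast this
    rw [Nat.cast_mul, Nat.cast_mul, Nat.cast_sub hsub] at hc
    exact hc
  by_cases hn : n ≤ 2*r
  · -- degenerate: small W
    refine ⟨γ', Or.inr rfl, ?_⟩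
    have habs : |(m:ℝ) - (γ':ℝ)| = (m:ℝ) - γ' := by
      apply abs_of_pos
      have : (γ':ℝ) < m := by exact_mod_cast h1
      linarith
    rw [habs]
    have hγpow : (γ:ℝ) ≤ 2 * 4 ^ r := by
      have hc : (γ:ℝ) ≤ 2 * 2 ^ n := by exact_mod_cast hpow
      have h2n : (2:ℝ) ^ n ≤ 2 ^ (2*r) := by
        apply pow_le_pow_right₀ (by norm_num) hn
      have h4 : (2:ℝ) ^ (2*r) = 4 ^ r := by
        rw [pow_mul]; norm_num
      linarith
    have hC4 : 2 * (4:ℝ) ^ r ≤ C := by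
      rw [hCdef]
      have t1 : (0:ℝ) ≤ (r:ℝ) * (2*(r:ℝ)^2+2*(r:ℝ))^r := by positivity
      have t2 : (0:ℝ) ≤ (r:ℝ)^3 := by positivity
      have t3 : (0:ℝ) ≤ (r:ℝ)^2 := by positivity
      linarith
    have hγ'0 : (0:ℝ) ≤ (γ':ℝ) := by positivity
    have hC0 : (0:ℝ) ≤ C := le_trans (by positivity) hC4
    have hCle : C ≤ C * (m:ℝ) ^ (1 - 2 / (r:ℝ)) := by
      have := mul_le_mul_of_nonneg_left hm2r hC0
      linarith
    linarith [hB1nn, hγpow, hmG, hC4, hγ'0]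
  · push_neg at hn
    have hcnt' := hcnt (by omega)
    set q : ℝ := ((r.factorial : ℝ) * (m:ℝ)) ^ ((1:ℝ) / (r:ℝ)) with hqdef
    have hFm0 : (0:ℝ) < (r.factorial : ℝ) * m := by positivity
    have hq0 : 0 < q := Real.rpow_pos_of_pos hFm0 _
    have hqr : q ^ r = (r.factorial : ℝ) * m := by
      rw [hqdef, ← Real.rpow_natCast (((r.factorial : ℝ) * (m:ℝ)) ^ ((1:ℝ) / (r:ℝ))) r,
        ← Real.rpow_mul hFm0.le, one_div_mul_cancel hR0.ne', Real.rpow_one]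
    have hqn : q ≤ (n:ℝ) + (r:ℝ)^2 := by
      have hc : q ^ r ≤ ((n:ℝ) + (r:ℝ)^2) ^ r := by
        rw [hqr]
        have := hcnt'
        have hcast : ((r.factorial * m : ℕ) : ℝ) ≤ (((n + r^2)^r : ℕ) : ℝ) := by
          exact_mod_cast this
        push_cast at hcast
        exact hcast
      exact le_of_pow_le_pow_left₀ (by omega) (by positivity) hc
    set A0 : ℝ := (r:ℝ)^2 + (r:ℝ) with hA0def
    have hA00 : 0 < A0 := by positivity
    have hNr : (r:ℝ) + 1 ≤ (n:ℝ) - (r:ℝ) := by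
      have : (2*r + 1 : ℝ) ≤ (n:ℝ) := by exact_mod_cast hn
      linarith
    have hdm : ((n:ℝ) - (r:ℝ)) * d ≤ (r:ℝ) * ((m:ℝ) - 1) := by
      have hRγ : (r:ℝ) * (γ:ℝ) = (r:ℝ) * γ' + (r:ℝ) * d := by
        rw [hddef]; ring
      have h5 : (r:ℝ) * (γ':ℝ) ≤ (r:ℝ) * ((m:ℝ) - 1) :=
        mul_le_mul_of_nonneg_left hG'm hR0.le
      have expand : ((n:ℝ)-(r:ℝ))*d = (n:ℝ)*d - (r:ℝ)*d := by ring
      rw [expand]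
      linarith [hkeyR]
    by_cases hq2A : q ≤ 2 * A0
    · -- small m regime
      refine ⟨γ', Or.inr rfl, ?_⟩
      have habs : |(m:ℝ) - (γ':ℝ)| = (m:ℝ) - γ' := by
        apply abs_of_pos
        have : (γ':ℝ) < m := by exact_mod_cast h1
        linarith
      rw [habs]
      have hmA : (m:ℝ) ≤ (2*A0)^r := by
        have hp : q ^ r ≤ (2*A0)^r := pow_le_pow_left₀ hq0.le hq2A r
        rw [hqr] at hp
        have : (m:ℝ) ≤ (r.factorial:ℝ)*m := le_mul_of_one_le_left hm0.le hF1
        linarith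
      have hd_le : d ≤ (r:ℝ) * m := by
        have t : d * 1 ≤ d * ((n:ℝ)-(r:ℝ)) :=
          mul_le_mul_of_nonneg_left (by linarith) hd0
        have t2 : d * ((n:ℝ)-(r:ℝ)) = ((n:ℝ)-(r:ℝ)) * d := by ring
        linarith [hdm, hR0]
      have hCge : (r:ℝ) * (2*A0)^r ≤ C := by
        rw [hA0def, show (2*((r:ℝ)^2 + (r:ℝ))) = (2*(r:ℝ)^2+2*(r:ℝ)) from by ring, hCdef]
        have t2 : (0:ℝ) ≤ 2*(4:ℝ)^r := by positivity
        have t3 : (0:ℝ) ≤ (r:ℝ)^3 := by positivity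
        have t4 : (0:ℝ) ≤ (r:ℝ)^2 := by positivity
        linarith
      have hfin : (m:ℝ) - γ' ≤ C := by
        have h6 : (m:ℝ) - γ' ≤ d := by
          rw [hddef]; linarith [hmG]
        have h7 : (r:ℝ)*m ≤ (r:ℝ)*(2*A0)^r := mul_le_mul_of_nonneg_left hmA hR0.le
        linarith
      have hCle : C ≤ C * (m:ℝ) ^ (1 - 2 / (r:ℝ)) := by
        have hC0 : 0 ≤ C := by
          have hx : (0:ℝ) ≤ (m:ℝ) - γ' := by
            have : (γ':ℝ) < m := by exact_mod_cast h1
            linarith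
          linarith [hfin]
        have := mul_le_mul_of_nonneg_left hm2r hC0
        linarith
      linarith [hB1nn]
    · push_neg at hq2A
      -- main regime
      have hqA : q - A0 ≤ (n:ℝ) - (r:ℝ) := by
        rw [hA0def]; linarith [hqn]
      have hqA0 : 0 < q - A0 := by linarith
      have hdq1 : d * (q - A0) ≤ (r:ℝ) * m := by
        have t := mul_le_mul_of_nonneg_left hqA hd0
        linarith [hdm, hR0]
      have hdq2 : d * q ≤ 2 * ((r:ℝ) * m) := by
        have hA0q : A0 ≤ q / 2 := by linarith
        have t : d * A0 ≤ d * (q/2) := mul_le_mul_of_nonneg_left hA0q hd0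
        have e : d*(q-A0) = d*q - d*A0 := by ring
        have e' : d*(q/2) = (1/2)*(d*q) := by ring
        nlinarith [hdq1, t, e, e']
      have hdqq : d * q^2 ≤ (r:ℝ)*m*q + 2*A0*((r:ℝ)*m) := by
        have ha : d * (q - A0) * q ≤ (r:ℝ)*m*q :=
          mul_le_mul_of_nonneg_right hdq1 hq0.le
        have hb : A0 * (d * q) ≤ A0 * (2*((r:ℝ)*m)) :=
          mul_le_mul_of_nonneg_left hdq2 hA00.le
        linarith [ha, hb]
      have hd_final : d ≤ (r:ℝ)*m/q + 2*A0*((r:ℝ)*m)/q^2 := by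
        rw [div_add_div _ _ hq0.ne' (by positivity : (q^2:ℝ) ≠ 0), le_div_iff₀ (by positivity)]
        have hstep := mul_le_mul_of_nonneg_right hdqq hq0.le
        linarith [hstep]
      -- rpow algebra
      have hq_split : q = ((r.factorial:ℝ)) ^ ((1:ℝ)/(r:ℝ)) * (m:ℝ) ^ ((1:ℝ)/(r:ℝ)) := by
        rw [hqdef, Real.mul_rpow hF0.le hm0.le]
      have hmdiv : (m:ℝ) / (m:ℝ) ^ ((1:ℝ)/(r:ℝ)) = (m:ℝ) ^ (1 - 1/(r:ℝ)) := by
        rw [Real.rpow_sub hm0, Real.rpow_one]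
      have hterm1 : (r:ℝ)*m/q = ((r:ℝ)/((r.factorial:ℝ)) ^ ((1:ℝ)/(r:ℝ))) *
          (m:ℝ) ^ (1 - 1/(r:ℝ)) := by
        rw [hq_split, ← hmdiv]
        field_simp
      have hq2_eq : q^2 = ((r.factorial:ℝ)) ^ ((2:ℝ)/(r:ℝ)) * (m:ℝ) ^ ((2:ℝ)/(r:ℝ)) := by
        rw [hqdef, ← Real.rpow_natCast (((r.factorial : ℝ) * (m:ℝ)) ^ ((1:ℝ) / (r:ℝ))) 2,
          ← Real.rpow_mul hFm0.le]
        rw [show (1:ℝ)/(r:ℝ) * (2:ℕ) = 2/(r:ℝ) by push_cast; ring]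
        rw [Real.mul_rpow hF0.le hm0.le]
      have hF2r : (1:ℝ) ≤ ((r.factorial:ℝ)) ^ ((2:ℝ)/(r:ℝ)) :=
        Real.one_le_rpow hF1 (by positivity)
      have hm2rpos : (0:ℝ) < (m:ℝ) ^ ((2:ℝ)/(r:ℝ)) := Real.rpow_pos_of_pos hm0 _
      have hterm2 : (m:ℝ)/q^2 ≤ (m:ℝ) ^ (1 - 2/(r:ℝ)) := by
        have hq2ge : (m:ℝ) ^ ((2:ℝ)/(r:ℝ)) ≤ q^2 := by
          rw [hq2_eq]
          have := mul_le_mul_of_nonneg_right hF2r hm2rpos.le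
          linarith
        have hdivle : (m:ℝ)/q^2 ≤ (m:ℝ) / (m:ℝ) ^ ((2:ℝ)/(r:ℝ)) := by
          gcongr
        have : (m:ℝ) / (m:ℝ) ^ ((2:ℝ)/(r:ℝ)) = (m:ℝ) ^ (1 - 2/(r:ℝ)) := by
          rw [Real.rpow_sub hm0, Real.rpow_one]
        linarith [hdivle, this.le, this.ge]
      -- conclude : d/2 ≤ B1 + C * m^(1-2/r)
      have hdB : d / 2 ≤ B1 + C * (m:ℝ) ^ (1 - 2/(r:ℝ)) := by
        have e1 : (r:ℝ)*m/q = 2 * B1 := by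
          rw [hterm1, hB1def]
          field_simp
        have e2 : 2*A0*((r:ℝ)*m)/q^2 = 2*A0*(r:ℝ) * ((m:ℝ)/q^2) := by ring
        have e3 : 2*A0*(r:ℝ) * ((m:ℝ)/q^2) ≤ 2*A0*(r:ℝ) * (m:ℝ) ^ (1 - 2/(r:ℝ)) := by
          apply mul_le_mul_of_nonneg_left hterm2 (by positivity)
        have e4 : A0*(r:ℝ) * (m:ℝ) ^ (1 - 2/(r:ℝ)) ≤ C * (m:ℝ) ^ (1 - 2/(r:ℝ)) := by
          apply mul_le_mul_of_nonneg_right _ hm2rnn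
          rw [hCdef, hA0def]
          have t1 : (0:ℝ) ≤ (r:ℝ) * (2*(r:ℝ)^2+2*(r:ℝ))^r := by positivity
          have t2 : (0:ℝ) ≤ 2*(4:ℝ)^r := by positivity
          nlinarith
        linarith [hd_final, e1, e3, e4]
      by_cases hcl : 2*(m:ℝ) ≤ (γ:ℝ) + (γ':ℝ)
      · refine ⟨γ', Or.inr rfl, ?_⟩
        have habs : |(m:ℝ) - (γ':ℝ)| = (m:ℝ) - γ' := by
          apply abs_of_pos
          have : (γ':ℝ) < m := by exact_mod_cast h1
          linarith
        rw [habs]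
        have : (m:ℝ) - γ' ≤ d/2 := by rw [hddef]; linarith
        linarith [hdB]
      · push_neg at hcl
        refine ⟨γ, Or.inl rfl, ?_⟩
        have habs : |(m:ℝ) - (γ:ℝ)| = (γ:ℝ) - m := by
          rw [abs_sub_comm]
          exact abs_of_nonneg (by linarith [hmG])
        rw [habs]
        have : (γ:ℝ) - m ≤ d/2 := by rw [hddef]; linarith
        linarith [hdB]


/-- **Theorem 1 (approximation theorem).** For every `r ≥ 2` there is a constant `C_r` such
that for every surjective colouring `Δ : ℕ^(r) ↠ [k]` and every natural number `m ≤ k` there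
is `m' ∈ F_Δ` with `|m - m'| ≤ (r / (2 (r!)^(1/r))) m^(1-1/r) + C_r m^(1-2/r)`. -/
theorem approx_m_coloured (r : ℕ) (hr : 2 ≤ r) :
    ∃ C : ℝ, ∀ (k : ℕ) (Δ : Finset ℕ → ℕ), IsColouring r k Δ →
      ∀ m : ℕ, 1 ≤ m → m ≤ k →
        ∃ m' ∈ Fdelta r Δ,
          |(m : ℝ) - (m' : ℝ)| ≤
            ((r : ℝ) / (2 * ((Nat.factorial r : ℝ)) ^ ((1 : ℝ) / r))) *
                (m : ℝ) ^ (1 - 1 / (r : ℝ))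
              + C * (m : ℝ) ^ (1 - 2 / (r : ℝ)) := by
  classical
  refine ⟨(r:ℝ) * (2*(r:ℝ)^2+2*(r:ℝ))^r + 2*4^r + (r:ℝ)^3 + (r:ℝ)^2, ?_⟩
  intro k Δ hΔ m hm1 hmk
  have hr1 : 1 ≤ r := by omega
  have hΔk : ∀ e : Finset ℕ, e.card = r → Δ e ≤ k := fun e he =>
    (Finset.mem_Icc.mp (hΔ.1 e he)).2
  have hex : ∃ n : ℕ, ∃ (W : Finset ℕ) (M : Set ℕ) (col : Finset ℕ → ℕ),
      W.card = n ∧ IsCanon r Δ W M col ∧ m ≤ (AF r Δ W col).card := by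
    have hrep : ∀ c ∈ Finset.Icc 1 k, ∃ e : Finset ℕ, e.card = r ∧ Δ e = c := hΔ.2
    choose! rep hrep1 hrep2 using hrep
    set W0 : Finset ℕ := (Finset.Icc 1 k).biUnion rep with hW0
    obtain ⟨M, col, hMS, hMinf, hdisj, hcanon⟩ :=
      canonical_tail r k Δ hΔk W0 Set.univ Set.infinite_univ
    refine ⟨W0.card, W0, M, col, rfl, ⟨hMinf, hdisj, hcanon⟩, ?_⟩
    have hsub : Finset.Icc 1 k ⊆ AF r Δ W0 col := by
      intro c hc
      apply Finset.mem_union_left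
      apply Finset.mem_image.mpr
      exact ⟨rep c, Finset.mem_powersetCard.mpr
        ⟨Finset.subset_biUnion_of_mem rep hc, hrep1 c hc⟩, hrep2 c hc⟩
    calc m ≤ k := hmk
      _ = (Finset.Icc 1 k).card := by rw [Nat.card_Icc]; omega
      _ ≤ (AF r Δ W0 col).card := Finset.card_le_card hsub
  set n₀ := Nat.find hex with hn₀def
  obtain ⟨W, M, col, hWcard, hcanon, hmA⟩ := Nat.find_spec hex
  have hXinf : (↑W ∪ M).Infinite := hcanon.1.mono Set.subset_union_right
  have hgam : gamma r Δ (↑W ∪ M) = (AF r Δ W col).card := by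
    unfold gamma
    rw [coloursOn_canon_eq (k := k) hr1 hcanon]
    exact Set.ncard_coe_finset _
  have hγF : (AF r Δ W col).card ∈ Fdelta r Δ := ⟨↑W ∪ M, hXinf, hgam⟩
  by_cases hn0 : n₀ = 0
  · -- degenerate `W = ∅`: here `m = 1` and `γ = 1`
    have hWe : W = ∅ := Finset.card_eq_zero.mp (by omega)
    have hAsub : AF r Δ W col ⊆ {col ∅} := by
      subst hWe
      intro c hc
      rcases Finset.mem_union.mp hc with hc | hc
      · obtain ⟨T, hT, rfl⟩ := Finset.mem_image.mp hc
        obtain ⟨hTsub, hTcard⟩ := Finset.mem_powersetCard.mp hT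
        have : T = ∅ := Finset.subset_empty.mp hTsub
        subst this
        simp at hTcard
        omega
      · obtain ⟨T, hT, rfl⟩ := Finset.mem_image.mp hc
        have : T = ∅ := Finset.subset_empty.mp
          (Finset.mem_powerset.mp (Finset.mem_filter.mp hT).1)
        subst this
        exact Finset.mem_singleton_self _
    have hcard1 : (AF r Δ W col).card ≤ 1 :=
      (Finset.card_le_card hAsub).trans (by simp)
    have hmeq : m = (AF r Δ W col).card := by omega
    refine ⟨(AF r Δ W col).card, hγF, ?_⟩
    rw [← hmeq, sub_self, abs_zero]
    have h1 : (0:ℝ) ≤ ((r : ℝ) / (2 * ((Nat.factorial r : ℝ)) ^ ((1 : ℝ) / r))) *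
        (m : ℝ) ^ (1 - 1 / (r : ℝ)) := by positivity
    have h2 : (0:ℝ) ≤ ((r:ℝ) * (2*(r:ℝ)^2+2*(r:ℝ))^r + 2*4^r + (r:ℝ)^3 + (r:ℝ)^2) *
        (m : ℝ) ^ (1 - 2 / (r : ℝ)) := by positivity
    linarith
  · have hWne : W.Nonempty := Finset.card_pos.mp (by omega)
    obtain ⟨w, hwW, hkey⟩ := exists_good_w (k := k) hr1 hcanon hWne
    have hcanon' : IsCanon r Δ (W.erase w) M col := hcanon.subset (Finset.erase_subset w W)
    have hX'inf : (↑(W.erase w) ∪ M).Infinite := hcanon'.1.mono Set.subset_union_right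
    have hgam' : gamma r Δ (↑(W.erase w) ∪ M) = (AF r Δ (W.erase w) col).card := by
      unfold gamma
      rw [coloursOn_canon_eq (k := k) hr1 hcanon']
      exact Set.ncard_coe_finset _
    have hγ'F : (AF r Δ (W.erase w) col).card ∈ Fdelta r Δ :=
      ⟨↑(W.erase w) ∪ M, hX'inf, hgam'⟩
    have hγ'm : (AF r Δ (W.erase w) col).card < m := by
      by_contra hge
      push_neg at hge
      have hGood : ∃ (W' : Finset ℕ) (M' : Set ℕ) (col' : Finset ℕ → ℕ),
          W'.card = n₀ - 1 ∧ IsCanon r Δ W' M' col' ∧ m ≤ (AF r Δ W' col').card :=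
        ⟨W.erase w, M, col, by rw [Finset.card_erase_of_mem hwW, hWcard], hcanon', hge⟩
      exact Nat.find_min hex (show n₀ - 1 < n₀ by omega) hGood
    have hcnt : 2*r ≤ W.card → r.factorial * m ≤ (W.card + r^2)^r :=
      fun h2r => count_nat hr h2r (hmA.trans AF_card_le)
    obtain ⟨x, hx, hineq⟩ := numeric r m W.card (AF r Δ W col).card
      (AF r Δ (W.erase w) col).card hr hm1 hγ'm hmA hkey AF_card_le_pow hcnt
    rcases hx with rfl | rfl
    · exact ⟨_, hγF, hineq⟩
    · exact ⟨_, hγ'F, hineq⟩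
end

section
/- For every natural number k, every surjective colouring Δ: ℕ^(2) ↠ [k], and every natural number m with m ≤ k, there exists m' ∈ F_Δ such that |m - m'| ≤ √(m/2) + 1/2. -/
open Finset

private lemma pigeon_set {k : ℕ} (f : ℕ → ℕ) (A : Set ℕ) (hA : A.Infinite)
    (hf : ∀ a ∈ A, f a ∈ Finset.Icc 1 k) :
    ∃ c, {a ∈ A | f a = c}.Infinite := by
  by_contra h
  push_neg at h
  have hsub : A ⊆ ⋃ c ∈ (Finset.Icc 1 k : Finset ℕ), {a ∈ A | f a = c} := by
    intro a ha
    exact Set.mem_biUnion (hf a ha) ⟨ha, rfl⟩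
  have hfin : (⋃ c ∈ (Finset.Icc 1 k : Finset ℕ), {a ∈ A | f a = c}).Finite := by
    apply Set.Finite.biUnion (Finset.finite_toSet _)
    intro c _
    exact h c
  exact (hA.mono hsub) hfin

private lemma ramsey_pairs {k : ℕ} (Δ : Finset ℕ → ℕ)
    (hc : ∀ e : Finset ℕ, e.card = 2 → Δ e ∈ Finset.Icc 1 k)
    (A : Set ℕ) (hA : A.Infinite) :
    ∃ Z ⊆ A, Z.Infinite ∧ ∃ d, ∀ z ∈ Z, ∀ z' ∈ Z, z ≠ z' → Δ {z, z'} = d := by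
  classical
  have step : ∀ B : {B : Set ℕ // B.Infinite}, ∃ p : ℕ × ℕ × {B : Set ℕ // B.Infinite},
      p.2.2.1 ⊆ B.1 ∧ p.1 ∈ B.1 ∧ p.1 ∉ p.2.2.1 ∧ (∀ x ∈ p.2.2.1, Δ {p.1, x} = p.2.1) := by
    rintro ⟨B, hB⟩
    obtain ⟨a, ha⟩ := hB.nonempty
    have h1 : (B \ {a}).Infinite := hB.diff (Set.finite_singleton a)
    obtain ⟨c, hcinf⟩ := pigeon_set (fun x => Δ {a, x}) (B \ {a}) h1 (by
      intro x hx
      exact hc _ (Finset.card_pair (fun h => hx.2 (by simp [h.symm]))))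
    refine ⟨⟨a, c, ⟨{x ∈ B \ {a} | Δ {a, x} = c}, hcinf⟩⟩, ?_, ha, ?_, ?_⟩
    · intro x hx; exact hx.1.1
    · intro hx; exact hx.1.2 rfl
    · intro x hx; exact hx.2
  choose F hF1 hF2 hF3 hF4 using step
  let T : ℕ → {B : Set ℕ // B.Infinite} := fun n => Nat.rec ⟨A, hA⟩ (fun _ p => (F p).2.2) n
  have hTsucc : ∀ n, T (n + 1) = (F (T n)).2.2 := fun n => rfl
  let a : ℕ → ℕ := fun n => (F (T n)).1
  let c : ℕ → ℕ := fun n => (F (T n)).2.1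
  have hchain : ∀ i j, i ≤ j → (T j).1 ⊆ (T i).1 := by
    intro i j hij
    induction j with
    | zero => simp_all
    | succ j ih =>
      rcases Nat.lt_or_ge i (j+1) with h | h
      · exact (hF1 (T j)).trans (ih (Nat.lt_succ_iff.mp h))
      · have : i = j + 1 := le_antisymm hij h
        subst this; exact subset_rfl
  have haT : ∀ n, a n ∈ (T n).1 := fun n => hF2 (T n)
  have hmem : ∀ i j, i < j → a j ∈ (T (i + 1)).1 := by
    intro i j hij
    exact hchain (i+1) j hij (haT j)
  have hcol : ∀ i j, i < j → Δ {a i, a j} = c i := by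
    intro i j hij
    exact hF4 (T i) _ (hmem i j hij)
  have hane : ∀ i j, i < j → a i ≠ a j := by
    intro i j hij he
    have h2 := hmem i j hij
    rw [← he] at h2
    exact hF3 (T i) h2
  have hcIcc : ∀ n, c n ∈ Finset.Icc 1 k := by
    intro n
    obtain ⟨x, hx⟩ := (T (n+1)).2.nonempty
    have hx' : x ∈ (F (T n)).2.2.1 := by rw [← hTsucc n]; exact hx
    have h2 : c n = Δ {a n, x} := (hF4 (T n) x hx').symm
    rw [h2]
    refine hc _ (Finset.card_pair ?_)
    intro he
    rw [← he] at hx'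
    exact hF3 (T n) hx'
  obtain ⟨d, hd⟩ := pigeon_set c Set.univ Set.infinite_univ (fun n _ => hcIcc n)
  set I : Set ℕ := {n ∈ Set.univ | c n = d} with hI
  refine ⟨a '' I, ?_, ?_, d, ?_⟩
  · rintro _ ⟨n, _, rfl⟩
    exact hchain 0 n (Nat.zero_le n) (haT n)
  · apply Set.Infinite.image ?_ hd
    intro i hi j hj hij
    by_contra hne
    rcases Nat.lt_or_ge i j with h | h
    · exact hane i j h hij
    · have h' : j < i := lt_of_le_of_ne h (Ne.symm hne)
      exact hane j i h' hij.symm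
  · rintro _ ⟨i, hi, rfl⟩ _ ⟨j, hj, rfl⟩ hne
    rcases Nat.lt_or_ge i j with h | h
    · rw [hcol i j h]; exact hi.2
    · have h' : j < i := lt_of_le_of_ne h (by rintro rfl; exact hne rfl)
      rw [Finset.pair_comm, hcol j i h']; exact hj.2

private lemma profile_refine {k : ℕ} (Δ : Finset ℕ → ℕ)
    (hc : ∀ e : Finset ℕ, e.card = 2 → Δ e ∈ Finset.Icc 1 k)
    (S : Finset ℕ) :
    ∀ (Z : Set ℕ), Z.Infinite → (∀ s ∈ S, s ∉ Z) →
    ∃ Z' ⊆ Z, Z'.Infinite ∧ ∃ e : ℕ → ℕ, ∀ s ∈ S, ∀ z ∈ Z', Δ {s, z} = e s := by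
  classical
  induction S using Finset.induction_on with
  | empty =>
    intro Z hZ _
    exact ⟨Z, subset_rfl, hZ, fun _ => 0, by simp⟩
  | @insert a S ha ih =>
    intro Z hZ hdisj
    obtain ⟨Z₁, hZ₁sub, hZ₁inf, e, he⟩ := ih Z hZ (fun s hs => hdisj s (Finset.mem_insert_of_mem hs))
    have haZ : a ∉ Z := hdisj a (Finset.mem_insert_self a S)
    obtain ⟨c, hcinf⟩ := pigeon_set (fun z => Δ {a, z}) Z₁ hZ₁inf (by
      intro z hz
      refine hc _ (Finset.card_pair ?_)
      rintro rfl
      exact haZ (hZ₁sub hz))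
    refine ⟨{z ∈ Z₁ | Δ {a, z} = c}, (fun z hz => hZ₁sub hz.1), hcinf,
      (fun x => if x = a then c else e x), ?_⟩
    intro s hs z hz
    rcases Finset.mem_insert.mp hs with rfl | hs'
    · simp [hz.2]
    · have hne : s ≠ a := by rintro rfl; exact ha hs'
      simp only [hne, if_false]
      exact he s hs' z hz.1

/-- The finite set of colours of the configuration `S ∪ Z`. -/
private def Cm (Δ : Finset ℕ → ℕ) (e : ℕ → ℕ) (d : ℕ) (S : Finset ℕ) : Finset ℕ :=
  ((S.powersetCard 2).image Δ ∪ S.image e) ∪ {d}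

private lemma Cm_mono (Δ : Finset ℕ → ℕ) (e : ℕ → ℕ) (d : ℕ) {S T : Finset ℕ} (h : S ⊆ T) :
    Cm Δ e d S ⊆ Cm Δ e d T :=
  Finset.union_subset_union (Finset.union_subset_union
    (Finset.image_subset_image (Finset.powersetCard_mono h))
    (Finset.image_subset_image h)) subset_rfl

private lemma colours_eq (Δ : Finset ℕ → ℕ) (e : ℕ → ℕ) (d : ℕ) (Z : Set ℕ)
    (S₀ S' : Finset ℕ) (hsub : S' ⊆ S₀) (hZ : Z.Infinite)
    (hdisj : ∀ s ∈ S₀, s ∉ Z)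
    (hmono : ∀ z ∈ Z, ∀ z' ∈ Z, z ≠ z' → Δ {z, z'} = d)
    (hprof : ∀ s ∈ S₀, ∀ z ∈ Z, Δ {s, z} = e s) :
    coloursOn 2 Δ (↑S' ∪ Z) = ↑(Cm Δ e d S') := by
  classical
  ext col
  constructor
  · rintro ⟨p, ⟨hpsub, hpcard⟩, rfl⟩
    obtain ⟨x, y, hxy, rfl⟩ := Finset.card_eq_two.mp hpcard
    have hx : x ∈ (↑S' : Set ℕ) ∪ Z := hpsub (by simp)
    have hy : y ∈ (↑S' : Set ℕ) ∪ Z := hpsub (by simp)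
    simp only [Finset.coe_union, Finset.coe_insert, Set.mem_union, Finset.mem_coe] at hx hy ⊢
    simp only [Cm, Finset.mem_union, Finset.mem_singleton, Finset.mem_image]
    rcases hx with hx | hx
    · rcases hy with hy | hy
      · left; left
        refine ⟨{x, y}, Finset.mem_powersetCard.mpr ⟨?_, hpcard⟩, rfl⟩
        intro t ht
        rcases Finset.mem_insert.mp ht with rfl | ht
        · exact hx
        · rwa [Finset.mem_singleton.mp ht]
      · left; right
        exact ⟨x, hx, (hprof x (hsub hx) y hy).symm⟩
    · rcases hy with hy | hy
      · left; right
        refine ⟨y, hy, ?_⟩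
        rw [Finset.pair_comm] at *
        exact (hprof y (hsub hy) x hx).symm
      · right
        exact hmono x hx y hy hxy
  · intro hcol
    have hcol' : col ∈ ((S'.powersetCard 2).image Δ ∪ S'.image e) ∪ {d} := hcol
    rcases Finset.mem_union.mp hcol' with h | h
    on_goal 2 =>
      have : col = d := Finset.mem_singleton.mp h
      subst this
    rcases Finset.mem_union.mp h with h2 | h2
    · obtain ⟨p, hp, rfl⟩ := Finset.mem_image.mp h2
      obtain ⟨hpsub, hpcard⟩ := Finset.mem_powersetCard.mp hp
      exact ⟨p, ⟨fun t ht => Set.mem_union_left _ (hpsub ht), hpcard⟩, rfl⟩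
    · obtain ⟨s, hs, rfl⟩ := Finset.mem_image.mp h2
      obtain ⟨z, hz⟩ := hZ.nonempty
      have hne : s ≠ z := fun h => hdisj s (hsub hs) (h ▸ hz)
      refine ⟨{s, z}, ⟨?_, Finset.card_pair hne⟩, (hprof s (hsub hs) z hz)⟩
      intro t ht
      rcases Finset.mem_insert.mp ht with rfl | ht
      · exact Set.mem_union_left _ hs
      · exact Set.mem_union_right _ (Finset.mem_singleton.mp ht ▸ hz)
    · obtain ⟨z, hz⟩ := hZ.nonempty
      obtain ⟨z', hz'⟩ := (hZ.diff (Set.finite_singleton z)).nonempty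
      have hne : z ≠ z' := fun h => hz'.2 (by simp [h.symm])
      refine ⟨{z, z'}, ⟨?_, Finset.card_pair hne⟩, hmono z hz z' hz'.1 hne⟩
      intro t ht
      rcases Finset.mem_insert.mp ht with rfl | ht
      · exact Set.mem_union_right _ hz
      · exact Set.mem_union_right _ (Finset.mem_singleton.mp ht ▸ hz'.1)

private lemma exists_cheap_vertex (Δ : Finset ℕ → ℕ) (e : ℕ → ℕ) (d : ℕ) (S' : Finset ℕ)
    (hne : S'.Nonempty) :
    ∃ x ∈ S', S'.card * ((Cm Δ e d S').card - (Cm Δ e d (S'.erase x)).card) ≤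
      2 * ((Cm Δ e d S') \ (S'.image e ∪ {d})).card + ((S'.image e) \ {d}).card := by
  classical
  set A : Finset ℕ := (Cm Δ e d S') \ (S'.image e ∪ {d}) with hA
  set Bs : Finset ℕ := (S'.image e) \ {d} with hBs
  set D : ℕ → Finset ℕ := fun x => Cm Δ e d S' \ Cm Δ e d (S'.erase x) with hD
  have hdmem : ∀ T : Finset ℕ, d ∈ Cm Δ e d T := by
    intro T
    exact Finset.mem_union_right _ (Finset.mem_singleton_self d)
  have hDsub : ∀ x, D x ⊆ A ∪ Bs := by
    intro x c hc
    obtain ⟨hc1, hc2⟩ := Finset.mem_sdiff.mp hc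
    have hcd : c ≠ d := by rintro rfl; exact hc2 (hdmem _)
    by_cases hce : c ∈ S'.image e
    · exact Finset.mem_union_right _ (Finset.mem_sdiff.mpr ⟨hce, by simpa using hcd⟩)
    · refine Finset.mem_union_left _ (Finset.mem_sdiff.mpr ⟨hc1, ?_⟩)
      simp only [Finset.mem_union, Finset.mem_singleton]
      rintro (h | h)
      · exact hce h
      · exact hcd h
  have claimA : ∀ c ∈ A, (S'.filter (fun x => c ∈ D x)).card ≤ 2 := by
    intro c hc
    obtain ⟨hc1, hc2⟩ := Finset.mem_sdiff.mp hc
    have hcim : c ∈ (S'.powersetCard 2).image Δ := by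
      rcases Finset.mem_union.mp hc1 with h | h
      · rcases Finset.mem_union.mp h with h2 | h2
        · exact h2
        · exact absurd (Finset.mem_union_left _ h2) hc2
      · exact absurd (Finset.mem_union_right _ h) hc2
    obtain ⟨p, hp, rfl⟩ := Finset.mem_image.mp hcim
    obtain ⟨hpsub, hpcard⟩ := Finset.mem_powersetCard.mp hp
    obtain ⟨a, b, hab, rfl⟩ := Finset.card_eq_two.mp hpcard
    have hsubab : S'.filter (fun x => Δ {a, b} ∈ D x) ⊆ {a, b} := by
      intro x hx
      obtain ⟨hxS, hxD⟩ := Finset.mem_filter.mp hx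
      by_contra hxab
      simp only [Finset.mem_insert, Finset.mem_singleton] at hxab
      push_neg at hxab
      have hsub' : ({a, b} : Finset ℕ) ⊆ S'.erase x := by
        refine Finset.subset_erase.mpr ⟨hpsub, ?_⟩
        simp only [Finset.mem_insert, Finset.mem_singleton]
        push_neg
        exact ⟨by rintro rfl; exact hxab.1 rfl, by rintro rfl; exact hxab.2 rfl⟩
      have : Δ {a, b} ∈ Cm Δ e d (S'.erase x) := by
        refine Finset.mem_union_left _ (Finset.mem_union_left _ ?_)
        exact Finset.mem_image.mpr ⟨{a, b}, Finset.mem_powersetCard.mpr ⟨hsub', hpcard⟩, rfl⟩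
      exact (Finset.mem_sdiff.mp hxD).2 this
    calc (S'.filter (fun x => Δ {a, b} ∈ D x)).card ≤ ({a, b} : Finset ℕ).card :=
          Finset.card_le_card hsubab
      _ ≤ 2 := by
          refine (Finset.card_insert_le a {b}).trans ?_
          simp
  have claimB : ∀ c ∈ Bs, (S'.filter (fun x => c ∈ D x)).card ≤ 1 := by
    intro c hc
    obtain ⟨hc1, _⟩ := Finset.mem_sdiff.mp hc
    obtain ⟨s₀, hs₀, rfl⟩ := Finset.mem_image.mp hc1
    have hsub' : S'.filter (fun x => e s₀ ∈ D x) ⊆ {s₀} := by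
      intro x hx
      obtain ⟨hxS, hxD⟩ := Finset.mem_filter.mp hx
      by_contra hxs
      simp only [Finset.mem_singleton] at hxs
      have : e s₀ ∈ Cm Δ e d (S'.erase x) := by
        refine Finset.mem_union_left _ (Finset.mem_union_right _ ?_)
        exact Finset.mem_image.mpr ⟨s₀, Finset.mem_erase.mpr ⟨fun h => hxs h.symm, hs₀⟩, rfl⟩
      exact (Finset.mem_sdiff.mp hxD).2 this
    exact (Finset.card_le_card hsub').trans (by simp)
  have hsplit : ∀ x, (D x).card ≤ (A.filter (· ∈ D x)).card + (Bs.filter (· ∈ D x)).card := by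
    intro x
    have : D x ⊆ (A.filter (· ∈ D x)) ∪ (Bs.filter (· ∈ D x)) := by
      intro c hc
      rcases Finset.mem_union.mp (hDsub x hc) with h | h
      · exact Finset.mem_union_left _ (Finset.mem_filter.mpr ⟨h, hc⟩)
      · exact Finset.mem_union_right _ (Finset.mem_filter.mpr ⟨h, hc⟩)
    exact (Finset.card_le_card this).trans (Finset.card_union_le _ _)
  have hsumA : ∑ x ∈ S', (A.filter (· ∈ D x)).card ≤ 2 * A.card := by
    have hswap : ∑ x ∈ S', (A.filter (· ∈ D x)).card
        = ∑ c ∈ A, (S'.filter (fun x => c ∈ D x)).card := by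
      simp only [Finset.card_filter]
      exact Finset.sum_comm
    rw [hswap]
    calc ∑ c ∈ A, (S'.filter (fun x => c ∈ D x)).card ≤ ∑ _c ∈ A, 2 :=
          Finset.sum_le_sum claimA
      _ = 2 * A.card := by rw [Finset.sum_const, smul_eq_mul, mul_comm]
  have hsumB : ∑ x ∈ S', (Bs.filter (· ∈ D x)).card ≤ Bs.card := by
    have hswap : ∑ x ∈ S', (Bs.filter (· ∈ D x)).card
        = ∑ c ∈ Bs, (S'.filter (fun x => c ∈ D x)).card := by
      simp only [Finset.card_filter]
      exact Finset.sum_comm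
    rw [hswap]
    calc ∑ c ∈ Bs, (S'.filter (fun x => c ∈ D x)).card ≤ ∑ _c ∈ Bs, 1 :=
          Finset.sum_le_sum claimB
      _ = Bs.card := by rw [Finset.sum_const, smul_eq_mul, mul_one]
  have hsum : ∑ x ∈ S', (D x).card ≤ 2 * A.card + Bs.card := by
    calc ∑ x ∈ S', (D x).card
        ≤ ∑ x ∈ S', ((A.filter (· ∈ D x)).card + (Bs.filter (· ∈ D x)).card) :=
          Finset.sum_le_sum (fun x _ => hsplit x)
      _ = (∑ x ∈ S', (A.filter (· ∈ D x)).card) + ∑ x ∈ S', (Bs.filter (· ∈ D x)).card :=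
          Finset.sum_add_distrib
      _ ≤ 2 * A.card + Bs.card := Nat.add_le_add hsumA hsumB
  obtain ⟨x, hx, hmin⟩ := S'.exists_min_image (fun x => (D x).card) hne
  refine ⟨x, hx, ?_⟩
  have hcardD : ∀ y, (D y).card = (Cm Δ e d S').card - (Cm Δ e d (S'.erase y)).card := by
    intro y
    exact Finset.card_sdiff_of_subset (Cm_mono Δ e d (Finset.erase_subset _ _))
  rw [← hcardD x]
  calc S'.card * (D x).card = ∑ _y ∈ S', (D x).card := by
        rw [Finset.sum_const, smul_eq_mul]
    _ ≤ ∑ y ∈ S', (D y).card := Finset.sum_le_sum (fun y hy => hmin y hy)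
    _ ≤ 2 * A.card + Bs.card := hsum

private lemma numeric_step (mm v s al be l a : ℝ)
    (hs1 : 1 ≤ s) (hal0 : 0 ≤ al) (hbe0 : 0 ≤ be)
    (hsl : s * l ≤ 2 * al + be)
    (hal : 2 * al ≤ s * (s - 1)) (hbe : be ≤ s)
    (hvge : al + be + 1 ≤ v) (hvle : v ≤ 1 + al + be)
    (hm1 : 1 ≤ mm) (ha : a = Real.sqrt (2 * mm))
    (hv : mm + (a + 1) / 2 ≤ v) :
    l ≤ v - mm + (a + 1) / 2 := by
  have ha0 : 0 ≤ a := ha ▸ Real.sqrt_nonneg _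
  have ha2 : a ^ 2 = 2 * mm := by rw [ha]; exact Real.sq_sqrt (by linarith)
  have ha1 : 1 ≤ a := by nlinarith
  have hv2 : 2 ≤ v := by nlinarith
  set c := Real.sqrt (8 * v - 7) with hc
  have hc0 : 0 ≤ c := Real.sqrt_nonneg _
  have hc2 : c ^ 2 = 8 * v - 7 := Real.sq_sqrt (by linarith)
  have hc1 : 1 ≤ c := by nlinarith
  have hcs : c ≤ 2 * s + 1 := by nlinarith
  have step1 : 2 * (s * l) ≤ s * (1 + c) := by
    rcases le_or_gt (c + 1) (2 * s) with h | h
    · nlinarith [mul_nonneg (sub_nonneg.mpr hc1) (sub_nonneg.mpr h)]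
    · nlinarith [mul_nonneg (sub_nonneg.mpr (by linarith : c ≤ 2 * s + 1))
        (sub_nonneg.mpr (by linarith : 2 * s - 1 ≤ c)), hs1]
  have step2 : l ≤ (1 + c) / 2 := by nlinarith
  have step3 : c ≤ 2 * (v - mm) + a := by
    rw [hc]
    rw [Real.sqrt_le_left (by nlinarith)]
    nlinarith [sq_nonneg (2 * (v - mm) - a - 1),
      mul_nonneg (show (0:ℝ) ≤ 2 * (v - mm) - a - 1 by linarith)
        (show (0:ℝ) ≤ 4 * a - 2 by linarith)]
  linarith

/-- For graphs (`r = 2`): for every surjective colouring `Δ : ℕ^(2) ↠ [k]` and every natural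
number `m ≤ k` there is `m' ∈ F_Δ` with `|m - m'| ≤ √(m/2) + 1/2`. -/
theorem approx_m_coloured_graphs (k : ℕ) (Δ : Finset ℕ → ℕ) (hΔ : IsColouring 2 k Δ)
    (m : ℕ) (hm : 1 ≤ m) (hmk : m ≤ k) :
    ∃ m' ∈ Fdelta 2 Δ,
      |(m : ℝ) - (m' : ℝ)| ≤ Real.sqrt ((m : ℝ) / 2) + 1 / 2 := by
  classical
  obtain ⟨hΔ1, hΔ2⟩ := hΔ
  -- pick an edge of each colour in [1, m]
  have hedge : ∀ c ∈ Finset.Icc 1 m, ∃ p : Finset ℕ, p.card = 2 ∧ Δ p = c := by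
    intro c hc
    refine hΔ2 c ?_
    rw [Finset.mem_Icc] at hc ⊢
    exact ⟨hc.1, hc.2.trans hmk⟩
  choose! g hg1 hg2 using hedge
  set S₀ : Finset ℕ := (Finset.Icc 1 m).biUnion g with hS₀
  have hcompl : ((↑S₀ : Set ℕ)ᶜ).Infinite := S₀.finite_toSet.infinite_compl
  obtain ⟨Z₁, hZ₁sub, hZ₁inf, d, hd⟩ := ramsey_pairs Δ hΔ1 _ hcompl
  obtain ⟨Z, hZsub, hZinf, e, he⟩ := profile_refine Δ hΔ1 S₀ Z₁ hZ₁inf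
    (fun s hs hsZ => (hZ₁sub hsZ) (Finset.mem_coe.mpr hs))
  have hdisj : ∀ s ∈ S₀, s ∉ Z := fun s hs hz => (hZ₁sub (hZsub hz)) (Finset.mem_coe.mpr hs)
  have hmonoZ : ∀ z ∈ Z, ∀ z' ∈ Z, z ≠ z' → Δ {z, z'} = d :=
    fun z hz z' hz' hne => hd z (hZsub hz) z' (hZsub hz') hne
  -- the real bound
  set B : ℝ := Real.sqrt ((m : ℝ) / 2) + 1 / 2 with hBdef
  set a : ℝ := Real.sqrt (2 * (m : ℝ)) with hadef
  have hsqrt4 : Real.sqrt 4 = 2 := by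
    rw [show (4 : ℝ) = 2 ^ 2 by norm_num, Real.sqrt_sq (by norm_num)]
  have haB : a + 1 = 2 * B := by
    rw [hBdef, hadef, show (2 * (m:ℝ)) = 4 * ((m:ℝ)/2) by ring,
      Real.sqrt_mul (by norm_num : (0:ℝ) ≤ 4), hsqrt4]
    ring
  have hB0 : 0 ≤ B := by
    rw [hBdef]
    positivity
  clear_value B a
  -- initial colour count
  have hminit : m ≤ (Cm Δ e d S₀).card := by
    have hsub : Finset.Icc 1 m ⊆ Cm Δ e d S₀ := by
      intro c hc
      have h1 : g c ⊆ S₀ := Finset.subset_biUnion_of_mem g hc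
      have h2 : c = Δ (g c) := (hg2 c hc).symm
      rw [h2]
      refine Finset.mem_union_left _ (Finset.mem_union_left _ ?_)
      exact Finset.mem_image.mpr ⟨g c, Finset.mem_powersetCard.mpr ⟨h1, hg1 c hc⟩, rfl⟩
    calc m = (Finset.Icc 1 m).card := by rw [Nat.card_Icc]; omega
      _ ≤ _ := Finset.card_le_card hsub
  -- gamma of configurations
  have hgam : ∀ S' : Finset ℕ, S' ⊆ S₀ → gamma 2 Δ (↑S' ∪ Z) = (Cm Δ e d S').card := by
    intro S' h
    unfold gamma
    rw [colours_eq Δ e d Z S₀ S' h hZinf hdisj hmonoZ he]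
    exact Set.ncard_coe_finset _
  -- one descent step
  have hstep : ∀ S' : Finset ℕ, S' ⊆ S₀ → (m : ℝ) + B < ((Cm Δ e d S').card : ℝ) →
      ∃ x ∈ S', (m : ℝ) - B ≤ ((Cm Δ e d (S'.erase x)).card : ℝ) := by
    intro S' hsub hup
    have hne : S'.Nonempty := by
      rcases Finset.eq_empty_or_nonempty S' with rfl | h
      · exfalso
        have h1 : Cm Δ e d (∅ : Finset ℕ) = {d} := by
          simp [Cm, Finset.powersetCard_eq_empty.mpr (by simp : (∅ : Finset ℕ).card < 2)]
        rw [h1] at hup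
        simp only [Finset.card_singleton, Nat.cast_one] at hup
        have : (1:ℝ) ≤ m := by exact_mod_cast hm
        linarith
      · exact h
    obtain ⟨x, hx, hcheap⟩ := exists_cheap_vertex Δ e d S' hne
    refine ⟨x, hx, ?_⟩
    -- notation
    set v : ℕ := (Cm Δ e d S').card with hv
    set v' : ℕ := (Cm Δ e d (S'.erase x)).card with hv'
    set s : ℕ := S'.card with hs
    set A : Finset ℕ := (Cm Δ e d S') \ (S'.image e ∪ {d}) with hA
    set Bs : Finset ℕ := (S'.image e) \ {d} with hBs
    have hv'le : v' ≤ v := Finset.card_le_card (Cm_mono Δ e d (Finset.erase_subset _ _))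
    have hs1 : 1 ≤ s := Finset.card_pos.mpr hne
    -- natural-number facts
    have hALe : 2 * A.card ≤ s * (s - 1) := by
      have h1 : A ⊆ (S'.powersetCard 2).image Δ := by
        intro c hc
        obtain ⟨hc1, hc2⟩ := Finset.mem_sdiff.mp hc
        rcases Finset.mem_union.mp hc1 with h | h
        · rcases Finset.mem_union.mp h with h2 | h2
          · exact h2
          · exact absurd (Finset.mem_union_left _ h2) hc2
        · exact absurd (Finset.mem_union_right _ h) hc2
      have h2 : A.card ≤ s.choose 2 := by
        calc A.card ≤ ((S'.powersetCard 2).image Δ).card := Finset.card_le_card h1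
          _ ≤ (S'.powersetCard 2).card := Finset.card_image_le
          _ = s.choose 2 := Finset.card_powersetCard 2 S'
      calc 2 * A.card ≤ 2 * (s.choose 2) := by omega
        _ = 2 * (s * (s - 1) / 2) := by rw [Nat.choose_two_right]
        _ ≤ s * (s - 1) := by omega
    have hBLe : Bs.card ≤ s := by
      calc Bs.card ≤ (S'.image e).card := Finset.card_le_card (Finset.sdiff_subset)
        _ ≤ s := Finset.card_image_le
    have hdA : d ∉ A := by
      intro h
      exact (Finset.mem_sdiff.mp h).2 (Finset.mem_union_right _ (Finset.mem_singleton_self d))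
    have hdB : d ∉ Bs := by
      intro h
      exact (Finset.mem_sdiff.mp h).2 (Finset.mem_singleton_self d)
    have hABdisj : Disjoint A Bs := by
      rw [Finset.disjoint_left]
      intro c hcA hcB
      exact (Finset.mem_sdiff.mp hcA).2
        (Finset.mem_union_left _ (Finset.mem_sdiff.mp hcB).1)
    have hvge : A.card + Bs.card + 1 ≤ v := by
      have hsub2 : (A ∪ Bs) ∪ {d} ⊆ Cm Δ e d S' := by
        intro c hc
        rcases Finset.mem_union.mp hc with h | h
        · rcases Finset.mem_union.mp h with h2 | h2
          · exact (Finset.mem_sdiff.mp h2).1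
          · exact Finset.mem_union_left _
              (Finset.mem_union_right _ (Finset.mem_sdiff.mp h2).1)
        · exact Finset.mem_union_right _ h
      have hdisj2 : Disjoint (A ∪ Bs) ({d} : Finset ℕ) := by
        rw [Finset.disjoint_right]
        intro c hc
        rw [Finset.mem_singleton] at hc
        subst hc
        intro hc2
        rcases Finset.mem_union.mp hc2 with h | h
        · exact hdA h
        · exact hdB h
      calc A.card + Bs.card + 1
          = ((A ∪ Bs) ∪ {d}).card := by
            rw [Finset.card_union_of_disjoint hdisj2, Finset.card_union_of_disjoint hABdisj]
            simp
        _ ≤ v := Finset.card_le_card hsub2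
    have hvle : v ≤ 1 + A.card + Bs.card := by
      have hsub2 : Cm Δ e d S' ⊆ (A ∪ Bs) ∪ {d} := by
        intro c hc
        by_cases hcd : c = d
        · subst hcd
          exact Finset.mem_union_right _ (Finset.mem_singleton_self _)
        · by_cases hce : c ∈ S'.image e
          · exact Finset.mem_union_left _ (Finset.mem_union_right _
              (Finset.mem_sdiff.mpr ⟨hce, by simpa using hcd⟩))
          · refine Finset.mem_union_left _ (Finset.mem_union_left _
              (Finset.mem_sdiff.mpr ⟨hc, ?_⟩))
            simp only [Finset.mem_union, Finset.mem_singleton]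
            rintro (h | h)
            · exact hce h
            · exact hcd h
      calc v ≤ ((A ∪ Bs) ∪ {d}).card := Finset.card_le_card hsub2
        _ ≤ (A ∪ Bs).card + 1 := by
            refine (Finset.card_union_le _ _).trans ?_
            simp
        _ ≤ A.card + Bs.card + 1 := by
            have := Finset.card_union_le A Bs
            omega
        _ = 1 + A.card + Bs.card := by ring
    -- pass to the reals
    clear_value v v' s A Bs
    have hm1 : (1:ℝ) ≤ (m:ℝ) := by exact_mod_cast hm
    have hvreal : (m:ℝ) + (a + 1) / 2 ≤ (v:ℝ) := by
      rw [haB]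
      linarith
    have hl : ((v - v' : ℕ) : ℝ) ≤ (v:ℝ) - (m:ℝ) + (a + 1) / 2 := by
      refine numeric_step (m:ℝ) (v:ℝ) (s:ℝ) (A.card : ℝ) (Bs.card : ℝ)
        ((v - v' : ℕ) : ℝ) a ?_ ?_ ?_ ?_ ?_ ?_ ?_ ?_ hm1 hadef hvreal
      · exact_mod_cast hs1
      · positivity
      · positivity
      · exact_mod_cast hcheap
      · have : ((s * (s-1) : ℕ) : ℝ) = (s:ℝ) * ((s:ℝ) - 1) := by
          push_cast [Nat.cast_sub hs1]
          ring
        rw [← this]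
        exact_mod_cast hALe
      · exact_mod_cast hBLe
      · exact_mod_cast hvge
      · exact_mod_cast hvle
    have hcast : ((v - v' : ℕ) : ℝ) = (v:ℝ) - (v':ℝ) := by
      push_cast [Nat.cast_sub hv'le]
      ring
    rw [hcast] at hl
    rw [haB] at hl
    linarith
  -- descent by induction
  have hdesc : ∀ n (S' : Finset ℕ), S'.card ≤ n → S' ⊆ S₀ →
      (m : ℝ) - B ≤ ((Cm Δ e d S').card : ℝ) →
      ∃ S'' : Finset ℕ, S'' ⊆ S₀ ∧ (m : ℝ) - B ≤ ((Cm Δ e d S'').card : ℝ) ∧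
        ((Cm Δ e d S'').card : ℝ) ≤ (m : ℝ) + B := by
    intro n
    induction n with
    | zero =>
      intro S' hc hsub hlb
      have hS'e : S' = ∅ := Finset.card_eq_zero.mp (Nat.le_zero.mp hc)
      subst hS'e
      refine ⟨∅, Finset.empty_subset _, hlb, ?_⟩
      have h1 : Cm Δ e d (∅ : Finset ℕ) = {d} := by simp [Cm, Finset.powersetCard_eq_empty.mpr (by simp : (∅ : Finset ℕ).card < 2)]
      rw [h1]
      simp only [Finset.card_singleton, Nat.cast_one]
      have : (1:ℝ) ≤ (m:ℝ) := by exact_mod_cast hm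
      linarith
    | succ n ih =>
      intro S' hc hsub hlb
      by_cases hup : ((Cm Δ e d S').card : ℝ) ≤ (m : ℝ) + B
      · exact ⟨S', hsub, hlb, hup⟩
      · push_neg at hup
        obtain ⟨x, hx, hlow⟩ := hstep S' hsub hup
        refine ih (S'.erase x) ?_ ((Finset.erase_subset x S').trans hsub) hlow
        rw [Finset.card_erase_of_mem hx]
        omega
  have hstart : (m : ℝ) - B ≤ ((Cm Δ e d S₀).card : ℝ) := by
    have : (m:ℝ) ≤ ((Cm Δ e d S₀).card : ℝ) := by exact_mod_cast hminit
    linarith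
  obtain ⟨S'', hsub'', hlb'', hub''⟩ := hdesc S₀.card S₀ le_rfl subset_rfl hstart
  refine ⟨(Cm Δ e d S'').card, ⟨↑S'' ∪ Z, hZinf.mono Set.subset_union_right, hgam S'' hsub''⟩, ?_⟩
  rw [abs_le]
  constructor
  · linarith
  · linarith
end

section
/- For all integers r ≥ 2 and a ≥ r, there exists a surjective colouring Δ: ℕ^(r) ↠ [k] with k = C(a,r) + 1 such that F_Δ = { C(n,r) + 1 : n a natural number with n ≤ a }. (Such a colouring is given by colouring all r-subsets of [a] with C(a,r) distinct colours and all remaining r-subsets of ℕ with one further colour.) -/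
open Finset

open scoped Classical

/-- The `r`-element subsets of `{0,…,a-1}`. -/
def SR (r a : ℕ) : Finset (Finset ℕ) := (Finset.range a).powersetCard r

lemma card_SR (r a : ℕ) : (SR r a).card = a.choose r := by
  simp [SR, Finset.card_powersetCard]

/-- The small-rainbow colouring: `r`-subsets of `{0,…,a-1}` get distinct colours
`≥ 2`, everything else colour `1`. -/
noncomputable def Δsr (r a : ℕ) (e : Finset ℕ) : ℕ :=
  if h : e ∈ SR r a then ((SR r a).equivFin ⟨e, h⟩).val + 2 else 1

lemma Δsr_mem (r a : ℕ) {e : Finset ℕ} (h : e ∈ SR r a) :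
    Δsr r a e = ((SR r a).equivFin ⟨e, h⟩).val + 2 := dif_pos h

lemma Δsr_notMem (r a : ℕ) {e : Finset ℕ} (h : e ∉ SR r a) : Δsr r a e = 1 := dif_neg h

lemma Δsr_inj (r a : ℕ) {e₁ e₂ : Finset ℕ} (h₁ : e₁ ∈ SR r a) (h₂ : e₂ ∈ SR r a)
    (h : Δsr r a e₁ = Δsr r a e₂) : e₁ = e₂ := by
  rw [Δsr_mem r a h₁, Δsr_mem r a h₂] at h
  have hv : ((SR r a).equivFin ⟨e₁, h₁⟩).val = ((SR r a).equivFin ⟨e₂, h₂⟩).val := by omega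
  have := (SR r a).equivFin.injective (Fin.val_injective hv)
  exact Subtype.ext_iff.mp this

lemma gamma_Δsr (r a : ℕ) (hr : 1 ≤ r) (X : Set ℕ) (hX : X.Infinite) :
    gamma r (Δsr r a) X
      = ((Finset.range a).filter (fun x => x ∈ X)).card.choose r + 1 := by
  set T : Finset ℕ := (Finset.range a).filter (fun x => x ∈ X) with hT
  have hmemT : ∀ e : Finset ℕ, e ∈ T.powersetCard r ↔ (e ∈ SR r a ∧ ↑e ⊆ X) := by
    intro e
    simp only [Finset.mem_powersetCard, SR, hT]
    constructor
    · rintro ⟨hsub, hcard⟩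
      refine ⟨⟨fun x hx => (Finset.mem_filter.mp (hsub hx)).1, hcard⟩,
        fun x hx => (Finset.mem_filter.mp (hsub hx)).2⟩
    · rintro ⟨⟨hsub, hcard⟩, hX'⟩
      exact ⟨fun x hx => Finset.mem_filter.mpr ⟨hsub hx, hX' hx⟩, hcard⟩
  -- an r-set inside X avoiding range a
  obtain ⟨e₀, he₀X, he₀card⟩ :=
    (hX.diff (Set.finite_coe_iff.mp (by infer_instance) :
      (↑(Finset.range a) : Set ℕ).Finite)).exists_subset_card_eq r
  have he₀SR : e₀ ∉ SR r a := by
    intro hmem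
    obtain ⟨x, hx⟩ := Finset.card_pos.mp (by omega : 0 < e₀.card)
    have hx1 := (Finset.mem_powersetCard.mp hmem).1 hx
    have hx2 := he₀X hx
    exact hx2.2 hx1
  have hcol : coloursOn r (Δsr r a) X
      = insert 1 (Δsr r a '' ↑(T.powersetCard r)) := by
    ext c
    constructor
    · rintro ⟨e, ⟨heX, hecard⟩, rfl⟩
      by_cases h : e ∈ SR r a
      · exact Set.mem_insert_of_mem _ ⟨e, (hmemT e).mpr ⟨h, heX⟩, rfl⟩
      · rw [Δsr_notMem r a h]; exact Set.mem_insert _ _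
    · rintro (rfl | ⟨e, he, rfl⟩)
      · exact ⟨e₀, ⟨fun x hx => (he₀X hx).1, he₀card⟩, Δsr_notMem r a he₀SR⟩
      · obtain ⟨hSR, heX⟩ := (hmemT e).mp he
        exact ⟨e, ⟨heX, (Finset.mem_powersetCard.mp hSR).2⟩, rfl⟩
  have h1 : (1 : ℕ) ∉ Δsr r a '' ↑(T.powersetCard r) := by
    rintro ⟨e, he, heq⟩
    rw [Δsr_mem r a ((hmemT e).mp he).1] at heq
    omega
  have hinj : Set.InjOn (Δsr r a) ↑(T.powersetCard r) := by
    intro x hx y hy hxy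
    exact Δsr_inj r a ((hmemT x).mp hx).1 ((hmemT y).mp hy).1 hxy
  have hfin : (Δsr r a '' ↑(T.powersetCard r)).Finite :=
    ((T.powersetCard r).finite_toSet).image _
  rw [gamma, hcol, Set.ncard_insert_of_notMem h1 hfin,
    Set.ncard_image_of_injOn hinj, Set.ncard_coe_finset,
    Finset.card_powersetCard]

/-- **Small-rainbow colouring.** For `r ≥ 2` and `a ≥ r`, there is a surjective colouring
`Δ : ℕ^(r) ↠ [k]` with `k = C(a,r) + 1` such that `F_Δ = { C(n,r) + 1 : n ≤ a }`. -/
theorem small_rainbow_colouring (r a : ℕ) (hr : 2 ≤ r) (ha : r ≤ a) :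
    ∃ Δ : Finset ℕ → ℕ, IsColouring r (Nat.choose a r + 1) Δ ∧
      Fdelta r Δ = {m : ℕ | ∃ n : ℕ, n ≤ a ∧ m = Nat.choose n r + 1} := by
  refine ⟨Δsr r a, ⟨?_, ?_⟩, ?_⟩
  · intro e hcard
    by_cases h : e ∈ SR r a
    · rw [Δsr_mem r a h]
      have h1 := ((SR r a).equivFin ⟨e, h⟩).isLt
      have h2 := card_SR r a
      simp only [Finset.mem_Icc]; omega
    · rw [Δsr_notMem r a h]
      simp only [Finset.mem_Icc]; omega
  · intro c hc
    simp only [Finset.mem_Icc] at hc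
    rcases eq_or_lt_of_le hc.1 with h1 | h2
    · -- colour 1 : take an r-set of numbers ≥ a
      obtain ⟨e, heX, hecard⟩ := (Set.Ici_infinite a).exists_subset_card_eq r
      refine ⟨e, hecard, ?_⟩
      rw [Δsr_notMem r a ?_, h1]
      intro hmem
      obtain ⟨x, hx⟩ := Finset.card_pos.mp (by omega : 0 < e.card)
      have hx1 := Finset.mem_range.mp ((Finset.mem_powersetCard.mp hmem).1 hx)
      have hx2 := heX hx
      simp only [Set.mem_Ici] at hx2
      omega
    · -- colour c ≥ 2
      have hlt : c - 2 < (SR r a).card := by rw [card_SR]; omega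
      set es := (SR r a).equivFin.symm ⟨c - 2, hlt⟩ with hes
      refine ⟨es.1, (Finset.mem_powersetCard.mp es.2).2, ?_⟩
      rw [Δsr_mem r a es.2]
      have : (SR r a).equivFin ⟨es.1, es.2⟩ = ⟨c - 2, hlt⟩ := by
        rw [hes]; simp
      rw [this]; simp only [Fin.val_mk]; omega
  · ext m
    simp only [Fdelta, Set.mem_setOf_eq]
    constructor
    · rintro ⟨X, hX, rfl⟩
      refine ⟨((Finset.range a).filter (fun x => x ∈ X)).card, ?_, ?_⟩
      · calc _ ≤ (Finset.range a).card := Finset.card_filter_le _ _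
          _ = a := Finset.card_range a
      · exact gamma_Δsr r a (by omega) X hX
    · rintro ⟨n, hn, rfl⟩
      refine ⟨↑(Finset.range n) ∪ Set.Ici a, ?_, ?_⟩
      · exact (Set.Ici_infinite a).mono Set.subset_union_right
      · rw [gamma_Δsr r a (by omega) _ ((Set.Ici_infinite a).mono Set.subset_union_right)]
        have key : ∀ (inst : DecidablePred fun x : ℕ =>
            x ∈ (↑(Finset.range n) ∪ Set.Ici a : Set ℕ)),
            (@Finset.filter ℕ _ inst (Finset.range a)).card = n := by
          intro inst
          have h : @Finset.filter ℕ _ inst (Finset.range a) = Finset.range n := by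
            ext x
            simp only [Finset.mem_filter, Finset.mem_range, Set.mem_union, Set.mem_Ici,
              Finset.coe_range, Set.mem_Iio]
            omega
          rw [h, Finset.card_range]
        rw [key]
end

section
/- Let r ≥ 2 and a ≥ r be integers and let Δ: ℕ^(r) ↠ [C(a,r)+1] be a surjective colouring for which F_Δ = { C(n,r) + 1 : n ≤ a }. Then for every integer l with r ≤ l < a such that C(l,r) + C(l+1,r) is even, setting m = (C(l,r) + C(l+1,r) + 2)/2, every m' ∈ F_Δ satisfies |m - m'| ≥ C(l,r-1)/2. -/
open Finset

/-- **Tightness of the approximation theorem.** If `Δ : ℕ^(r) ↠ [C(a,r)+1]` is a surjective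
colouring with `F_Δ = { C(n,r) + 1 : n ≤ a }`, then for `r ≤ l < a` with
`C(l,r) + C(l+1,r)` even and `m = (C(l,r) + C(l+1,r) + 2)/2`, every `m' ∈ F_Δ` satisfies
`|m - m'| ≥ C(l,r-1)/2`. -/
theorem small_rainbow_tight (r a : ℕ) (hr : 2 ≤ r) (ha : r ≤ a)
    (Δ : Finset ℕ → ℕ) (hΔ : IsColouring r (Nat.choose a r + 1) Δ)
    (hF : Fdelta r Δ = {m : ℕ | ∃ n : ℕ, n ≤ a ∧ m = Nat.choose n r + 1})
    (l : ℕ) (hl : r ≤ l) (hla : l < a)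
    (heven : 2 ∣ Nat.choose l r + Nat.choose (l + 1) r)
    (m : ℕ) (hm : m = (Nat.choose l r + Nat.choose (l + 1) r + 2) / 2) :
    ∀ m' ∈ Fdelta r Δ, (Nat.choose l (r - 1) : ℚ) / 2 ≤ |(m : ℚ) - (m' : ℚ)| := by
  intro m' hm'
  rw [hF] at hm'
  obtain ⟨n, hn, rfl⟩ := hm'
  obtain ⟨t, ht⟩ := heven
  have hr1 : r - 1 + 1 = r := by omega
  have hpascal : Nat.choose (l + 1) r = Nat.choose l (r - 1) + Nat.choose l r := by
    rw [← hr1, Nat.choose_succ_succ]; simp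
  have hmt : m = t + 1 := by omega
  have hkey : 2 * t = 2 * Nat.choose l r + Nat.choose l (r - 1) := by omega
  have hkeyQ : (2 * t : ℚ) = 2 * Nat.choose l r + Nat.choose l (r - 1) := by
    exact_mod_cast congrArg (Nat.cast : ℕ → ℚ) hkey
  rcases le_or_gt n l with hc | hc
  · have h1 : Nat.choose n r ≤ Nat.choose l r := Nat.choose_le_choose r hc
    have h1Q : (Nat.choose n r : ℚ) ≤ Nat.choose l r := by exact_mod_cast h1
    refine le_abs.mpr (Or.inl ?_)
    rw [hmt]
    push_cast
    linarith
  · have h1 : Nat.choose (l + 1) r ≤ Nat.choose n r := Nat.choose_le_choose r hc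
    have h1Q : (Nat.choose (l + 1) r : ℚ) ≤ Nat.choose n r := by exact_mod_cast h1
    have h2Q : (Nat.choose (l + 1) r : ℚ) = Nat.choose l (r - 1) + Nat.choose l r := by
      exact_mod_cast congrArg (Nat.cast : ℕ → ℚ) hpascal
    refine le_abs.mpr (Or.inr ?_)
    rw [hmt]
    push_cast
    linarith
end

section
/- For every integer r ≥ 2 there exists a natural number n_r ≥ r - 1 such that for every natural number k, every surjective colouring Δ: ℕ^(r) ↠ [k], and every natural number n ≥ n_r with k > C(n,r) + 1, the set F_Δ intersects the interval I_{r,n} = ( C(n,r) + 1, C(n+1,r) + 1 ]. -/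
open Finset

theorem infRamsey (d : ℕ) (K : Finset ℕ) (C : Finset ℕ → ℕ) (M : Set ℕ) (hM : M.Infinite)
    (hC : ∀ t : Finset ℕ, ↑t ⊆ M → t.card = d → C t ∈ K) :
    ∃ M' : Set ℕ, M' ⊆ M ∧ M'.Infinite ∧ ∃ c ∈ K, ∀ t : Finset ℕ, ↑t ⊆ M' → t.card = d → C t = c := by
  induction d generalizing C M with
  | zero =>
    refine ⟨M, le_refl _, hM, C ∅, hC ∅ (by simp) (by simp), ?_⟩
    intro t _ ht
    rw [Finset.card_eq_zero] at ht
    rw [ht]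
  | succ d ih =>
    -- step claim
    have step : ∀ Mi : Set ℕ, ∃ (a : ℕ) (Mn : Set ℕ) (c : ℕ),
        Mi.Infinite → Mi ⊆ M →
        (a ∈ Mi ∧ Mn ⊆ Mi ∧ a ∉ Mn ∧ Mn.Infinite ∧ c ∈ K ∧
          ∀ t : Finset ℕ, ↑t ⊆ Mn → t.card = d → C (insert a t) = c) := by
      intro Mi
      by_cases h : Mi.Infinite ∧ Mi ⊆ M
      · obtain ⟨hMi, hMiM⟩ := h
        obtain ⟨a, ha⟩ := hMi.nonempty
        have hdiff : (Mi \ {a}).Infinite := hMi.diff (Set.finite_singleton a)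
        have hC' : ∀ t : Finset ℕ, ↑t ⊆ Mi \ {a} → t.card = d → C (insert a t) ∈ K := by
          intro t ht htc
          have hat : a ∉ t := fun hmem => (ht hmem).2 rfl
          refine hC _ ?_ ?_
          · intro x hx
            simp only [Finset.coe_insert, Set.mem_insert_iff] at hx
            rcases hx with rfl | hx
            · exact hMiM ha
            · exact hMiM (ht hx).1
          · rw [Finset.card_insert_of_notMem hat, htc]
        obtain ⟨M', hM'sub, hM'inf, c, hcK, hhom⟩ :=
          ih (fun t => C (insert a t)) (Mi \ {a}) hdiff hC'
        refine ⟨a, M', c, fun _ _ => ⟨ha, fun x hx => (hM'sub hx).1,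
          fun hmem => (hM'sub hmem).2 rfl, hM'inf, hcK, hhom⟩⟩
      · exact ⟨0, ∅, 0, fun h1 h2 => absurd ⟨h1, h2⟩ h⟩
    choose A N CL hstep using step
    set Mseq : ℕ → Set ℕ := fun i => Nat.rec M (fun _ Mi => N Mi) i with hMseq
    have hMseq0 : Mseq 0 = M := rfl
    have hMseqS : ∀ i, Mseq (i + 1) = N (Mseq i) := fun i => rfl
    have inv : ∀ i, (Mseq i).Infinite ∧ Mseq i ⊆ M := by
      intro i
      induction i with
      | zero => exact ⟨hM, le_refl _⟩
      | succ i ihh =>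
        obtain ⟨h1, h2, h3, h4, h5, h6⟩ := hstep (Mseq i) ihh.1 ihh.2
        exact ⟨h4, fun x hx => ihh.2 (h2 hx)⟩
    have prop : ∀ i, A (Mseq i) ∈ Mseq i ∧ Mseq (i+1) ⊆ Mseq i ∧ A (Mseq i) ∉ Mseq (i+1) ∧
        CL (Mseq i) ∈ K ∧
        ∀ t : Finset ℕ, ↑t ⊆ Mseq (i+1) → t.card = d → C (insert (A (Mseq i)) t) = CL (Mseq i) := by
      intro i
      obtain ⟨h1, h2, h3, h4, h5, h6⟩ := hstep (Mseq i) (inv i).1 (inv i).2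
      exact ⟨h1, h2, h3, h5, h6⟩
    set a : ℕ → ℕ := fun i => A (Mseq i)
    set cl : ℕ → ℕ := fun i => CL (Mseq i)
    have chain : ∀ i j, i ≤ j → Mseq j ⊆ Mseq i := by
      intro i j hij
      induction j with
      | zero => rw [Nat.le_zero] at hij; rw [hij]
      | succ j ihh =>
        rcases Nat.lt_or_ge i (j+1) with h | h
        · exact fun x hx => ihh (Nat.lt_succ_iff.mp h) ((prop j).2.1 hx)
        · have : i = j + 1 := le_antisymm hij h
          rw [this]
      
    have hainj : Function.Injective a := by
      intro i j hij
      by_contra hne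
      wlog hlt : i < j generalizing i j
      · exact this hij.symm (Ne.symm hne) (by omega)
      · have : a j ∈ Mseq (i+1) := chain (i+1) j hlt ((prop j).1)
        rw [← hij] at this
        exact (prop i).2.2.1 this
    -- pigeonhole on colours
    have hcl : ∀ i, cl i ∈ K := fun i => (prop i).2.2.2.1
    have : ∃ c ∈ K, {i : ℕ | cl i = c}.Infinite := by
      by_contra h
      push_neg at h
      have hfin : (⋃ c ∈ K, {i : ℕ | cl i = c}).Finite := by
        refine Set.Finite.biUnion K.finite_toSet ?_
        intro c hc
        have := h c hc
        exact this
      have : (Set.univ : Set ℕ).Finite := by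
        refine hfin.subset ?_
        intro i _
        simp only [Set.mem_iUnion, Set.mem_setOf_eq]
        exact ⟨cl i, hcl i, rfl⟩
      exact Set.infinite_univ this
    obtain ⟨c, hcK, hI⟩ := this
    refine ⟨a '' {i | cl i = c}, ?_, hI.image (hainj.injOn), c, hcK, ?_⟩
    · rintro x ⟨i, _, rfl⟩
      exact (inv i).2 (prop i).1
    · intro t ht htc
      -- choose indices
      have hidx : ∀ x ∈ t, ∃ i, cl i = c ∧ a i = x := by
        intro x hx
        obtain ⟨i, hi, rfl⟩ := ht hx
        exact ⟨i, hi, rfl⟩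
      choose idx hidx1 hidx2 using hidx
      have htne : t.Nonempty := by
        rw [← Finset.card_pos, htc]; omega
      obtain ⟨x0, hx0, hmin⟩ := Finset.exists_min_image t (fun x => if h : x ∈ t then idx x h else 0) htne
      set i0 := idx x0 hx0 with hi0
      have hax0 : a i0 = x0 := hidx2 x0 hx0
      have herase : ↑(t.erase x0) ⊆ Mseq (i0 + 1) := by
        intro x hx
        simp only [Finset.coe_erase, Set.mem_diff, Set.mem_singleton_iff, Finset.mem_coe] at hx
        obtain ⟨hxt, hxne⟩ := hx
        set i := idx x hxt with hi
        have hai : a i = x := hidx2 x hxt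
        have hine : i ≠ i0 := by
          intro he
          rw [he, hax0] at hai
          exact hxne hai.symm
        have hge : i0 ≤ i := by
          have := hmin x hxt
          simpa [hi0, hi, hx0, hxt] using this
        have : a i ∈ Mseq i := (prop i).1
        rw [hai] at this
        exact chain (i0+1) i (by omega) this
      have hcard : (t.erase x0).card = d := by
        rw [Finset.card_erase_of_mem hx0, htc]
        omega
      have := (prop i0).2.2.2.2 (t.erase x0) herase hcard
      rw [show A (Mseq i0) = x0 from hax0, Finset.insert_erase hx0] at this
      rw [this]
      exact hidx1 x0 hx0

theorem canon (r k : ℕ) (Δ : Finset ℕ → ℕ)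
    (hΔ1 : ∀ e : Finset ℕ, e.card = r → Δ e ∈ Finset.Icc 1 k)
    (S : Finset ℕ) (M0 : Set ℕ) (hM0 : M0.Infinite)
    (hdisj : ∀ x ∈ M0, x ∉ S) (P : Finset (Finset ℕ)) (hP : ∀ s ∈ P, s ⊆ S) :
    ∃ M : Set ℕ, M ⊆ M0 ∧ M.Infinite ∧ ∀ s ∈ P, ∀ t u : Finset ℕ, ↑t ⊆ M → ↑u ⊆ M →
      t.card = r - s.card → u.card = r - s.card → Δ (s ∪ t) = Δ (s ∪ u) := by
  classical
  induction P using Finset.induction_on with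
  | empty => exact ⟨M0, le_refl _, hM0, by simp⟩
  | @insert s₀ P hs₀ ih =>
    obtain ⟨M1, hM1sub, hM1inf, ihom⟩ := ih (fun s hs => hP s (Finset.mem_insert_of_mem hs))
    have hs₀S : s₀ ⊆ S := hP s₀ (Finset.mem_insert_self _ _)
    have hC : ∀ t : Finset ℕ, ↑t ⊆ M1 → t.card = r - s₀.card →
        Δ (s₀ ∪ t) ∈ insert (Δ s₀) (Finset.Icc 1 k) := by
      intro t ht htc
      rcases le_or_gt s₀.card r with hle | hlt
      · have hdisj' : Disjoint s₀ t := by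
          rw [Finset.disjoint_left]
          intro x hxs hxt
          exact hdisj x (hM1sub (ht hxt)) (hs₀S hxs)
        have : (s₀ ∪ t).card = r := by
          rw [Finset.card_union_of_disjoint hdisj', htc]
          omega
        exact Finset.mem_insert_of_mem (hΔ1 _ this)
      · have : t = ∅ := by
          rw [← Finset.card_eq_zero, htc]
          omega
        rw [this, Finset.union_empty]
        exact Finset.mem_insert_self _ _
    obtain ⟨M2, hM2sub, hM2inf, c, _, hhom⟩ :=
      infRamsey (r - s₀.card) (insert (Δ s₀) (Finset.Icc 1 k)) (fun t => Δ (s₀ ∪ t)) M1 hM1inf hC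
    refine ⟨M2, fun x hx => hM1sub (hM2sub hx), hM2inf, ?_⟩
    intro s hs t u htM huM htc huc
    rcases Finset.mem_insert.mp hs with rfl | hsP
    · rw [hhom t htM htc, hhom u huM huc]
    · exact ihom s hsP t u (fun x hx => hM2sub (htM hx)) (fun x hx => hM2sub (huM hx)) htc huc

lemma choose_mono_bottom (N : ℕ) : ∀ j, j ≤ N / 2 → ∀ i ≤ j, N.choose i ≤ N.choose j := by
  intro j
  induction j with
  | zero => intro _ i hi; rw [Nat.le_zero.mp hi]
  | succ j ihj =>
    intro hj i hi
    rcases Nat.eq_or_lt_of_le hi with rfl | h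
    · exact le_refl _
    · exact (ihj (by omega) i (by omega)).trans
        (Nat.choose_le_succ_of_lt_half_left (by omega))

lemma key_bin (r n : ℕ) (hr : 2 ≤ r) (hn : r*r ≤ n) :
    ∑ i ∈ Finset.range (r+1), (n-1).choose i ≤ (n+1).choose r + 1 := by
  obtain ⟨q, rfl⟩ : ∃ q, r = q + 2 := ⟨r - 2, by omega⟩
  set N := n - 1 with hN
  have hn4 : 4 ≤ n := by nlinarith
  have hNn : N + 2 = n + 1 := by omega
  have hP : (n+1).choose (q+2) =
      N.choose q + (N.choose (q+1) + (N.choose (q+1) + N.choose (q+2))) := by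
    rw [← hNn]
    rw [show N + 2 = (N+1)+1 by rfl, Nat.choose_succ_succ' (N+1) (q+1),
      Nat.choose_succ_succ' N q, Nat.choose_succ_succ' N (q+1)]
    ring
  rw [show q+2+1 = (q+1)+1+1 by rfl, Finset.sum_range_succ, Finset.sum_range_succ]
  have main : ∑ i ∈ Finset.range q, N.choose i ≤ N.choose (q+1) := by
    rcases Nat.eq_zero_or_pos q with rfl | hq
    · simp
    · obtain ⟨p, rfl⟩ : ∃ p, q = p + 1 := ⟨q - 1, by omega⟩
      have hn' : p*p + 6*p + 9 ≤ n := by nlinarith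
      -- bound each term by C(N,p)
      have hn' : p*p + 6*p + 9 ≤ n := by nlinarith
      have hpN : p ≤ N / 2 := by
        rw [Nat.le_div_iff_mul_le (by norm_num)]
        omega
      have step1 : ∑ i ∈ Finset.range (p+1), N.choose i ≤ (p+1) * N.choose p := by
        calc ∑ i ∈ Finset.range (p+1), N.choose i
            ≤ ∑ _i ∈ Finset.range (p+1), N.choose p := by
              refine Finset.sum_le_sum ?_
              intro i hi
              exact choose_mono_bottom N p hpN i (by simp at hi; omega)
          _ = (p+1) * N.choose p := by
              rw [Finset.sum_const, Finset.card_range, smul_eq_mul]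
      refine step1.trans ?_
      -- (p+1) * C(N,p) ≤ C(N,p+2)
      obtain ⟨D, hD⟩ : ∃ D, N = D + (p + 2) := ⟨N - (p+2), by omega⟩
      have hDge : p*p + 5*p + 6 ≤ D := by omega
      have e1 : N.choose (p+1) * (p+1) = N.choose p * (D + 2) := by
        have := Nat.choose_succ_right_eq N p
        rwa [show N - p = D + 2 by omega] at this
      have e2 : N.choose (p+2) * (p+2) = N.choose (p+1) * (D + 1) := by
        have := Nat.choose_succ_right_eq N (p+1)
        rwa [show N - (p+1) = D + 1 by omega] at this
      have e3 : N.choose (p+2) * ((p+2) * (p+1)) = N.choose p * ((D+2) * (D+1)) := by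
        calc N.choose (p+2) * ((p+2) * (p+1)) = (N.choose (p+2) * (p+2)) * (p+1) := by ring
          _ = (N.choose (p+1) * (p+1)) * (D+1) := by rw [e2]; ring
          _ = (N.choose p * (D+2)) * (D+1) := by rw [e1]
          _ = N.choose p * ((D+2) * (D+1)) := by ring
      have hnum : (p+1) * ((p+2) * (p+1)) ≤ (D+2) * (D+1) := by nlinarith [hDge, sq_nonneg p, sq_nonneg (p+1)]
      have : ((p+1) * N.choose p) * ((p+2) * (p+1)) ≤ N.choose (p+2) * ((p+2) * (p+1)) := by
        rw [e3]
        calc ((p+1) * N.choose p) * ((p+2) * (p+1))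
            = N.choose p * ((p+1) * ((p+2) * (p+1))) := by ring
          _ ≤ N.choose p * ((D+2) * (D+1)) := Nat.mul_le_mul_left _ hnum
      exact Nat.le_of_mul_le_mul_right this (by positivity)
  rw [Finset.sum_range_succ]
  omega



lemma arith_main (r n m : ℕ) (hr : 2 ≤ r) (hn : r*r ≤ n) (H : ℕ → ℕ)
    (hcap : ∀ i, H i ≤ m.choose i)
    (hlow : (n+1).choose r + 2 ≤ ∑ i ∈ Finset.range (r+1), H i)
    (hbud : m * (∑ i ∈ Finset.range (r+1), H i) ≤
      m * (n.choose r + 1) + ∑ i ∈ Finset.range (r+1), i * H i) :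
    False := by
  obtain ⟨q, rfl⟩ : ∃ q, r = q + 2 := ⟨r - 2, by omega⟩
  have hsq : (q+2)*(q+2) = q*q + 4*q + 4 := by ring
  have hrn : q + 2 ≤ n := by omega
  set h := ∑ i ∈ Finset.range (q+2+1), H i with hh
  set S1 := ∑ i ∈ Finset.range (q+2+1), i * H i with hS1
  set C := n.choose (q+2) with hC
  set C' := n.choose (q+1) with hC'
  set P := (n+1).choose (q+2) with hPdef
  have hPascal : P = C' + C := Nat.choose_succ_succ' n (q+1)
  have hC'pos : 1 ≤ C' := Nat.choose_pos (by omega)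
  have hCpos : 1 ≤ C := Nat.choose_pos hrn
  have id2 : (n+1) * C' = P * (q+2) := Nat.add_one_mul_choose_eq n (q+1)
  have id1 : C * (q+2) = C' * (n - (q+1)) := Nat.choose_succ_right_eq n (q+1)
  set A := ∑ i ∈ Finset.range (q+2), H i with hA
  set B := ∑ i ∈ Finset.range (q+1), H i with hB
  have e1 : h = B + H (q+1) + H (q+2) := by
    rw [hh, show q+2+1 = (q+1)+1+1 by rfl, Finset.sum_range_succ, Finset.sum_range_succ, hB]
  have e2 : A = B + H (q+1) := by
    rw [hA, Finset.sum_range_succ, hB]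
  have e3 : S1 = (∑ i ∈ Finset.range (q+1), i * H i) + (q+1) * H (q+1) + (q+2) * H (q+2) := by
    rw [hS1, show q+2+1 = (q+1)+1+1 by rfl, Finset.sum_range_succ, Finset.sum_range_succ]
  have hs : (∑ i ∈ Finset.range (q+1), i * H i) ≤ q * B := by
    rw [hB, Finset.mul_sum]
    exact Finset.sum_le_sum fun i hi => Nat.mul_le_mul_right _ (by simp at hi; omega)
  have claim2 : h ≤ A + m.choose (q+2) := by
    have e : h = A + H (q+2) := by rw [hh, hA, Finset.sum_range_succ]
    have := hcap (q+2)
    omega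
  have claim3 : h ≤ B + m.choose (q+1) + m.choose (q+2) := by
    have := hcap (q+1)
    have := hcap (q+2)
    omega
  have hcapsum : h ≤ ∑ i ∈ Finset.range (q+2+1), (n-1).choose i → m + 1 ≤ n → False := by
    intro hcs hmn
    have hkb := key_bin (q+2) n hr hn
    omega
  have hcapsum' : m + 1 ≤ n → False := by
    intro hmn
    refine hcapsum ?_ hmn
    rw [hh]
    exact Finset.sum_le_sum fun i _ => (hcap i).trans (Nat.choose_le_choose i (by omega))
  clear_value h S1 C C' P A B
  have claim1 : S1 + A + B ≤ (q+2) * h := by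
    have c1 : (q+2) * h = (q+2)*B + (q+2)*H (q+1) + (q+2)*H (q+2) := by rw [e1]; ring
    have c2 : (q+2)*H (q+1) = (q+1)*H (q+1) + H (q+1) := by ring
    have c3 : (q+2)*B = q*B + B + B := by ring
    omega
  have master : m * h + A + B ≤ m * (C + 1) + (q+2) * h := by omega
  have hlow' : C' + C + 2 ≤ h := by omega
  have hcase : m + 1 ≤ n ∨ m = n ∨ m = n + 1 ∨ n + 2 ≤ m := by omega
  rcases hcase with hm | hm | hm | hm
  · exact hcapsum' hm
  · -- m = n
    subst hm
    obtain ⟨w, hw⟩ : ∃ w, m = w + (q+2) := ⟨m - (q+2), by omega⟩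
    have id1' : C * (q+2) = C' * (w+1) := by
      rw [id1, show m - (q+1) = w + 1 by omega]
    have c2 : h ≤ A + C := by rw [hC]; exact claim2
    have c3 : h ≤ B + C' + C := by rw [hC', hC]; exact claim3
    have hexp : m * (C+1) = m * C + m := by ring
    have hEE : m * h + h + h ≤ m * C + m + (q+2) * h + 2 * C + C' := by omega
    have expand1 : m * C + 2 * C = w * C + C' * (w+1) + 2 * C := by
      calc m * C + 2 * C = w * C + C * (q+2) + 2 * C := by rw [hw]; ring
        _ = w * C + C' * (w+1) + 2 * C := by rw [id1']
    have hsplit : m * h + h + h = (q+2) * h + (w+2) * h := by rw [hw]; ring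
    have hge : (w+2) * (C' + C + 2) ≤ (w+2) * h := Nat.mul_le_mul_left _ hlow'
    have expand2 : (w+2) * (C' + C + 2) = w * C + C' * (w+1) + 2 * C + (C' + 2*w + 4) := by ring
    omega
  · -- m = n + 1
    subst hm
    obtain ⟨w, hw⟩ : ∃ w, n + 1 = w + (q+2) := ⟨n - (q+1), by omega⟩
    have idP : (n+1) * C = w * P := by
      have hPm : (n+1) * C + P * (q+2) = w * P + P * (q+2) := by
        calc (n+1) * C + P * (q+2) = (n+1) * C + (n+1) * C' := by rw [id2]
          _ = (n+1) * P := by rw [hPascal]; ring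
          _ = (w + (q+2)) * P := by rw [hw]
          _ = w * P + P * (q+2) := by ring
      exact Nat.add_right_cancel hPm
    have c2 : h ≤ A + P := by rw [hPdef]; exact claim2
    have hexp : (n+1) * (C+1) = (n+1) * C + (n+1) := by ring
    have hEE : (n+1) * h + h ≤ (n+1) * C + (n+1) + (q+2) * h + P := by omega
    have hsplit : (n+1) * h + h = (q+2) * h + (w+1) * h := by rw [hw]; ring
    have hge : (w+1) * (C' + C + 2) ≤ (w+1) * h := Nat.mul_le_mul_left _ hlow'
    have hPe : (w+1) * (C' + C + 2) = w * P + P + 2 * (w+1) := by rw [hPascal]; ring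
    omega
  · -- m ≥ n + 2
    obtain ⟨v, hv⟩ : ∃ v, m = v + (q+2) := ⟨m - (q+2), by omega⟩
    obtain ⟨u, hu⟩ : ∃ u, n = u + (q+1) := ⟨n - (q+1), by omega⟩
    have id1' : C * (q+2) = C' * u := by rw [id1, show n - (q+1) = u by omega]
    have hexp : m * (C+1) = m * C + m := by ring
    have hmh : v * h ≤ m * C + m := by
      have hsplit : m * h = (q+2) * h + v * h := by rw [hv]; ring
      omega
    have hge : v * (C' + C + 2) ≤ v * h := Nat.mul_le_mul_left _ hlow'
    have expandmC : m * C = v * C + C' * u := by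
      calc m * C = v * C + C * (q+2) := by rw [hv]; ring
        _ = v * C + C' * u := by rw [id1']
    have hvu : u + 1 ≤ v := by omega
    have hmul : (u+1) * C' ≤ v * C' := Nat.mul_le_mul_right _ hvu
    have hmule : (u+1) * C' = u * C' + C' := by ring
    have hcomm : C' * u = u * C' := by ring
    have hgee : v * (C' + C + 2) = v * C' + v * C + 2 * v := by ring
    omega

/-- **Theorem 3.** For every `r ≥ 2` there exists `n_r ≥ r - 1` such that for every surjective
colouring `Δ : ℕ^(r) ↠ [k]` and every `n ≥ n_r` with `k > C(n,r) + 1`, the set `F_Δ` meets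
the interval `I_{r,n} = (C(n,r) + 1, C(n+1,r) + 1]`. -/
theorem Fdelta_meets_interval (r : ℕ) (hr : 2 ≤ r) :
    ∃ nr : ℕ, r - 1 ≤ nr ∧
      ∀ (k : ℕ) (Δ : Finset ℕ → ℕ), IsColouring r k Δ →
        ∀ n : ℕ, nr ≤ n → Nat.choose n r + 1 < k →
          ∃ m' ∈ Fdelta r Δ,
            Nat.choose n r + 1 < m' ∧ m' ≤ Nat.choose (n + 1) r + 1 := by
  classical
  refine ⟨r * r, le_trans (by omega : r - 1 ≤ r) (Nat.le_mul_of_pos_left r (by omega)), ?_⟩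
  rintro k Δ ⟨hΔ1, hΔ2⟩ n hn hk
  have hnrr : r * r ≤ n := hn
  by_cases hk2 : k ≤ (n+1).choose r + 1
  · -- take X = ℕ
    refine ⟨k, ⟨Set.univ, Set.infinite_univ, ?_⟩, hk, hk2⟩
    have hco : coloursOn r Δ Set.univ = ↑(Finset.Icc 1 k) := by
      ext c
      constructor
      · rintro ⟨e, ⟨-, hecard⟩, rfl⟩
        exact_mod_cast hΔ1 e hecard
      · intro hc
        obtain ⟨e, he1, he2⟩ := hΔ2 c (by exact_mod_cast hc)
        exact ⟨e, ⟨by simp, he1⟩, he2⟩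
    rw [gamma, hco, Set.ncard_coe_finset, Nat.card_Icc]
    omega
  · push_neg at hk2
    have hk2' : (n+1).choose r + 2 ≤ k := hk2
    -- witnesses for every colour
    have hwit : ∀ c : ℕ, ∃ e : Finset ℕ, c ∈ Finset.Icc 1 k → (e.card = r ∧ Δ e = c) := by
      intro c
      by_cases hc : c ∈ Finset.Icc 1 k
      · obtain ⟨e, he⟩ := hΔ2 c hc
        exact ⟨e, fun _ => he⟩
      · exact ⟨∅, fun h => absurd h hc⟩
    choose w hw using hwit
    set S : Finset ℕ := (Finset.Icc 1 k).biUnion w with hS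
    have hSw : ∀ c ∈ Finset.Icc 1 k, w c ⊆ S := fun c hc => Finset.subset_biUnion_of_mem w hc
    have hM0 : (↑S : Set ℕ)ᶜ.Infinite := (S.finite_toSet).infinite_compl
    obtain ⟨M, hMsub, hMinf, hhom⟩ :=
      canon r k Δ hΔ1 S (↑S : Set ℕ)ᶜ hM0 (fun x hx => by simpa using hx) S.powerset
        (fun s hs => Finset.mem_powerset.mp hs)
    have hMS : ∀ x ∈ M, x ∉ S := fun x hx => by simpa using hMsub hx
    -- pick tails
    have hpick : ∀ s : Finset ℕ, ∃ t : Finset ℕ, ↑t ⊆ M ∧ t.card = r - s.card :=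
      fun s => hMinf.exists_subset_card_eq _
    choose ts hts1 hts2 using hpick
    set φ : Finset ℕ → ℕ := fun s => Δ (s ∪ ts s) with hφ
    set ColF : Finset ℕ → Finset ℕ :=
      fun T => (T.powerset.filter (fun s => s.card ≤ r)).image φ with hColF
    -- L0
    have L0 : ∀ T : Finset ℕ, T ⊆ S → ∀ s : Finset ℕ, s ⊆ T → s.card ≤ r →
        ∀ t : Finset ℕ, ↑t ⊆ M → t.card = r - s.card → Δ (s ∪ t) = φ s := by
      intro T hTS s hsT hsr t ht htc
      exact hhom s (Finset.mem_powerset.mpr (hsT.trans hTS)) t (ts s) ht (hts1 s) htc (hts2 s)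
    -- L1
    have L1 : ∀ T : Finset ℕ, T ⊆ S → coloursOn r Δ (↑T ∪ M) = ↑(ColF T) := by
      intro T hTS
      ext c
      constructor
      · rintro ⟨e, ⟨hesub, hecard⟩, rfl⟩
        have hst : (e ∩ T) ∪ (e \ T) = e := by
          ext x
          simp only [Finset.mem_union, Finset.mem_inter, Finset.mem_sdiff]
          tauto
        have hcards : (e ∩ T).card + (e \ T).card = e.card :=
          Finset.card_inter_add_card_sdiff e T
        have htM : ↑(e \ T) ⊆ M := by
          intro x hx
          simp only [Finset.coe_sdiff, Set.mem_diff, Finset.mem_coe] at hx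
          rcases hesub hx.1 with h | h
          · exact absurd h hx.2
          · exact h
        have hsT : e ∩ T ⊆ T := Finset.inter_subset_right
        have hscard : (e ∩ T).card ≤ r := by
          have := Finset.card_le_card (Finset.inter_subset_left (s₂ := T) (s₁ := e))
          omega
        have h0 := L0 T hTS (e ∩ T) hsT hscard (e \ T) htM (by omega)
        rw [hst] at h0
        simp only [hColF, Finset.coe_image, Set.mem_image, Finset.mem_coe]
        refine ⟨e ∩ T, ?_, h0.symm⟩
        exact Finset.mem_filter.mpr ⟨Finset.mem_powerset.mpr hsT, hscard⟩
      · intro hc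
        simp only [hColF, Finset.coe_image, Set.mem_image, Finset.mem_coe] at hc
        obtain ⟨s, hsmem, rfl⟩ := hc
        obtain ⟨hsT, hsr⟩ := Finset.mem_filter.mp hsmem
        rw [Finset.mem_powerset] at hsT
        have hdisj : Disjoint s (ts s) := by
          rw [Finset.disjoint_left]
          intro x hxs hxt
          exact hMS x (hts1 s hxt) (hTS (hsT hxs))
        refine ⟨s ∪ ts s, ⟨?_, ?_⟩, rfl⟩
        · intro x hx
          rcases Finset.mem_union.mp (by exact_mod_cast hx) with h | h
          · exact Or.inl (by exact_mod_cast Finset.mem_coe.mpr (hsT h))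
          · exact Or.inr (hts1 s h)
        · rw [Finset.card_union_of_disjoint hdisj, hts2 s]
          omega
    have hgam : ∀ T : Finset ℕ, T ⊆ S → gamma r Δ (↑T ∪ M) = (ColF T).card := by
      intro T hTS
      rw [gamma, L1 T hTS, Set.ncard_coe_finset]
    -- all colours appear in ColF S
    have hColS : Finset.Icc 1 k ⊆ ColF S := by
      intro c hc
      have hwc := hw c hc
      simp only [hColF, Finset.mem_image]
      refine ⟨w c, Finset.mem_filter.mpr ⟨Finset.mem_powerset.mpr (hSw c hc), by
        rw [hwc.1]⟩, ?_⟩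
      have : ts (w c) = ∅ := by
        rw [← Finset.card_eq_zero, hts2 (w c), hwc.1]
        omega
      rw [hφ]
      simp only []
      rw [this, Finset.union_empty, hwc.2]
    -- counting lemma
    have KEY : ∀ T : Finset ℕ, T ⊆ S → (n+1).choose r + 2 ≤ (ColF T).card →
        ∃ a ∈ T, n.choose r + 2 ≤ (ColF (T.erase a)).card := by
      intro T hTS hbig
      by_contra hno
      push_neg at hno
      have hwitW : ∀ c ∈ ColF T, ∃ s, (s ∈ T.powerset.filter (fun s => s.card ≤ r)) ∧ φ s = c := by
        intro c hc
        simp only [hColF, Finset.mem_image] at hc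
        exact hc
      choose! W hW1 hW2 using hwitW
      have key1 : ∀ a ∈ T, (ColF T).card ≤
          (n.choose r + 1) + ((ColF T).filter (fun c => a ∈ W c)).card := by
        intro a ha
        have hsub : (ColF T).filter (fun c => a ∉ W c) ⊆ ColF (T.erase a) := by
          intro c hc
          obtain ⟨hc0, hcna⟩ := Finset.mem_filter.mp hc
          have hWm := hW1 c hc0
          obtain ⟨hWT, hWr⟩ := Finset.mem_filter.mp hWm
          rw [Finset.mem_powerset] at hWT
          simp only [hColF, Finset.mem_image]
          refine ⟨W c, Finset.mem_filter.mpr ⟨Finset.mem_powerset.mpr ?_, hWr⟩, hW2 c hc0⟩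
          exact Finset.subset_erase.mpr ⟨hWT, hcna⟩
        have h1 : ((ColF T).filter (fun c => a ∉ W c)).card ≤ n.choose r + 1 := by
          have := hno a ha
          have := Finset.card_le_card hsub
          omega
        have h2 : ((ColF T).filter (fun c => a ∈ W c)).card
            + ((ColF T).filter (fun c => a ∉ W c)).card = (ColF T).card := by
          exact Finset.card_filter_add_card_filter_not (fun c => a ∈ W c)
        omega
      have hsum1 : T.card * (ColF T).card ≤ T.card * (n.choose r + 1)
          + ∑ a ∈ T, ((ColF T).filter (fun c => a ∈ W c)).card := by
        calc T.card * (ColF T).card = ∑ _a ∈ T, (ColF T).card := by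
              rw [Finset.sum_const, smul_eq_mul]
          _ ≤ ∑ a ∈ T, ((n.choose r + 1) + ((ColF T).filter (fun c => a ∈ W c)).card) :=
              Finset.sum_le_sum key1
          _ = T.card * (n.choose r + 1)
              + ∑ a ∈ T, ((ColF T).filter (fun c => a ∈ W c)).card := by
              rw [Finset.sum_add_distrib, Finset.sum_const, smul_eq_mul]
      have hswap : ∑ a ∈ T, ((ColF T).filter (fun c => a ∈ W c)).card
          = ∑ c ∈ ColF T, (T.filter (fun a => a ∈ W c)).card := by
        simp_rw [Finset.card_filter]
        rw [Finset.sum_comm]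
      have hWsub : ∑ c ∈ ColF T, (T.filter (fun a => a ∈ W c)).card
          ≤ ∑ c ∈ ColF T, (W c).card := by
        refine Finset.sum_le_sum ?_
        intro c _
        exact Finset.card_le_card (fun x hx => (Finset.mem_filter.mp hx).2)
      set H : ℕ → ℕ := fun i => ((ColF T).filter (fun c => (W c).card = i)).card with hH
      have hmaps : ∀ c ∈ ColF T, (W c).card ∈ Finset.range (r+1) := by
        intro c hc
        have := (Finset.mem_filter.mp (hW1 c hc)).2
        rw [Finset.mem_range]
        omega
      have hHsum : ∑ i ∈ Finset.range (r+1), H i = (ColF T).card :=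
        (Finset.card_eq_sum_card_fiberwise hmaps).symm
      have hHsum2 : ∑ c ∈ ColF T, (W c).card = ∑ i ∈ Finset.range (r+1), i * H i := by
        rw [← Finset.sum_fiberwise_of_maps_to hmaps (fun c => (W c).card)]
        refine Finset.sum_congr rfl ?_
        intro i _
        rw [hH]
        rw [Finset.sum_congr rfl (fun c hc => (Finset.mem_filter.mp hc).2),
          Finset.sum_const, smul_eq_mul, mul_comm]
      have hHcap : ∀ i, H i ≤ T.card.choose i := by
        intro i
        rw [hH, ← Finset.card_powersetCard i T]
        refine Finset.card_le_card_of_injOn W ?_ ?_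
        · intro c hc
          obtain ⟨hc0, hci⟩ := Finset.mem_filter.mp hc
          have := Finset.mem_filter.mp (hW1 c hc0)
          rw [Finset.mem_coe, Finset.mem_powersetCard]
          exact ⟨Finset.mem_powerset.mp this.1, hci⟩
        · intro c1 hc1 c2 hc2 he
          have e1 := hW2 c1 (Finset.mem_filter.mp hc1).1
          have e2 := hW2 c2 (Finset.mem_filter.mp hc2).1
          rw [← e1, ← e2, he]
      refine arith_main r n T.card hr hnrr H hHcap (by rw [hHsum]; exact hbig) ?_
      rw [hHsum, ← hHsum2]
      calc T.card * (ColF T).card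
          ≤ T.card * (n.choose r + 1) + ∑ a ∈ T, ((ColF T).filter (fun c => a ∈ W c)).card :=
            hsum1
        _ ≤ T.card * (n.choose r + 1) + ∑ c ∈ ColF T, (W c).card := by
            rw [hswap]; omega
    -- descent
    have descent : ∀ N : ℕ, ∀ T : Finset ℕ, T ⊆ S → T.card ≤ N →
        n.choose r + 2 ≤ (ColF T).card →
        ∃ T' : Finset ℕ, T' ⊆ S ∧ n.choose r + 2 ≤ (ColF T').card ∧
          (ColF T').card ≤ (n+1).choose r + 1 := by
      intro N
      induction N with
      | zero =>
        intro T hTS hcard hge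
        by_cases hsmall : (ColF T).card ≤ (n+1).choose r + 1
        · exact ⟨T, hTS, hge, hsmall⟩
        · obtain ⟨a, haT, -⟩ := KEY T hTS (by omega)
          have := Finset.card_pos.mpr ⟨a, haT⟩
          omega
      | succ N ih =>
        intro T hTS hcard hge
        by_cases hsmall : (ColF T).card ≤ (n+1).choose r + 1
        · exact ⟨T, hTS, hge, hsmall⟩
        · obtain ⟨a, haT, hnext⟩ := KEY T hTS (by omega)
          refine ih (T.erase a) ((Finset.erase_subset a T).trans hTS) ?_ hnext
          have := Finset.card_erase_of_mem haT
          have := Finset.card_pos.mpr ⟨a, haT⟩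
          omega
    have hstart : n.choose r + 2 ≤ (ColF S).card := by
      have h1 : k ≤ (ColF S).card := by
        have := Finset.card_le_card hColS
        rw [Nat.card_Icc] at this
        omega
      have h2 : n.choose r ≤ (n+1).choose r := Nat.choose_le_choose r (by omega)
      omega
    obtain ⟨T', hT'S, hge, hle⟩ := descent S.card S Finset.Subset.rfl le_rfl hstart
    refine ⟨(ColF T').card, ⟨↑T' ∪ M, hMinf.mono Set.subset_union_right, hgam T' hT'S⟩,
      by omega, hle⟩
end

section
/- For every integer r ≥ 3 there exist infinitely many natural numbers n for which there exists a natural number k with k > Σ_{i=0}^{r} C(n-1,i) and a surjective colouring Δ: ℕ^(r) ↠ [k] such that F_Δ does not intersect the interval J_{r,n} = ( Σ_{i=0}^{r} C(n-1,i), Σ_{i=0}^{r} C(n,i) ]. -/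
open Finset

namespace AvoidJ


/-- `Sr r m = ∑_{i=0}^r C(m,i)`. -/
def Sr (r m : ℕ) : ℕ := ∑ i ∈ Finset.range (r + 1), Nat.choose m i

lemma sum_pair_odd (m s : ℕ) :
    ∑ i ∈ Finset.range (2 * s), Nat.choose m i
      = ∑ t ∈ Finset.range s, Nat.choose (m + 1) (2 * t + 1) := by
  induction s with
  | zero => simp
  | succ s ih =>
      have h2 : 2 * (s + 1) = (2 * s + 1) + 1 := by ring
      rw [h2, Finset.sum_range_succ, Finset.sum_range_succ, ih, Finset.sum_range_succ]
      have : Nat.choose (m+1) (2*s+1) = Nat.choose m (2*s) + Nat.choose m (2*s+1) :=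
        Nat.choose_succ_succ m (2*s)
      omega

lemma sum_pair_even (m s : ℕ) :
    ∑ i ∈ Finset.range (2 * s + 1), Nat.choose m i
      = 1 + ∑ t ∈ Finset.range s, Nat.choose (m + 1) (2 * t + 2) := by
  induction s with
  | zero => simp
  | succ s ih =>
      have h2 : 2 * (s + 1) + 1 = ((2 * s + 1) + 1) + 1 := by ring
      rw [h2, Finset.sum_range_succ, Finset.sum_range_succ, ih, Finset.sum_range_succ]
      have : Nat.choose (m+1) (2*s+2) = Nat.choose m (2*s+1) + Nat.choose m (2*s+2) :=
        Nat.choose_succ_succ m (2*s+1)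
      omega

/-- the finite ground set `F = {0,…,n}`. -/
def Ffin (n : ℕ) : Finset ℕ := Finset.range (n + 1)

lemma card_Ffin (n : ℕ) : (Ffin n).card = n + 1 := by simp [Ffin]





variable (L : Finset (Finset ℕ)) (n : ℕ)

noncomputable def enc (T : Finset ℕ) : ℕ :=
  if h : T ∈ L then ((L.equivFin ⟨T, h⟩ : Fin L.card) : ℕ) + 2 else 0

noncomputable def Del (e : Finset ℕ) : ℕ :=
  if (e ∩ Ffin n) ∈ L then enc L (e ∩ Ffin n) else 1

lemma enc_ge_two {T : Finset ℕ} (h : T ∈ L) : 2 ≤ enc L T := by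
  simp only [enc, dif_pos h]; omega

lemma enc_le {T : Finset ℕ} (h : T ∈ L) : enc L T ≤ L.card + 1 := by
  simp only [enc, dif_pos h]
  have := (L.equivFin ⟨T, h⟩).isLt
  omega

lemma enc_injOn : Set.InjOn (enc L) ↑L := by
  intro T hT T' hT' he
  simp only [mem_coe] at hT hT'
  simp only [enc, dif_pos hT, dif_pos hT'] at he
  have : (L.equivFin ⟨T, hT⟩) = (L.equivFin ⟨T', hT'⟩) := by
    apply Fin.ext; omega
  have := L.equivFin.injective this
  exact Subtype.mk_eq_mk.mp this

lemma enc_surj {c : ℕ} (h2 : 2 ≤ c) (hk : c ≤ L.card + 1) :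
    ∃ T ∈ L, enc L T = c := by
  have hlt : c - 2 < L.card := by omega
  let x := L.equivFin.symm ⟨c - 2, hlt⟩
  refine ⟨x.1, x.2, ?_⟩
  simp only [enc, dif_pos x.2]
  have hx : L.equivFin ⟨x.1, x.2⟩ = ⟨c - 2, hlt⟩ := by
    show L.equivFin x = _
    exact L.equivFin.apply_symm_apply _
  rw [hx]
  simp only [Fin.val_mk]
  omega

variable {r : ℕ}

lemma exists_e {T : Finset ℕ} (hTF : T ⊆ Ffin n) (hcard : T.card ≤ r) {X : Set ℕ}
    (hX : (X \ ↑(Ffin n)).Infinite) (hTX : ↑T ⊆ X) :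
    ∃ e : Finset ℕ, ↑e ⊆ X ∧ e.card = r ∧ e ∩ Ffin n = T := by
  obtain ⟨e', he'sub, he'card⟩ := hX.exists_subset_card_eq (r - T.card)
  have he'F : ∀ a ∈ e', a ∉ Ffin n := by
    intro a ha
    have := he'sub (Finset.mem_coe.mpr ha)
    intro haF
    exact this.2 (Finset.mem_coe.mpr haF)
  have hdisj : Disjoint T e' := by
    rw [Finset.disjoint_left]
    intro a haT hae'
    exact he'F a hae' (hTF haT)
  refine ⟨T ∪ e', ?_, ?_, ?_⟩
  · intro a ha
    rcases Finset.mem_union.mp (Finset.mem_coe.mp ha) with h | h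
    · exact hTX (Finset.mem_coe.mpr h)
    · exact (he'sub (Finset.mem_coe.mpr h)).1
  · rw [Finset.card_union_of_disjoint hdisj, he'card]; omega
  · rw [Finset.union_inter_distrib_right]
    have h1 : T ∩ Ffin n = T := Finset.inter_eq_left.mpr hTF
    have h2 : e' ∩ Ffin n = ∅ := by
      apply Finset.eq_empty_of_forall_notMem
      intro a ha
      rcases Finset.mem_inter.mp ha with ⟨h3, h4⟩
      exact he'F a h3 h4
    rw [h1, h2, Finset.union_empty]

lemma empty_not_mem (hT : ∀ T ∈ L, T ⊆ Ffin n ∧ T.Nonempty ∧ T.card ≤ r) :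
    (∅ : Finset ℕ) ∉ L := by
  intro h
  exact Finset.not_nonempty_empty (hT ∅ h).2.1

lemma coloursOn_eq (hT : ∀ T ∈ L, T ⊆ Ffin n ∧ T.Nonempty ∧ T.card ≤ r)
    {X : Set ℕ} (hX : X.Infinite) :
    coloursOn r (Del L n) X = insert 1 ((enc L) '' {T : Finset ℕ | T ∈ L ∧ ↑T ⊆ X}) := by
  have hXF : (X \ ↑(Ffin n)).Infinite := hX.diff (Ffin n).finite_toSet
  ext c
  constructor
  · rintro ⟨e, ⟨heX, hecard⟩, rfl⟩
    by_cases h : e ∩ Ffin n ∈ L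
    · right
      refine ⟨e ∩ Ffin n, ⟨h, ?_⟩, by simp [Del, if_pos h]⟩
      intro a ha
      exact heX (Finset.mem_coe.mpr (Finset.mem_of_mem_inter_left (Finset.mem_coe.mp ha)))
    · left; simp [Del, if_neg h]
  · intro hc
    rcases Set.mem_insert_iff.mp hc with rfl | ⟨T, ⟨hTL, hTX⟩, rfl⟩
    · obtain ⟨e, heX, hecard, heF⟩ :=
        exists_e (n := n) (T := (∅ : Finset ℕ)) (Finset.empty_subset _) (by simp) hXF
          (by simp)
      refine ⟨e, ⟨heX, hecard⟩, ?_⟩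
      rw [Del, heF, if_neg (empty_not_mem L n hT)]
    · obtain ⟨e, heX, hecard, heF⟩ :=
        exists_e (n := n) (hT T hTL).1 (hT T hTL).2.2 hXF hTX
      refine ⟨e, ⟨heX, hecard⟩, ?_⟩
      rw [Del, heF, if_pos hTL]

lemma gamma_eq (hT : ∀ T ∈ L, T ⊆ Ffin n ∧ T.Nonempty ∧ T.card ≤ r)
    {X : Set ℕ} (hX : X.Infinite) :
    gamma r (Del L n) X = {T : Finset ℕ | T ∈ L ∧ ↑T ⊆ X}.ncard + 1 := by
  have hBfin : {T : Finset ℕ | T ∈ L ∧ ↑T ⊆ X}.Finite :=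
    L.finite_toSet.subset (fun T h => h.1)
  rw [gamma, coloursOn_eq L n hT hX]
  rw [Set.ncard_insert_of_notMem ?one (hBfin.image _)]
  · rw [Set.ncard_image_of_injOn ((enc_injOn L).mono (fun T h => h.1))]
  case one =>
    rintro ⟨T, hT', hTe⟩
    have := enc_ge_two L hT'.1
    omega

theorem design_works (r n : ℕ) (hr : 3 ≤ r) (L : Finset (Finset ℕ))
    (hT : ∀ T ∈ L, T ⊆ Ffin n ∧ T.Nonempty ∧ T.card ≤ r)
    (hA : ∑ i ∈ Finset.range (r + 1), Nat.choose n i ≤ L.card)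
    (hB : ∀ x ∈ Ffin n,
      (L.filter (fun T => x ∉ T)).card + 1 ≤ ∑ i ∈ Finset.range (r + 1), Nat.choose (n - 1) i) :
    ∃ k : ℕ, (∑ i ∈ Finset.range (r + 1), Nat.choose (n - 1) i) < k ∧
      ∃ Δ : Finset ℕ → ℕ, IsColouring r k Δ ∧
        ∀ m' ∈ Fdelta r Δ,
          ¬((∑ i ∈ Finset.range (r + 1), Nat.choose (n - 1) i) < m' ∧
            m' ≤ ∑ i ∈ Finset.range (r + 1), Nat.choose n i) := by
  have hmono : (∑ i ∈ Finset.range (r + 1), Nat.choose (n - 1) i)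
      ≤ ∑ i ∈ Finset.range (r + 1), Nat.choose n i :=
    Finset.sum_le_sum (fun i _ => Nat.choose_le_choose i (Nat.sub_le n 1))
  have hunivF : ((Set.univ : Set ℕ) \ ↑(Ffin n)).Infinite :=
    Set.infinite_univ.diff (Ffin n).finite_toSet
  refine ⟨L.card + 1, by omega, Del L n, ⟨?_, ?_⟩, ?_⟩
  · -- values in Icc
    intro e _
    rw [Del]
    split
    · next h =>
      exact Finset.mem_Icc.mpr ⟨by have := enc_ge_two L h; omega, enc_le L h⟩
    · exact Finset.mem_Icc.mpr ⟨le_refl 1, by omega⟩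
  · -- surjective
    intro c hc
    rcases Finset.mem_Icc.mp hc with ⟨hc1, hck⟩
    by_cases h1 : c = 1
    · obtain ⟨e, _, hecard, heF⟩ :=
        exists_e (n := n) (T := (∅ : Finset ℕ)) (r := r) (Finset.empty_subset _) (by simp)
          hunivF (by simp)
      refine ⟨e, hecard, ?_⟩
      rw [Del, heF, if_neg (empty_not_mem L n hT), h1]
    · obtain ⟨T, hTL, hTc⟩ := enc_surj L (c := c) (by omega) hck
      obtain ⟨e, _, hecard, heF⟩ :=
        exists_e (n := n) (hT T hTL).1 (hT T hTL).2.2 hunivF (by simp)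
      refine ⟨e, hecard, ?_⟩
      rw [Del, heF, if_pos hTL, hTc]
  · -- window avoidance
    rintro m' ⟨X, hX, hgam⟩
    rw [gamma_eq L n hT hX] at hgam
    by_cases hF : ↑(Ffin n) ⊆ X
    · have hBL : {T : Finset ℕ | T ∈ L ∧ ↑T ⊆ X} = ↑L := by
        ext T
        simp only [Set.mem_setOf_eq, mem_coe, and_iff_left_iff_imp]
        intro hTL
        exact fun a ha => hF ((hT T hTL).1 (by exact_mod_cast ha))
      rw [hBL, Set.ncard_coe_finset] at hgam
      rintro ⟨_, hle⟩
      omega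
    · rcases Set.not_subset.mp hF with ⟨x, hx1, hxX⟩
      have hxF : x ∈ Ffin n := by exact_mod_cast hx1
      have hsub : {T : Finset ℕ | T ∈ L ∧ ↑T ⊆ X} ⊆ ↑(L.filter (fun T => x ∉ T)) := by
        intro T ⟨hTL, hTX⟩
        simp only [mem_coe, Finset.mem_filter]
        refine ⟨hTL, fun hxT => hxX (hTX (Finset.mem_coe.mpr hxT))⟩
      have hle : {T : Finset ℕ | T ∈ L ∧ ↑T ⊆ X}.ncard
          ≤ (L.filter (fun T => x ∉ T)).card := by
        rw [← Set.ncard_coe_finset]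
        exact Set.ncard_le_ncard hsub (L.filter _).finite_toSet
      have := hB x hxF
      rintro ⟨hgt, _⟩
      omega





/-- cycle pairs `{i,i+1}`, `i < n`, together with `{0,n}`. -/
def Pfam (n : ℕ) : Finset (Finset ℕ) :=
  insert {0, n} ((Finset.range n).image (fun i => ({i, i + 1} : Finset ℕ)))

lemma pair_eq_iff {a b c d : ℕ} (hab : a < b) (hcd : c < d) :
    ({a, b} : Finset ℕ) = {c, d} ↔ a = c ∧ b = d := by
  constructor
  · intro h
    have hc : c ∈ ({a, b} : Finset ℕ) := by rw [h]; simp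
    have hd : d ∈ ({a, b} : Finset ℕ) := by rw [h]; simp
    have ha : a ∈ ({c, d} : Finset ℕ) := by rw [← h]; simp
    have hb : b ∈ ({c, d} : Finset ℕ) := by rw [← h]; simp
    simp only [Finset.mem_insert, Finset.mem_singleton] at hc hd ha hb
    omega
  · rintro ⟨rfl, rfl⟩; rfl

lemma mem_Pfam {n : ℕ} {p : Finset ℕ} :
    p ∈ Pfam n ↔ p = {0, n} ∨ ∃ i < n, p = {i, i + 1} := by
  simp only [Pfam, Finset.mem_insert, Finset.mem_image, Finset.mem_range]
  constructor
  · rintro (h | ⟨i, hi, rfl⟩)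
    · exact Or.inl h
    · exact Or.inr ⟨i, hi, rfl⟩
  · rintro (h | ⟨i, hi, rfl⟩)
    · exact Or.inl h
    · exact Or.inr ⟨i, hi, rfl⟩

lemma Pfam_card {n : ℕ} (hn : 2 ≤ n) : (Pfam n).card = n + 1 := by
  rw [Pfam, Finset.card_insert_of_notMem, Finset.card_image_of_injOn, Finset.card_range]
  · intro i hi j hj hij
    simp only [Finset.mem_coe, Finset.mem_range] at hi hj
    rw [pair_eq_iff (by omega) (by omega)] at hij
    omega
  · simp only [Finset.mem_image, Finset.mem_range]
    rintro ⟨i, hi, heq⟩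
    rw [pair_eq_iff (by omega) (by omega)] at heq
    omega

lemma Pfam_mem_props {n : ℕ} {p : Finset ℕ} (hn : 2 ≤ n) (hp : p ∈ Pfam n) :
    p ⊆ Ffin n ∧ p.card = 2 := by
  rw [mem_Pfam] at hp
  rcases hp with rfl | ⟨i, hi, rfl⟩
  · constructor
    · intro a ha
      simp only [Finset.mem_insert, Finset.mem_singleton] at ha
      simp only [Ffin, Finset.mem_range]; omega
    · exact Finset.card_pair (by omega)
  · constructor
    · intro a ha
      simp only [Finset.mem_insert, Finset.mem_singleton] at ha
      simp only [Ffin, Finset.mem_range]; omega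
    · exact Finset.card_pair (by omega)

/-- the degree of each vertex in the cycle is exactly 2 : upper bound. -/
lemma Pfam_deg_le {n x : ℕ} (hn : 2 ≤ n) (hx : x ∈ Ffin n) :
    ((Pfam n).filter (fun p => x ∈ p)).card ≤ 2 := by
  simp only [Ffin, Finset.mem_range] at hx
  classical
  by_cases h0 : x = 0
  · subst h0
    apply le_trans (Finset.card_le_card (t := ({({0,1} : Finset ℕ), {0, n}} : Finset (Finset ℕ))) ?_)
    · exact le_trans (Finset.card_insert_le _ _) (by simp)
    · intro p hp
      rcases Finset.mem_filter.mp hp with ⟨hpP, hxp⟩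
      rw [mem_Pfam] at hpP
      simp only [Finset.mem_insert, Finset.mem_singleton]
      rcases hpP with rfl | ⟨i, hi, rfl⟩
      · right; rfl
      · left
        simp only [Finset.mem_insert, Finset.mem_singleton] at hxp
        have : i = 0 := by omega
        subst this; rfl
  · by_cases hxn : x = n
    · apply le_trans (Finset.card_le_card (t := ({({n-1, n} : Finset ℕ), {0, n}} : Finset (Finset ℕ))) ?_)
      · exact le_trans (Finset.card_insert_le _ _) (by simp)
      · intro p hp
        rcases Finset.mem_filter.mp hp with ⟨hpP, hxp⟩
        rw [mem_Pfam] at hpP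
        simp only [Finset.mem_insert, Finset.mem_singleton]
        rcases hpP with rfl | ⟨i, hi, rfl⟩
        · right; rfl
        · left
          simp only [Finset.mem_insert, Finset.mem_singleton] at hxp
          have h1 : i = n - 1 := by omega
          have h2 : i + 1 = n := by omega
          rw [h1] at h2 ⊢
          rw [h2]
    · apply le_trans (Finset.card_le_card
        (t := ({({x-1, x} : Finset ℕ), {x, x+1}} : Finset (Finset ℕ))) ?_)
      · exact le_trans (Finset.card_insert_le _ _) (by simp)
      · intro p hp
        rcases Finset.mem_filter.mp hp with ⟨hpP, hxp⟩
        rw [mem_Pfam] at hpP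
        simp only [Finset.mem_insert, Finset.mem_singleton]
        rcases hpP with rfl | ⟨i, hi, rfl⟩
        · simp only [Finset.mem_insert, Finset.mem_singleton] at hxp
          omega
        · simp only [Finset.mem_insert, Finset.mem_singleton] at hxp
          rcases hxp with rfl | hxp
          · right; rfl
          · left
            have h1 : i = x - 1 := by omega
            have h2 : i + 1 = x := by omega
            rw [h1] at h2 ⊢
            rw [h2]

/-- lower bound on the degree. -/
lemma Pfam_deg_ge {n x : ℕ} (hn : 2 ≤ n) (hx : x ∈ Ffin n) :
    2 ≤ ((Pfam n).filter (fun p => x ∈ p)).card := by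
  simp only [Ffin, Finset.mem_range] at hx
  classical
  by_cases h0 : x = 0
  · subst h0
    apply le_trans ?_ (Finset.card_le_card
      (s := ({({0,1} : Finset ℕ), {0, n}} : Finset (Finset ℕ))) ?_)
    · rw [Finset.card_insert_of_notMem (by
        simp only [Finset.mem_singleton]
        intro h
        rw [pair_eq_iff (by omega) (by omega)] at h
        omega), Finset.card_singleton]
    · intro p hp
      simp only [Finset.mem_insert, Finset.mem_singleton] at hp
      rcases hp with rfl | rfl
      · exact Finset.mem_filter.mpr ⟨mem_Pfam.mpr (Or.inr ⟨0, by omega, rfl⟩), by simp⟩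
      · exact Finset.mem_filter.mpr ⟨mem_Pfam.mpr (Or.inl rfl), by simp⟩
  · by_cases hxn : x = n
    · apply le_trans ?_ (Finset.card_le_card
        (s := ({({n-1, n} : Finset ℕ), {0, n}} : Finset (Finset ℕ))) ?_)
      · rw [Finset.card_insert_of_notMem (by
          simp only [Finset.mem_singleton]
          intro h
          rw [pair_eq_iff (by omega) (by omega)] at h
          omega), Finset.card_singleton]
      · intro p hp
        simp only [Finset.mem_insert, Finset.mem_singleton] at hp
        rcases hp with rfl | rfl
        · refine Finset.mem_filter.mpr ⟨mem_Pfam.mpr (Or.inr ⟨n - 1, by omega, ?_⟩), by simp; omega⟩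
          have : n - 1 + 1 = n := by omega
          rw [this]
        · exact Finset.mem_filter.mpr ⟨mem_Pfam.mpr (Or.inl rfl), by simp; omega⟩
    · apply le_trans ?_ (Finset.card_le_card
        (s := ({({x-1, x} : Finset ℕ), {x, x+1}} : Finset (Finset ℕ))) ?_)
      · rw [Finset.card_insert_of_notMem (by
          simp only [Finset.mem_singleton]
          intro h
          rw [pair_eq_iff (by omega) (by omega)] at h
          omega), Finset.card_singleton]
      · intro p hp
        simp only [Finset.mem_insert, Finset.mem_singleton] at hp
        rcases hp with rfl | rfl
        · refine Finset.mem_filter.mpr ⟨mem_Pfam.mpr (Or.inr ⟨x - 1, by omega, ?_⟩), by simp⟩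
          have : x - 1 + 1 = x := by omega
          rw [this]
        · exact Finset.mem_filter.mpr ⟨mem_Pfam.mpr (Or.inr ⟨x, by omega, rfl⟩), by
            simp⟩

lemma Pfam_conot_le {n x : ℕ} (hn : 2 ≤ n) (hx : x ∈ Ffin n) :
    ((Pfam n).filter (fun p => x ∉ p)).card ≤ n - 1 := by
  classical
  have hsplit := Finset.card_filter_add_card_filter_not
    (s := Pfam n) (p := fun p => x ∈ p)
  have h1 := Pfam_deg_ge hn hx
  rw [Pfam_card hn] at hsplit
  omega

lemma Pfam_conot_ge {n x : ℕ} (hn : 2 ≤ n) (hx : x ∈ Ffin n) :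
    n - 1 ≤ ((Pfam n).filter (fun p => x ∉ p)).card := by
  classical
  have hsplit := Finset.card_filter_add_card_filter_not
    (s := Pfam n) (p := fun p => x ∈ p)
  have h1 := Pfam_deg_le hn hx
  rw [Pfam_card hn] at hsplit
  omega





lemma filter_not_mem_powersetCard (j x : ℕ) (F : Finset ℕ) :
    ((F.powersetCard j).filter (fun T => x ∉ T)) = (F.erase x).powersetCard j := by
  ext T
  simp only [Finset.mem_filter, Finset.mem_powersetCard, Finset.subset_erase]
  tauto

/-- union of all `j`-element subsets of `F` over `j ∈ js`. -/
def bigFam (n : ℕ) (js : Finset ℕ) : Finset (Finset ℕ) :=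
  js.biUnion (fun j => (Ffin n).powersetCard j)

lemma bigFam_disj (n : ℕ) (js : Finset ℕ) :
    ∀ j ∈ js, ∀ j' ∈ js, j ≠ j' →
      Disjoint ((Ffin n).powersetCard j) ((Ffin n).powersetCard j') := by
  intro j _ j' _ hjj'
  rw [Finset.disjoint_left]
  intro T hT hT'
  rw [Finset.mem_powersetCard] at hT hT'
  exact hjj' (hT.2 ▸ hT'.2 ▸ rfl)

lemma bigFam_card (n : ℕ) (js : Finset ℕ) :
    (bigFam n js).card = ∑ j ∈ js, Nat.choose (n + 1) j := by
  rw [bigFam, Finset.card_biUnion (bigFam_disj n js)]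
  refine Finset.sum_congr rfl (fun j _ => ?_)
  rw [Finset.card_powersetCard]
  congr 1
  simp [Ffin]

lemma bigFam_filter_card (n x : ℕ) (js : Finset ℕ) (hx : x ∈ Ffin n) :
    ((bigFam n js).filter (fun T => x ∉ T)).card = ∑ j ∈ js, Nat.choose n j := by
  classical
  rw [bigFam, Finset.filter_biUnion]
  rw [Finset.card_biUnion]
  · refine Finset.sum_congr rfl (fun j _ => ?_)
    rw [filter_not_mem_powersetCard, Finset.card_powersetCard, Finset.card_erase_of_mem hx]
    congr 1
    simp [Ffin]
  · intro j hj j' hj' hjj'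
    have := bigFam_disj n js j hj j' hj' hjj'
    exact Finset.disjoint_filter_filter this

lemma bigFam_mem_props {n : ℕ} {js : Finset ℕ} {T : Finset ℕ} (hT : T ∈ bigFam n js) :
    T ⊆ Ffin n ∧ ∃ j ∈ js, T.card = j := by
  rw [bigFam, Finset.mem_biUnion] at hT
  obtain ⟨j, hj, hTj⟩ := hT
  rw [Finset.mem_powersetCard] at hTj
  exact ⟨hTj.1, j, hj, hTj.2⟩





def Bpath (n : ℕ) : Finset (Finset ℕ) :=
  (Finset.range (n - 1)).image (fun i => ({i, i + 1, i + 2} : Finset ℕ))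

def Bfam (n : ℕ) : Finset (Finset ℕ) :=
  insert {0, 1, n} (insert {0, n - 1, n} (insert {1, n - 1, n} (Bpath n)))

lemma mem_triple {x a b c : ℕ} : x ∈ ({a, b, c} : Finset ℕ) ↔ x = a ∨ x = b ∨ x = c := by
  simp

lemma triple_card {a b c : ℕ} (hab : a ≠ b) (hac : a ≠ c) (hbc : b ≠ c) :
    ({a, b, c} : Finset ℕ).card = 3 := by
  rw [Finset.card_insert_of_notMem (by simp [hab, hac]), Finset.card_pair hbc]

lemma triple_subset_Ffin {n a b c : ℕ} (ha : a ≤ n) (hb : b ≤ n) (hc : c ≤ n) :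
    ({a, b, c} : Finset ℕ) ⊆ Ffin n := by
  intro x hx
  rw [mem_triple] at hx
  simp only [Ffin, Finset.mem_range]
  omega

lemma mem_Bpath {n : ℕ} {T : Finset ℕ} :
    T ∈ Bpath n ↔ ∃ i, i < n - 1 ∧ T = {i, i + 1, i + 2} := by
  simp only [Bpath, Finset.mem_image, Finset.mem_range]
  constructor
  · rintro ⟨i, hi, rfl⟩; exact ⟨i, hi, rfl⟩
  · rintro ⟨i, hi, rfl⟩; exact ⟨i, hi, rfl⟩

lemma Bpath_card {n : ℕ} : (Bpath n).card = n - 1 := by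
  rw [Bpath, Finset.card_image_of_injOn, Finset.card_range]
  intro i hi j hj hij
  simp only at hij
  have h1 : i ∈ ({j, j+1, j+2} : Finset ℕ) := by rw [← hij]; simp
  have h2 : j ∈ ({i, i+1, i+2} : Finset ℕ) := by rw [hij]; simp
  rw [mem_triple] at h1 h2
  omega

lemma Bfam_card {n : ℕ} (hn : 6 ≤ n) : (Bfam n).card = n + 2 := by
  have hT3 : ({1, n-1, n} : Finset ℕ) ∉ Bpath n := by
    rw [mem_Bpath]
    rintro ⟨i, hi, heq⟩
    have h1 : (1 : ℕ) ∈ ({i, i+1, i+2} : Finset ℕ) := by rw [← heq]; simp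
    have h2 : n ∈ ({i, i+1, i+2} : Finset ℕ) := by rw [← heq]; simp
    rw [mem_triple] at h1 h2
    omega
  have hT2 : ({0, n-1, n} : Finset ℕ) ∉ insert ({1, n-1, n} : Finset ℕ) (Bpath n) := by
    simp only [Finset.mem_insert]
    rintro (heq | hmem)
    · have : (1:ℕ) ∈ ({0, n-1, n} : Finset ℕ) := by rw [heq]; simp
      rw [mem_triple] at this; omega
    · rw [mem_Bpath] at hmem
      obtain ⟨i, hi, heq⟩ := hmem
      have h1 : (0 : ℕ) ∈ ({i, i+1, i+2} : Finset ℕ) := by rw [← heq]; simp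
      have h2 : n ∈ ({i, i+1, i+2} : Finset ℕ) := by rw [← heq]; simp
      rw [mem_triple] at h1 h2
      omega
  have hT1 : ({0, 1, n} : Finset ℕ) ∉
      insert ({0, n-1, n} : Finset ℕ) (insert ({1, n-1, n} : Finset ℕ) (Bpath n)) := by
    simp only [Finset.mem_insert]
    rintro (heq | heq | hmem)
    · have : (1:ℕ) ∈ ({0, n-1, n} : Finset ℕ) := by rw [← heq]; simp
      rw [mem_triple] at this; omega
    · have : (0:ℕ) ∈ ({1, n-1, n} : Finset ℕ) := by rw [← heq]; simp
      rw [mem_triple] at this; omega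
    · rw [mem_Bpath] at hmem
      obtain ⟨i, hi, heq⟩ := hmem
      have h1 : (0 : ℕ) ∈ ({i, i+1, i+2} : Finset ℕ) := by rw [← heq]; simp
      have h2 : n ∈ ({i, i+1, i+2} : Finset ℕ) := by rw [← heq]; simp
      rw [mem_triple] at h1 h2
      omega
  rw [Bfam, Finset.card_insert_of_notMem hT1, Finset.card_insert_of_notMem hT2,
    Finset.card_insert_of_notMem hT3, Bpath_card]
  omega

lemma Bfam_mem_props {n : ℕ} {T : Finset ℕ} (hn : 6 ≤ n) (hT : T ∈ Bfam n) :
    T ⊆ Ffin n ∧ T.card = 3 := by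
  simp only [Bfam, Finset.mem_insert] at hT
  rcases hT with rfl | rfl | rfl | hT
  · exact ⟨triple_subset_Ffin (by omega) (by omega) (by omega),
      triple_card (by omega) (by omega) (by omega)⟩
  · exact ⟨triple_subset_Ffin (by omega) (by omega) (by omega),
      triple_card (by omega) (by omega) (by omega)⟩
  · exact ⟨triple_subset_Ffin (by omega) (by omega) (by omega),
      triple_card (by omega) (by omega) (by omega)⟩
  · rw [mem_Bpath] at hT
    obtain ⟨i, hi, rfl⟩ := hT
    exact ⟨triple_subset_Ffin (by omega) (by omega) (by omega),
      triple_card (by omega) (by omega) (by omega)⟩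













lemma triple_ne {a b c d e f : ℕ} (w : ℕ) (hw : w = a ∨ w = b ∨ w = c)
    (hw' : ¬(w = d ∨ w = e ∨ w = f)) : ({a, b, c} : Finset ℕ) ≠ {d, e, f} := by
  intro h
  have : w ∈ ({a, b, c} : Finset ℕ) := mem_triple.mpr hw
  rw [h, mem_triple] at this
  exact hw' this

lemma three_le_filter_card {F : Finset (Finset ℕ)} {p : Finset ℕ → Prop} [DecidablePred p]
    {A B C : Finset ℕ} (hA : A ∈ F.filter p) (hB : B ∈ F.filter p) (hC : C ∈ F.filter p)
    (hAB : A ≠ B) (hAC : A ≠ C) (hBC : B ≠ C) : 3 ≤ (F.filter p).card := by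
  have hsub : ({A, B, C} : Finset (Finset ℕ)) ⊆ F.filter p := by
    intro T hT
    simp only [Finset.mem_insert, Finset.mem_singleton] at hT
    rcases hT with rfl | rfl | rfl <;> assumption
  have hcard : ({A, B, C} : Finset (Finset ℕ)).card = 3 := by
    rw [Finset.card_insert_of_notMem (by simp [hAB, hAC]), Finset.card_pair hBC]
  calc 3 = ({A, B, C} : Finset (Finset ℕ)).card := hcard.symm
    _ ≤ _ := Finset.card_le_card hsub

lemma T1_mem_Bfam {n : ℕ} : ({0, 1, n} : Finset ℕ) ∈ Bfam n := by
  simp [Bfam]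

lemma T2_mem_Bfam {n : ℕ} : ({0, n - 1, n} : Finset ℕ) ∈ Bfam n := by
  simp [Bfam]

lemma T3_mem_Bfam {n : ℕ} : ({1, n - 1, n} : Finset ℕ) ∈ Bfam n := by
  simp [Bfam]

lemma Bpath_mem_Bfam {n i : ℕ} (hi : i < n - 1) :
    ({i, i + 1, i + 2} : Finset ℕ) ∈ Bfam n := by
  have : ({i, i+1, i+2} : Finset ℕ) ∈ Bpath n := mem_Bpath.mpr ⟨i, hi, rfl⟩
  simp [Bfam, this]

lemma Bfam_deg_ge {n x : ℕ} (hn : 6 ≤ n) (hx : x ∈ Ffin n) :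
    3 ≤ ((Bfam n).filter (fun T => x ∈ T)).card := by
  classical
  simp only [Ffin, Finset.mem_range] at hx
  by_cases h0 : x = 0
  · refine three_le_filter_card
      (A := ({0, 0+1, 0+2} : Finset ℕ)) (B := {0, 1, n}) (C := {0, n-1, n})
      (Finset.mem_filter.mpr ⟨Bpath_mem_Bfam (by omega), mem_triple.mpr (by omega)⟩)
      (Finset.mem_filter.mpr ⟨T1_mem_Bfam, mem_triple.mpr (by omega)⟩)
      (Finset.mem_filter.mpr ⟨T2_mem_Bfam, mem_triple.mpr (by omega)⟩)
      (triple_ne (0+2) (by omega) (by omega))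
      (triple_ne (0+1) (by omega) (by omega))
      (triple_ne 1 (by omega) (by omega))
  by_cases h1 : x = 1
  · refine three_le_filter_card
      (A := ({0, 0+1, 0+2} : Finset ℕ)) (B := ({1, 1+1, 1+2} : Finset ℕ)) (C := {0, 1, n})
      (Finset.mem_filter.mpr ⟨Bpath_mem_Bfam (by omega), mem_triple.mpr (by omega)⟩)
      (Finset.mem_filter.mpr ⟨Bpath_mem_Bfam (by omega), mem_triple.mpr (by omega)⟩)
      (Finset.mem_filter.mpr ⟨T1_mem_Bfam, mem_triple.mpr (by omega)⟩)
      (triple_ne 0 (by omega) (by omega))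
      (triple_ne (0+2) (by omega) (by omega))
      (triple_ne (1+2) (by omega) (by omega))
  by_cases hn1 : x = n - 1
  · refine three_le_filter_card
      (A := ({n-3, (n-3)+1, (n-3)+2} : Finset ℕ)) (B := ({n-2, (n-2)+1, (n-2)+2} : Finset ℕ))
      (C := {0, n-1, n})
      (Finset.mem_filter.mpr ⟨Bpath_mem_Bfam (by omega), mem_triple.mpr (by omega)⟩)
      (Finset.mem_filter.mpr ⟨Bpath_mem_Bfam (by omega), mem_triple.mpr (by omega)⟩)
      (Finset.mem_filter.mpr ⟨T2_mem_Bfam, mem_triple.mpr (by omega)⟩)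
      (triple_ne (n-3) (by omega) (by omega))
      (triple_ne ((n-3)+1) (by omega) (by omega))
      (triple_ne (n-2) (by omega) (by omega))
  by_cases hnn : x = n
  · refine three_le_filter_card
      (A := ({n-2, (n-2)+1, (n-2)+2} : Finset ℕ)) (B := ({0, 1, n} : Finset ℕ))
      (C := {0, n-1, n})
      (Finset.mem_filter.mpr ⟨Bpath_mem_Bfam (by omega), mem_triple.mpr (by omega)⟩)
      (Finset.mem_filter.mpr ⟨T1_mem_Bfam, mem_triple.mpr (by omega)⟩)
      (Finset.mem_filter.mpr ⟨T2_mem_Bfam, mem_triple.mpr (by omega)⟩)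
      (triple_ne (n-2) (by omega) (by omega))
      (triple_ne (n-2) (by omega) (by omega))
      (triple_ne 1 (by omega) (by omega))
  · refine three_le_filter_card
      (A := ({x-2, (x-2)+1, (x-2)+2} : Finset ℕ)) (B := ({x-1, (x-1)+1, (x-1)+2} : Finset ℕ))
      (C := ({x, x+1, x+2} : Finset ℕ))
      (Finset.mem_filter.mpr ⟨Bpath_mem_Bfam (by omega), mem_triple.mpr (by omega)⟩)
      (Finset.mem_filter.mpr ⟨Bpath_mem_Bfam (by omega), mem_triple.mpr (by omega)⟩)
      (Finset.mem_filter.mpr ⟨Bpath_mem_Bfam (by omega), mem_triple.mpr (by omega)⟩)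
      (triple_ne (x-2) (by omega) (by omega))
      (triple_ne (x-2) (by omega) (by omega))
      (triple_ne (x-1) (by omega) (by omega))


end AvoidJ
namespace AvoidJ

/-! ### the odd design -/

lemma sum_image_js (m : ℕ) (s a : ℕ) :
    ∑ j ∈ (Finset.range s).image (fun t => 2 * t + a), Nat.choose m j
      = ∑ t ∈ Finset.range s, Nat.choose m (2 * t + a) := by
  rw [Finset.sum_image]
  intro t _ t' _ h
  simp only at h
  omega

def Lodd (n s : ℕ) : Finset (Finset ℕ) :=
  Pfam n ∪ bigFam n ((Finset.range s).image (fun t => 2 * t + 3))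

lemma Lodd_disj (n s : ℕ) (hn : 2 ≤ n) :
    Disjoint (Pfam n) (bigFam n ((Finset.range s).image (fun t => 2 * t + 3))) := by
  rw [Finset.disjoint_left]
  intro T hTP hTb
  have h2 := (Pfam_mem_props hn hTP).2
  obtain ⟨-, j, hj, hcard⟩ := bigFam_mem_props hTb
  simp only [Finset.mem_image, Finset.mem_range] at hj
  obtain ⟨t, -, rfl⟩ := hj
  omega

lemma Lodd_mem_props {n s r : ℕ} (hn : 2 ≤ n) (hr : 2 ≤ r)
    (hjs : ∀ t < s, 2 * t + 3 ≤ r) {T : Finset ℕ} (hT : T ∈ Lodd n s) :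
    T ⊆ Ffin n ∧ T.Nonempty ∧ T.card ≤ r := by
  rcases Finset.mem_union.mp hT with h | h
  · obtain ⟨h1, h2⟩ := Pfam_mem_props hn h
    exact ⟨h1, Finset.card_pos.mp (by omega), by omega⟩
  · obtain ⟨h1, j, hj, h2⟩ := bigFam_mem_props h
    simp only [Finset.mem_image, Finset.mem_range] at hj
    obtain ⟨t, ht, rfl⟩ := hj
    exact ⟨h1, Finset.card_pos.mp (by omega), by have := hjs t ht; omega⟩

lemma Lodd_card (n s : ℕ) (hn : 2 ≤ n) :
    (Lodd n s).card = ∑ i ∈ Finset.range (2 * s + 2), Nat.choose n i := by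
  rw [Lodd, Finset.card_union_of_disjoint (Lodd_disj n s hn), Pfam_card hn,
    bigFam_card, sum_image_js]
  have h1 : (2 : ℕ) * s + 2 = 2 * (s + 1) := by ring
  rw [h1, sum_pair_odd n (s + 1), Finset.sum_range_succ']
  have hc : ∑ k ∈ Finset.range s, Nat.choose (n+1) (2*(k+1)+1)
      = ∑ k ∈ Finset.range s, Nat.choose (n+1) (2*k+3) :=
    Finset.sum_congr rfl (fun k _ => by rw [show 2*(k+1)+1 = 2*k+3 from by ring])
  rw [hc]
  simp only [Nat.mul_zero, Nat.zero_add, Nat.choose_one_right]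
  omega

lemma Lodd_conot (n s x : ℕ) (hn : 2 ≤ n) (hx : x ∈ Ffin n) :
    ((Lodd n s).filter (fun T => x ∉ T)).card + 1
      ≤ ∑ i ∈ Finset.range (2 * s + 2), Nat.choose (n - 1) i := by
  classical
  rw [Lodd, Finset.filter_union, Finset.card_union_of_disjoint
    (Finset.disjoint_filter_filter (Lodd_disj n s hn))]
  rw [bigFam_filter_card n x _ hx, sum_image_js]
  have hP := Pfam_conot_le hn hx
  have h1 : (2 : ℕ) * s + 2 = 2 * (s + 1) := by ring
  have hsub : n - 1 + 1 = n := by omega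
  rw [h1, sum_pair_odd (n - 1) (s + 1), hsub, Finset.sum_range_succ']
  have hc : ∑ k ∈ Finset.range s, Nat.choose n (2*(k+1)+1)
      = ∑ k ∈ Finset.range s, Nat.choose n (2*k+3) :=
    Finset.sum_congr rfl (fun k _ => by rw [show 2*(k+1)+1 = 2*k+3 from by ring])
  rw [hc]
  simp only [Nat.mul_zero, Nat.zero_add, Nat.choose_one_right]
  omega

end AvoidJ
namespace AvoidJ

/-! ### the even design -/

def pairsNot (n : ℕ) : Finset (Finset ℕ) := (Ffin n).powersetCard 2 \ Pfam n

lemma Pfam_subset_powerset {n : ℕ} (hn : 2 ≤ n) :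
    Pfam n ⊆ (Ffin n).powersetCard 2 := by
  intro p hp
  obtain ⟨h1, h2⟩ := Pfam_mem_props hn hp
  exact Finset.mem_powersetCard.mpr ⟨h1, h2⟩

lemma pairsNot_card {n : ℕ} (hn : 2 ≤ n) :
    (pairsNot n).card = Nat.choose (n + 1) 2 - (n + 1) := by
  rw [pairsNot, Finset.card_sdiff_of_subset (Pfam_subset_powerset hn), Finset.card_powersetCard,
    Pfam_card hn]
  congr 2
  simp [Ffin]

lemma filter_sdiff_eq (A B : Finset (Finset ℕ)) (p : Finset ℕ → Prop) [DecidablePred p] :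
    (A \ B).filter p = A.filter p \ B.filter p := by
  ext T
  simp only [Finset.mem_filter, Finset.mem_sdiff]
  tauto

lemma pairsNot_conot {n x : ℕ} (hn : 2 ≤ n) (hx : x ∈ Ffin n) :
    ((pairsNot n).filter (fun T => x ∉ T)).card + (n - 1) ≤ Nat.choose n 2 := by
  classical
  rw [pairsNot, filter_sdiff_eq, Finset.card_sdiff_of_subset
    (Finset.filter_subset_filter _ (Pfam_subset_powerset hn))]
  rw [filter_not_mem_powersetCard, Finset.card_powersetCard, Finset.card_erase_of_mem hx,
    card_Ffin]
  have h1 := Pfam_conot_ge hn hx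
  have h2 : Nat.choose (n + 1 - 1) 2 = Nat.choose n 2 := by congr 1
  rw [h2]
  have h3 : ((Pfam n).filter (fun p => x ∉ p)).card
      ≤ Nat.choose n 2 := by
    apply le_trans (Finset.card_le_card (Finset.filter_subset_filter _
      (Pfam_subset_powerset hn)))
    rw [filter_not_mem_powersetCard, Finset.card_powersetCard,
      Finset.card_erase_of_mem hx, card_Ffin, h2]
  omega

lemma Bfam_conot {n x : ℕ} (hn : 6 ≤ n) (hx : x ∈ Ffin n) :
    ((Bfam n).filter (fun T => x ∉ T)).card ≤ n - 1 := by
  classical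
  have hsplit := Finset.card_filter_add_card_filter_not
    (s := Bfam n) (p := fun T => x ∈ T)
  have h1 := Bfam_deg_ge hn hx
  rw [Bfam_card hn] at hsplit
  omega

def Leven (n s : ℕ) : Finset (Finset ℕ) :=
  (pairsNot n ∪ Bfam n) ∪ bigFam n ((Finset.range (s - 1)).image (fun t => 2 * t + 4))

lemma pairsNot_mem_props {n : ℕ} {T : Finset ℕ} (hT : T ∈ pairsNot n) :
    T ⊆ Ffin n ∧ T.card = 2 := by
  rw [pairsNot, Finset.mem_sdiff, Finset.mem_powersetCard] at hT
  exact hT.1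

lemma Leven_disj1 (n : ℕ) (hn : 6 ≤ n) : Disjoint (pairsNot n) (Bfam n) := by
  rw [Finset.disjoint_left]
  intro T h1 h2
  have := (pairsNot_mem_props h1).2
  have := (Bfam_mem_props hn h2).2
  omega

lemma Leven_disj2 (n s : ℕ) (hn : 6 ≤ n) :
    Disjoint (pairsNot n ∪ Bfam n)
      (bigFam n ((Finset.range (s - 1)).image (fun t => 2 * t + 4))) := by
  rw [Finset.disjoint_left]
  intro T h1 h2
  obtain ⟨-, j, hj, hcard⟩ := bigFam_mem_props h2
  simp only [Finset.mem_image, Finset.mem_range] at hj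
  obtain ⟨t, -, rfl⟩ := hj
  rcases Finset.mem_union.mp h1 with h | h
  · have := (pairsNot_mem_props h).2; omega
  · have := (Bfam_mem_props hn h).2; omega

lemma Leven_mem_props {n s r : ℕ} (hn : 6 ≤ n) (hr : 4 ≤ r)
    (hjs : ∀ t < s - 1, 2 * t + 4 ≤ r) {T : Finset ℕ} (hT : T ∈ Leven n s) :
    T ⊆ Ffin n ∧ T.Nonempty ∧ T.card ≤ r := by
  rcases Finset.mem_union.mp hT with h | h
  · rcases Finset.mem_union.mp h with h' | h'
    · obtain ⟨h1, h2⟩ := pairsNot_mem_props h'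
      exact ⟨h1, Finset.card_pos.mp (by omega), by omega⟩
    · obtain ⟨h1, h2⟩ := Bfam_mem_props hn h'
      exact ⟨h1, Finset.card_pos.mp (by omega), by omega⟩
  · obtain ⟨h1, j, hj, h2⟩ := bigFam_mem_props h
    simp only [Finset.mem_image, Finset.mem_range] at hj
    obtain ⟨t, ht, rfl⟩ := hj
    exact ⟨h1, Finset.card_pos.mp (by omega), by have := hjs t ht; omega⟩

lemma choose_two_ge (n : ℕ) (hn : 2 ≤ n) : n + 1 ≤ Nat.choose (n + 1) 2 := by
  have h1 : Nat.choose (n+1) 2 = Nat.choose n 1 + Nat.choose n 2 := Nat.choose_succ_succ n 1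
  have h2 : Nat.choose n 1 = n := Nat.choose_one_right n
  have h3 : 0 < Nat.choose n 2 := Nat.choose_pos hn
  omega

lemma Leven_card (n s : ℕ) (hn : 6 ≤ n) (hs : 2 ≤ s) :
    (Leven n s).card = ∑ i ∈ Finset.range (2 * s + 1), Nat.choose n i := by
  rw [Leven, Finset.card_union_of_disjoint (Leven_disj2 n s hn),
    Finset.card_union_of_disjoint (Leven_disj1 n hn), pairsNot_card (by omega),
    Bfam_card hn, bigFam_card, sum_image_js]
  rw [sum_pair_even n s]
  have hs1 : s = (s - 1) + 1 := by omega
  rw [hs1, Finset.sum_range_succ']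
  simp only [Nat.add_sub_cancel]
  have hc : ∑ k ∈ Finset.range (s-1), Nat.choose (n+1) (2*(k+1)+2)
      = ∑ k ∈ Finset.range (s-1), Nat.choose (n+1) (2*k+4) :=
    Finset.sum_congr rfl (fun k _ => by rw [show 2*(k+1)+2 = 2*k+4 from by ring])
  rw [hc]
  simp only [Nat.mul_zero, Nat.zero_add]
  have := choose_two_ge n (by omega)
  omega

lemma Leven_conot (n s x : ℕ) (hn : 6 ≤ n) (hs : 2 ≤ s) (hx : x ∈ Ffin n) :
    ((Leven n s).filter (fun T => x ∉ T)).card + 1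
      ≤ ∑ i ∈ Finset.range (2 * s + 1), Nat.choose (n - 1) i := by
  classical
  rw [Leven, Finset.filter_union, Finset.card_union_of_disjoint
    (Finset.disjoint_filter_filter (Leven_disj2 n s hn)),
    Finset.filter_union, Finset.card_union_of_disjoint
    (Finset.disjoint_filter_filter (Leven_disj1 n hn))]
  rw [bigFam_filter_card n x _ hx, sum_image_js]
  have hP := pairsNot_conot (n := n) (x := x) (by omega) hx
  have hBco := Bfam_conot hn hx
  have hsub : n - 1 + 1 = n := by omega
  rw [sum_pair_even (n - 1) s, hsub]
  have hs1 : s = (s - 1) + 1 := by omega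
  rw [hs1, Finset.sum_range_succ']
  simp only [Nat.add_sub_cancel]
  have hc : ∑ k ∈ Finset.range (s-1), Nat.choose n (2*(k+1)+2)
      = ∑ k ∈ Finset.range (s-1), Nat.choose n (2*k+4) :=
    Finset.sum_congr rfl (fun k _ => by rw [show 2*(k+1)+2 = 2*k+4 from by ring])
  rw [hc]
  simp only [Nat.mul_zero, Nat.zero_add]
  omega

end AvoidJ
namespace AvoidJ

theorem main_per_n (r n : ℕ) (hr : 3 ≤ r) (hn : r + 6 ≤ n) :
    ∃ k : ℕ, (∑ i ∈ Finset.range (r + 1), Nat.choose (n - 1) i) < k ∧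
      ∃ Δ : Finset ℕ → ℕ, IsColouring r k Δ ∧
        ∀ m' ∈ Fdelta r Δ,
          ¬((∑ i ∈ Finset.range (r + 1), Nat.choose (n - 1) i) < m' ∧
            m' ≤ ∑ i ∈ Finset.range (r + 1), Nat.choose n i) := by
  rcases Nat.even_or_odd r with ⟨s, hs⟩ | ⟨s, hs⟩
  · have hs2 : 2 ≤ s := by omega
    have hr1 : r + 1 = 2 * s + 1 := by omega
    refine design_works r n hr (Leven n s) ?_ ?_ ?_
    · intro T hT
      exact Leven_mem_props (by omega) (by omega) (fun t ht => by omega) hT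
    · rw [hr1]
      exact le_of_eq (Leven_card n s (by omega) hs2).symm
    · intro x hx
      rw [hr1]
      exact Leven_conot n s x (by omega) hs2 hx
  · have hs1' : 1 ≤ s := by omega
    have hr1 : r + 1 = 2 * s + 2 := by omega
    refine design_works r n hr (Lodd n s) ?_ ?_ ?_
    · intro T hT
      exact Lodd_mem_props (by omega) (by omega) (fun t ht => by omega) hT
    · rw [hr1]
      exact le_of_eq (Lodd_card n s (by omega)).symm
    · intro x hx
      rw [hr1]
      exact Lodd_conot n s x (by omega) hx

end AvoidJ

/-- **Theorem 4.** -/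
theorem Fdelta_avoids_J (r : ℕ) (hr : 3 ≤ r) :
    {n : ℕ | ∃ k : ℕ, (∑ i ∈ Finset.range (r + 1), Nat.choose (n - 1) i) < k ∧
      ∃ Δ : Finset ℕ → ℕ, IsColouring r k Δ ∧
        ∀ m' ∈ Fdelta r Δ,
          ¬((∑ i ∈ Finset.range (r + 1), Nat.choose (n - 1) i) < m' ∧
            m' ≤ ∑ i ∈ Finset.range (r + 1), Nat.choose n i)}.Infinite := by
  have hsub : Set.Ici (r + 6) ⊆ {n : ℕ | ∃ k : ℕ,
      (∑ i ∈ Finset.range (r + 1), Nat.choose (n - 1) i) < k ∧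
      ∃ Δ : Finset ℕ → ℕ, IsColouring r k Δ ∧
        ∀ m' ∈ Fdelta r Δ,
          ¬((∑ i ∈ Finset.range (r + 1), Nat.choose (n - 1) i) < m' ∧
            m' ≤ ∑ i ∈ Finset.range (r + 1), Nat.choose n i)} := by
    intro n hn
    exact AvoidJ.main_per_n r n hr hn
  exact (Set.Ici_infinite _).mono hsub
end

section
/- Let r ≥ 2 and k ≥ 1 be integers, let Δ: ℕ^(r) ↠ [k] be a surjective colouring, and let m ∈ F_Δ with m ≥ 2. Then there exists a natural number a ≥ 1 such that Σ_{i=0}^{r} C(a,i) ≥ m and there exists m' ∈ F_Δ with m - min( Σ_{i=0}^{r-1} C(a-1,i), r(m-1)/a ) ≤ m' < m. -/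
open Finset

/-- Infinite Ramsey theorem: any finite colouring of `n`-subsets of an infinite set `Y ⊆ ℕ`
has an infinite homogeneous subset. -/
theorem inf_ramsey_s7 {ι : Type} [Finite ι] (n : ℕ) (C : Finset ℕ → ι) (Y : Set ℕ)
    (hY : Y.Infinite) :
    ∃ Z : Set ℕ, Z ⊆ Y ∧ Z.Infinite ∧ ∀ f₁ f₂ : Finset ℕ, ↑f₁ ⊆ Z → ↑f₂ ⊆ Z →
      f₁.card = n → f₂.card = n → C f₁ = C f₂ := by
  induction n generalizing C Y with
  | zero =>
    refine ⟨Y, subset_rfl, hY, ?_⟩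
    intro f₁ f₂ _ _ h₁ h₂
    rw [Finset.card_eq_zero] at h₁ h₂
    rw [h₁, h₂]
  | succ n ih =>
    have step : ∀ S : Set ℕ, S.Infinite → ∃ Z : Set ℕ, Z ⊆ S \ {sInf S} ∧ Z.Infinite ∧
        ∀ f₁ f₂ : Finset ℕ, ↑f₁ ⊆ Z → ↑f₂ ⊆ Z → f₁.card = n → f₂.card = n →
          C (insert (sInf S) f₁) = C (insert (sInf S) f₂) := by
      intro S hS
      obtain ⟨Z, h1, h2, h3⟩ := ih (fun f => C (insert (sInf S) f)) (S \ {sInf S})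
        (hS.diff (Set.finite_singleton _))
      exact ⟨Z, h1, h2, h3⟩
    choose next hn1 hn2 hn3 using step
    let F : ℕ → {S : Set ℕ // S.Infinite} := fun j =>
      Nat.rec ⟨Y, hY⟩ (fun _ p => ⟨next p.1 p.2, hn2 p.1 p.2⟩) j
    set S : ℕ → Set ℕ := fun j => (F j).1 with hSdef
    have hSinf : ∀ j, (S j).Infinite := fun j => (F j).2
    set y : ℕ → ℕ := fun j => sInf (S j) with hydef
    have hstep : ∀ j, S (j+1) = next (S j) (hSinf j) := fun j => rfl
    have hsub : ∀ j, S (j+1) ⊆ S j \ {y j} := by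
      intro j; rw [hstep j]; exact hn1 _ _
    have hyS : ∀ j, y j ∈ S j := fun j => Nat.sInf_mem (hSinf j).nonempty
    have hchain : ∀ i j, i ≤ j → S j ⊆ S i := by
      intro i j hij
      induction j with
      | zero => simp_all
      | succ j ihj =>
        rcases Nat.lt_or_ge i (j+1) with h | h
        · exact ((hsub j).trans Set.diff_subset).trans (ihj (Nat.lt_succ_iff.mp h))
        · have : i = j + 1 := le_antisymm hij h
          subst this; exact subset_rfl
    have hS0 : S 0 = Y := rfl
    have hSY : ∀ j, S j ⊆ Y := fun j => hS0 ▸ hchain 0 j (Nat.zero_le _)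
    have hmono : StrictMono y := by
      apply strictMono_nat_of_lt_succ
      intro j
      have h1 : y (j+1) ∈ S j \ {y j} := hsub j (hyS (j+1))
      have h2 : y j ≤ y (j+1) := Nat.sInf_le h1.1
      exact lt_of_le_of_ne h2 fun h => h1.2 (by simp [← h])
    have hyin : ∀ i j, i < j → y j ∈ S (i+1) := fun i j hij => hchain (i+1) j hij (hyS j)
    have hext : ∀ j, ∃ t : Finset ℕ, ↑t ⊆ S (j+1) ∧ t.card = n :=
      fun j => (hSinf (j+1)).exists_subset_card_eq n
    choose ext hext1 hext2 using hext
    set c : ℕ → ι := fun j => C (insert (y j) (ext j)) with hcdef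
    have hom : ∀ j (f : Finset ℕ), ↑f ⊆ S (j+1) → f.card = n → C (insert (y j) f) = c j := by
      intro j f hf hfc
      exact hn3 (S j) (hSinf j) f (ext j) (by rw [← hstep j]; exact hf)
        (by rw [← hstep j]; exact hext1 j) hfc (hext2 j)
    obtain ⟨v, hv⟩ := Finite.exists_infinite_fiber c
    have hI : (c ⁻¹' {v}).Infinite := Set.infinite_coe_iff.mp hv
    refine ⟨y '' (c ⁻¹' {v}), ?_, hI.image (hmono.injective.injOn), ?_⟩
    · rintro x ⟨j, _, rfl⟩; exact hSY j (hyS j)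
    · have key : ∀ f : Finset ℕ, ↑f ⊆ y '' (c ⁻¹' {v}) → f.card = n + 1 → C f = v := by
        intro f hf hfc
        obtain ⟨J, hJI, hJf⟩ := Finset.subset_set_image_iff.mp hf
        have hJcard : J.card = n + 1 := by
          rw [← hfc, ← hJf]; exact (Finset.card_image_of_injective _ hmono.injective).symm
        have hJne : J.Nonempty := Finset.card_pos.mp (by omega)
        set j₀ := J.min' hJne with hj0
        have hj₀J : j₀ ∈ J := J.min'_mem hJne
        set f' : Finset ℕ := (J.erase j₀).image y with hf'
        have hf'c : f'.card = n := by
          rw [hf', Finset.card_image_of_injective _ hmono.injective,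
            Finset.card_erase_of_mem hj₀J, hJcard]
          omega
        have hf'sub : ↑f' ⊆ S (j₀ + 1) := by
          intro x hx
          simp only [hf', Finset.coe_image, Set.mem_image, Finset.mem_coe,
            Finset.mem_erase] at hx
          obtain ⟨l, ⟨hlne, hlJ⟩, rfl⟩ := hx
          exact hyin j₀ l (lt_of_le_of_ne (J.min'_le l hlJ) (Ne.symm hlne))
        have hfeq : f = insert (y j₀) f' := by
          rw [← hJf, hf']
          conv_lhs => rw [← Finset.insert_erase hj₀J]
          rw [Finset.image_insert]
        rw [hfeq, hom j₀ f' hf'sub hf'c]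
        exact hJI hj₀J
      intro f₁ f₂ h₁ h₂ hc₁ hc₂
      rw [key f₁ h₁ hc₁, key f₂ h₂ hc₂]

/-- Iterated canonicalization: shrink an infinite set so that for each pattern `S` in a
given list, the colour of `S ∪ f` does not depend on the choice of `f` inside the set. -/
theorem canon_fold (r k : ℕ) (Δ : Finset ℕ → ℕ)
    (hcol : ∀ e : Finset ℕ, e.card = r → Δ e ∈ Finset.Icc 1 k) :
    ∀ (l : List (Finset ℕ)) (Y : Set ℕ), Y.Infinite →
    ∃ Z : Set ℕ, Z ⊆ Y ∧ Z.Infinite ∧ ∀ S ∈ l, S.card ≤ r →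
      ∀ f₁ f₂ : Finset ℕ, ↑f₁ ⊆ Z → ↑f₂ ⊆ Z → Disjoint S f₁ → Disjoint S f₂ →
      f₁.card = r - S.card → f₂.card = r - S.card → Δ (S ∪ f₁) = Δ (S ∪ f₂) := by
  intro l
  induction l with
  | nil => intro Y hY; exact ⟨Y, subset_rfl, hY, by simp⟩
  | cons S l ih =>
    intro Y hY
    obtain ⟨Z₁, hZ₁Y, hZ₁inf, hZ₁⟩ := ih Y hY
    set C : Finset ℕ → Fin (k+1) := fun f =>
      ⟨min (Δ (S ∪ f)) k, Nat.lt_succ_of_le (min_le_right _ _)⟩ with hCdef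
    obtain ⟨Z, hZZ₁, hZinf, hZ⟩ := inf_ramsey_s7 (r - S.card) C Z₁ hZ₁inf
    refine ⟨Z, hZZ₁.trans hZ₁Y, hZinf, ?_⟩
    intro T hT hTr f₁ f₂ hf₁ hf₂ hd₁ hd₂ hc₁ hc₂
    rcases List.mem_cons.mp hT with rfl | hT
    · have hcard : ∀ (f : Finset ℕ), Disjoint T f → f.card = r - T.card →
          (T ∪ f).card = r := by
        intro f hd hc
        rw [Finset.card_union_of_disjoint hd, hc]; omega
      have h1 := hcol _ (hcard f₁ hd₁ hc₁)
      have h2 := hcol _ (hcard f₂ hd₂ hc₂)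
      simp only [Finset.mem_Icc] at h1 h2
      have := hZ f₁ f₂ hf₁ hf₂ hc₁ hc₂
      have hval : min (Δ (T ∪ f₁)) k = min (Δ (T ∪ f₂)) k := congrArg Fin.val this
      rw [min_eq_left h1.2, min_eq_left h2.2] at hval
      exact hval
    · exact hZ₁ T hT hTr f₁ f₂ (hf₁.trans hZZ₁) (hf₂.trans hZZ₁) hd₁ hd₂ hc₁ hc₂

/-- For `e ⊆ B ∪ Y` with `B ⊆ A` and `A` disjoint from `Y`, traces on `A` and `B` agree. -/
lemma trace_eq {A B : Finset ℕ} {Y : Set ℕ} (hBA : B ⊆ A) (hdisj : Disjoint (↑A : Set ℕ) Y)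
    {e : Finset ℕ} (he : ↑e ⊆ ↑B ∪ Y) : e ∩ A = e ∩ B := by
  ext x
  simp only [Finset.mem_inter]
  constructor
  · rintro ⟨hxe, hxA⟩
    refine ⟨hxe, ?_⟩
    rcases he hxe with hB | hY
    · exact hB
    · exact absurd hY (Set.disjoint_left.mp hdisj (by exact_mod_cast hxA))
  · rintro ⟨hxe, hxB⟩
    exact ⟨hxe, hBA hxB⟩

/-- Counting subsets of size at most `t`. -/
lemma pw_card (A : Finset ℕ) (t : ℕ) :
    (A.powerset.filter (fun S => S.card ≤ t)).card ≤
      ∑ i ∈ Finset.range (t+1), (A.card).choose i := by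
  classical
  have hsub : (A.powerset.filter (fun S => S.card ≤ t)) ⊆
      (Finset.range (t+1)).biUnion (fun i => A.powersetCard i) := by
    intro T hT
    simp only [Finset.mem_filter, Finset.mem_powerset] at hT
    simp only [Finset.mem_biUnion, Finset.mem_range, Finset.mem_powersetCard]
    exact ⟨T.card, by omega, hT.1, rfl⟩
  calc (A.powerset.filter (fun S => S.card ≤ t)).card
      ≤ ((Finset.range (t+1)).biUnion (fun i => A.powersetCard i)).card :=
        Finset.card_le_card hsub
    _ ≤ ∑ i ∈ Finset.range (t+1), (A.powersetCard i).card := Finset.card_biUnion_le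
    _ = ∑ i ∈ Finset.range (t+1), (A.card).choose i := by
        simp [Finset.card_powersetCard]

/-- The canonical-colour description of `coloursOn` for `B ∪ Y` with `B ⊆ A`. -/
lemma colours_on_eq (r : ℕ) (Δ : Finset ℕ → ℕ) (A B : Finset ℕ) (Y : Set ℕ)
    (hBA : B ⊆ A) (hdisj : Disjoint (↑A : Set ℕ) Y)
    (hcanon : ∀ e₁ e₂ : Finset ℕ, e₁.card = r → e₂.card = r → ↑e₁ ⊆ ↑A ∪ Y → ↑e₂ ⊆ ↑A ∪ Y →
      e₁ ∩ A = e₂ ∩ A → Δ e₁ = Δ e₂)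
    (ext : ℕ → Finset ℕ) (hext1 : ∀ n, ↑(ext n) ⊆ Y) (hext2 : ∀ n, (ext n).card = n) :
    coloursOn r Δ (↑B ∪ Y) =
      ↑((B.powerset.filter (fun S => S.card ≤ r)).image (fun S => Δ (S ∪ ext (r - S.card)))) := by
  classical
  have hrep : ∀ S : Finset ℕ, S ⊆ A → S.card ≤ r →
      Disjoint S (ext (r - S.card)) ∧ (S ∪ ext (r - S.card)).card = r ∧
      (S ∪ ext (r - S.card)) ∩ A = S := by
    intro S hSA hSr
    have hd : Disjoint S (ext (r - S.card)) := by
      rw [Finset.disjoint_left]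
      intro x hxS hxe
      exact Set.disjoint_left.mp hdisj (by exact_mod_cast hSA hxS) (hext1 _ hxe)
    refine ⟨hd, ?_, ?_⟩
    · rw [Finset.card_union_of_disjoint hd, hext2]; omega
    · rw [Finset.union_inter_distrib_right]
      have h2 : ext (r - S.card) ∩ A = ∅ := by
        rw [Finset.eq_empty_iff_forall_notMem]
        intro x hx
        rw [Finset.mem_inter] at hx
        exact Set.disjoint_left.mp hdisj (by exact_mod_cast hx.2) (hext1 _ hx.1)
      rw [h2, Finset.inter_eq_left.mpr hSA, Finset.union_empty]
  ext c
  simp only [coloursOn, Set.mem_image, Set.mem_setOf_eq, Finset.coe_image, Finset.mem_coe,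
    Finset.mem_image, Finset.mem_filter, Finset.mem_powerset]
  constructor
  · rintro ⟨e, ⟨hesub, hecard⟩, rfl⟩
    refine ⟨e ∩ B, ⟨Finset.inter_subset_right, ?_⟩, ?_⟩
    · calc (e ∩ B).card ≤ e.card := Finset.card_le_card Finset.inter_subset_left
        _ = r := hecard
    · have hSA : e ∩ B ⊆ A := Finset.inter_subset_right.trans hBA
      have hSr : (e ∩ B).card ≤ r := by
        calc (e ∩ B).card ≤ e.card := Finset.card_le_card Finset.inter_subset_left
          _ = r := hecard
      obtain ⟨hd, hcard, htr⟩ := hrep (e ∩ B) hSA hSr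
      refine hcanon _ e hcard hecard ?_ ?_ ?_
      · intro x hx
        rcases Finset.mem_union.mp hx with h | h
        · exact Or.inl (by exact_mod_cast hSA (by exact_mod_cast h))
        · exact Or.inr (hext1 _ h)
      · exact hesub.trans (Set.union_subset_union_left Y (by exact_mod_cast hBA))
      · rw [htr, trace_eq hBA hdisj hesub]
  · rintro ⟨T, ⟨hTB, hTr⟩, rfl⟩
    obtain ⟨hd, hcard, htr⟩ := hrep T (hTB.trans hBA) hTr
    refine ⟨T ∪ ext (r - T.card), ⟨?_, hcard⟩, rfl⟩
    intro x hx
    rcases Finset.mem_union.mp hx with h | h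
    · exact Or.inl (by exact_mod_cast hTB h)
    · exact Or.inr (hext1 _ h)

/-- From any infinite `X` with `γ(X) = m ≥ 1` we can extract a canonical pair `(A, Y)`. -/
lemma good_exists (r k : ℕ) (Δ : Finset ℕ → ℕ)
    (hcol : ∀ e : Finset ℕ, e.card = r → Δ e ∈ Finset.Icc 1 k)
    (m : ℕ) (hm1 : 1 ≤ m) (X : Set ℕ) (hX : X.Infinite) (hgX : gamma r Δ X = m) :
    ∃ A : Finset ℕ, ∃ Y : Set ℕ, Y.Infinite ∧ Disjoint (↑A : Set ℕ) Y ∧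
      (∀ e₁ e₂ : Finset ℕ, e₁.card = r → e₂.card = r → ↑e₁ ⊆ ↑A ∪ Y → ↑e₂ ⊆ ↑A ∪ Y →
        e₁ ∩ A = e₂ ∩ A → Δ e₁ = Δ e₂) ∧ gamma r Δ (↑A ∪ Y) = m := by
  classical
  have hfin : (coloursOn r Δ X).Finite := by
    by_contra h
    rw [gamma, Set.Infinite.ncard h] at hgX
    omega
  have hw : ∀ c : ℕ, ∃ e : Finset ℕ, c ∈ coloursOn r Δ X →
      (↑e ⊆ X ∧ e.card = r ∧ Δ e = c) := by
    intro c
    by_cases hc : c ∈ coloursOn r Δ X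
    · obtain ⟨e, ⟨h1, h2⟩, h3⟩ := hc
      exact ⟨e, fun _ => ⟨h1, h2, h3⟩⟩
    · exact ⟨∅, fun h => absurd h hc⟩
  choose ew hew using hw
  set W : Finset ℕ := hfin.toFinset.biUnion ew with hWdef
  have hWX : ↑W ⊆ X := by
    intro x hx
    simp only [hWdef, Finset.coe_biUnion, Set.mem_iUnion, Finset.mem_coe] at hx
    obtain ⟨c, hc, hxc⟩ := hx
    exact (hew c (hfin.mem_toFinset.mp hc)).1 hxc
  have hY0 : (X \ ↑W).Infinite := hX.diff W.finite_toSet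
  obtain ⟨Z, hZY0, hZinf, hZ⟩ := canon_fold r k Δ hcol W.powerset.toList (X \ ↑W) hY0
  have hZX : Z ⊆ X := hZY0.trans Set.diff_subset
  have hdisj : Disjoint (↑W : Set ℕ) Z := by
    rw [Set.disjoint_left]
    intro x hxW hxZ
    exact (hZY0 hxZ).2 hxW
  refine ⟨W, Z, hZinf, hdisj, ?_, ?_⟩
  · intro e₁ e₂ hc₁ hc₂ hs₁ hs₂ htr
    set S : Finset ℕ := e₁ ∩ W with hS
    have hSr : S.card ≤ r := by
      calc S.card ≤ e₁.card := Finset.card_le_card Finset.inter_subset_left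
        _ = r := hc₁
    have key : ∀ e : Finset ℕ, e.card = r → ↑e ⊆ ↑W ∪ Z → e ∩ W = S →
        ↑(e \ W) ⊆ Z ∧ Disjoint S (e \ W) ∧ (e \ W).card = r - S.card ∧
        e = S ∪ (e \ W) := by
      intro e hc hs htr'
      have h1 : ↑(e \ W) ⊆ Z := by
        intro x hx
        rw [Finset.coe_sdiff, Set.mem_diff] at hx
        rcases hs hx.1 with h | h
        · exact absurd h hx.2
        · exact h
      refine ⟨h1, ?_, ?_, ?_⟩
      · rw [Finset.disjoint_left]
        intro x hxS hxd
        exact (Finset.mem_sdiff.mp hxd).2 (Finset.inter_subset_right (htr' ▸ hxS))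
      · have := Finset.card_inter_add_card_sdiff e W
        rw [htr'] at this
        omega
      · rw [← htr']
        ext x
        simp only [Finset.mem_union, Finset.mem_inter, Finset.mem_sdiff]
        tauto
    obtain ⟨h11, h12, h13, h14⟩ := key e₁ hc₁ hs₁ rfl
    obtain ⟨h21, h22, h23, h24⟩ := key e₂ hc₂ hs₂ htr.symm
    have hSmem : S ∈ W.powerset.toList := by
      rw [Finset.mem_toList, Finset.mem_powerset]
      exact Finset.inter_subset_right
    have := hZ S hSmem hSr (e₁ \ W) (e₂ \ W) h11 h21 h12 h22 h13 h23
    rw [h14, h24]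
    exact this
  · have hsub : coloursOn r Δ (↑W ∪ Z) = coloursOn r Δ X := by
      apply Set.Subset.antisymm
      · rintro c ⟨e, ⟨h1, h2⟩, rfl⟩
        exact ⟨e, ⟨h1.trans (Set.union_subset hWX hZX), h2⟩, rfl⟩
      · intro c hc
        obtain ⟨h1, h2, h3⟩ := hew c hc
        refine ⟨ew c, ⟨?_, h2⟩, h3⟩
        intro x hx
        apply Set.mem_union_left
        simp only [hWdef, Finset.coe_biUnion, Set.mem_iUnion, Finset.mem_coe]
        exact ⟨c, hfin.mem_toFinset.mpr hc, hx⟩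
    rw [gamma, hsub, ← gamma, hgX]

/-- **Lemma 5 (main lemma), parts (1) and (2).** For `m ∈ F_Δ` with `m ≥ 2` there is a
natural number `a ≥ 1` with `Σ_{i=0}^{r} C(a,i) ≥ m` such that `F_Δ` meets
`[m - min(Σ_{i=0}^{r-1} C(a-1,i), r(m-1)/a), m)`. -/
theorem main_lemma (r k : ℕ) (hr : 2 ≤ r) (hk : 1 ≤ k) (Δ : Finset ℕ → ℕ)
    (hΔ : IsColouring r k Δ) (m : ℕ) (hm : m ∈ Fdelta r Δ) (hm2 : 2 ≤ m) :
    ∃ a : ℕ, 1 ≤ a ∧ m ≤ ∑ i ∈ Finset.range (r + 1), Nat.choose a i ∧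
      ∃ m' ∈ Fdelta r Δ,
        (m : ℚ) - min ((∑ i ∈ Finset.range r, Nat.choose (a - 1) i : ℕ) : ℚ)
            ((r : ℚ) * ((m : ℚ) - 1) / (a : ℚ)) ≤ (m' : ℚ) ∧
        m' < m := by
  classical
  obtain ⟨X, hXinf, hgX⟩ := hm
  set P : ℕ → Prop := fun b => ∃ A : Finset ℕ, ∃ Y : Set ℕ, A.card = b ∧ Y.Infinite ∧
    Disjoint (↑A : Set ℕ) Y ∧
    (∀ e₁ e₂ : Finset ℕ, e₁.card = r → e₂.card = r → ↑e₁ ⊆ ↑A ∪ Y → ↑e₂ ⊆ ↑A ∪ Y →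
      e₁ ∩ A = e₂ ∩ A → Δ e₁ = Δ e₂) ∧ gamma r Δ (↑A ∪ Y) = m with hPdef
  have hPex : ∃ b, P b := by
    obtain ⟨A, Y, h1, h2, h3, h4⟩ := good_exists r k Δ hΔ.1 m (by omega) X hXinf hgX
    exact ⟨A.card, A, Y, rfl, h1, h2, h3, h4⟩
  set a := Nat.find hPex with ha
  obtain ⟨A, Y, hAcard, hYinf, hdisj, hcanon, hgam⟩ := Nat.find_spec hPex
  have hmin : ∀ b, b < a → ¬ P b := fun b hb => Nat.find_min hPex hb
  choose ext hext1 hext2 using fun n => hYinf.exists_subset_card_eq n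
  set φ : Finset ℕ → ℕ := fun S => Δ (S ∪ ext (r - S.card)) with hφ
  set TT : Finset ℕ → Finset ℕ :=
    fun B => (B.powerset.filter (fun S => S.card ≤ r)).image φ with hTT
  have hgamB : ∀ B : Finset ℕ, B ⊆ A → gamma r Δ (↑B ∪ Y) = (TT B).card := by
    intro B hB
    rw [gamma, colours_on_eq r Δ A B Y hB hdisj hcanon ext hext1 hext2, Set.ncard_coe_finset]
  have hTAm : (TT A).card = m := by rw [← hgamB A subset_rfl]; exact hgam
  have ha1 : 1 ≤ a := by
    by_contra h
    have hA0 : A = ∅ := Finset.card_eq_zero.mp (by omega)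
    have hle : (TT A).card ≤ 1 := by
      calc (TT A).card ≤ (A.powerset.filter (fun S => S.card ≤ r)).card :=
            Finset.card_image_le
        _ ≤ A.powerset.card := Finset.card_le_card (Finset.filter_subset _ _)
        _ = 1 := by rw [hA0]; simp
    omega
  refine ⟨a, ha1, ?_, ?_⟩
  · rw [← hTAm]
    calc (TT A).card ≤ (A.powerset.filter (fun S => S.card ≤ r)).card :=
          Finset.card_image_le
      _ ≤ ∑ i ∈ Finset.range (r+1), (A.card).choose i := pw_card A r
      _ = ∑ i ∈ Finset.range (r+1), a.choose i := by rw [hAcard]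
  -- part (2)
  have hTsub : ∀ w, TT (A.erase w) ⊆ TT A := by
    intro w
    apply Finset.image_subset_image
    apply Finset.filter_subset_filter
    exact Finset.powerset_mono.mpr (A.erase_subset w)
  have hpre : ∀ w, ∀ c ∈ TT A \ TT (A.erase w), ∀ S : Finset ℕ, S ⊆ A → S.card ≤ r →
      φ S = c → w ∈ S := by
    intro w c hc S hSA hSr hφS
    by_contra hw
    have hSsub : S ⊆ A.erase w := fun x hx =>
      Finset.mem_erase.mpr ⟨fun h => hw (h ▸ hx), hSA hx⟩
    exact (Finset.mem_sdiff.mp hc).2 (Finset.mem_image.mpr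
      ⟨S, Finset.mem_filter.mpr ⟨Finset.mem_powerset.mpr hSsub, hSr⟩, hφS⟩)
  -- bound 1
  have hB1 : ∀ w ∈ A, (TT A \ TT (A.erase w)).card ≤
      ∑ i ∈ Finset.range r, (a - 1).choose i := by
    intro w hw
    have hsub : TT A \ TT (A.erase w) ⊆
        ((A.powerset.filter (fun S => S.card ≤ r)).filter (fun S => w ∈ S)).image φ := by
      intro c hc
      obtain ⟨S, hS, hφS⟩ := Finset.mem_image.mp (Finset.mem_sdiff.mp hc).1
      have h1 := Finset.mem_filter.mp hS
      have hSA := Finset.mem_powerset.mp h1.1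
      have hwS := hpre w c hc S hSA h1.2 hφS
      exact Finset.mem_image.mpr ⟨S, Finset.mem_filter.mpr ⟨hS, hwS⟩, hφS⟩
    have hinj : ((A.powerset.filter (fun S => S.card ≤ r)).filter (fun S => w ∈ S)).card ≤
        ((A.erase w).powerset.filter (fun S => S.card ≤ r - 1)).card := by
      apply Finset.card_le_card_of_injOn (fun S => S.erase w)
      · intro S hS
        simp only [Finset.mem_coe, Finset.mem_filter, Finset.mem_powerset] at hS ⊢
        obtain ⟨⟨hSA, hSr⟩, hwS⟩ := hS
        constructor
        · intro x hx
          rw [Finset.mem_erase] at hx ⊢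
          exact ⟨hx.1, hSA hx.2⟩
        · rw [Finset.card_erase_of_mem hwS]
          omega
      · intro S hS S' hS' hE
        simp only [Finset.coe_filter, Set.mem_setOf_eq] at hS hS'
        rw [← Finset.insert_erase hS.2, ← Finset.insert_erase hS'.2]
        exact congrArg (insert w) hE
    calc (TT A \ TT (A.erase w)).card
        ≤ (((A.powerset.filter (fun S => S.card ≤ r)).filter (fun S => w ∈ S)).image φ).card :=
          Finset.card_le_card hsub
      _ ≤ ((A.powerset.filter (fun S => S.card ≤ r)).filter (fun S => w ∈ S)).card :=
          Finset.card_image_le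
      _ ≤ ((A.erase w).powerset.filter (fun S => S.card ≤ r - 1)).card := hinj
      _ ≤ ∑ i ∈ Finset.range ((r-1)+1), ((A.erase w).card).choose i := pw_card (A.erase w) (r-1)
      _ = ∑ i ∈ Finset.range r, (a - 1).choose i := by
          have hr' : (r-1)+1 = r := by omega
          rw [Finset.card_erase_of_mem hw, hAcard, hr']
  -- bound 2 : averaging
  set c0 : ℕ := φ ∅ with hc0def
  have hc0mem : ∀ B : Finset ℕ, c0 ∈ TT B := by
    intro B
    exact Finset.mem_image.mpr ⟨∅, Finset.mem_filter.mpr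
      ⟨Finset.mem_powerset.mpr (Finset.empty_subset _), by simp⟩, rfl⟩
  have hLsub : ∀ w, TT A \ TT (A.erase w) ⊆ (TT A).erase c0 := by
    intro w c hc
    rw [Finset.mem_erase]
    refine ⟨?_, (Finset.mem_sdiff.mp hc).1⟩
    intro h
    exact (Finset.mem_sdiff.mp hc).2 (h ▸ hc0mem (A.erase w))
  have hScx : ∀ c : ℕ, ∃ S : Finset ℕ, c ∈ TT A → (S ⊆ A ∧ S.card ≤ r ∧ φ S = c) := by
    intro c
    by_cases hc : c ∈ TT A
    · obtain ⟨S, hS, hφS⟩ := Finset.mem_image.mp hc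
      have h1 := Finset.mem_filter.mp hS
      exact ⟨S, fun _ => ⟨Finset.mem_powerset.mp h1.1, h1.2, hφS⟩⟩
    · exact ⟨∅, fun h => absurd h hc⟩
  choose Sc hSc using hScx
  have hsum : ∑ w ∈ A, (TT A \ TT (A.erase w)).card ≤ r * (m - 1) := by
    have h1 : ∀ w, (TT A \ TT (A.erase w)).card =
        (((TT A).erase c0).filter (fun c => c ∈ TT A \ TT (A.erase w))).card := by
      intro w
      congr 1
      apply Finset.Subset.antisymm
      · intro c hc
        exact Finset.mem_filter.mpr ⟨hLsub w hc, hc⟩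
      · intro c hc
        exact (Finset.mem_filter.mp hc).2
    calc ∑ w ∈ A, (TT A \ TT (A.erase w)).card
        = ∑ w ∈ A, ∑ c ∈ (TT A).erase c0,
            if c ∈ TT A \ TT (A.erase w) then 1 else 0 := by
          refine Finset.sum_congr rfl fun w _ => ?_
          rw [h1 w, Finset.card_filter]
      _ = ∑ c ∈ (TT A).erase c0, ∑ w ∈ A,
            if c ∈ TT A \ TT (A.erase w) then 1 else 0 := Finset.sum_comm
      _ ≤ ∑ c ∈ (TT A).erase c0, r := by
          apply Finset.sum_le_sum
          intro c hc
          have hcTA := Finset.mem_of_mem_erase hc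
          obtain ⟨hScA, hScr, hφSc⟩ := hSc c hcTA
          calc (∑ w ∈ A, if c ∈ TT A \ TT (A.erase w) then 1 else 0)
              = (A.filter (fun w => c ∈ TT A \ TT (A.erase w))).card :=
                (Finset.card_filter _ _).symm
            _ ≤ (Sc c).card := by
                apply Finset.card_le_card
                intro w hw
                obtain ⟨hwA, hcw⟩ := Finset.mem_filter.mp hw
                exact hpre w c hcw (Sc c) hScA hScr hφSc
            _ ≤ r := hScr
      _ = (m - 1) * r := by
          rw [Finset.sum_const, smul_eq_mul, Finset.card_erase_of_mem (hc0mem A), hTAm]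
      _ = r * (m - 1) := Nat.mul_comm _ _
  -- pick a good w
  have hAne : A.Nonempty := Finset.card_pos.mp (by omega)
  have hpick : ∃ w ∈ A, (TT A \ TT (A.erase w)).card * a ≤ r * (m - 1) := by
    apply Finset.exists_le_of_sum_le hAne
    calc ∑ w ∈ A, (TT A \ TT (A.erase w)).card * a
        = (∑ w ∈ A, (TT A \ TT (A.erase w)).card) * a := (Finset.sum_mul _ _ _).symm
      _ ≤ (r * (m-1)) * a := Nat.mul_le_mul_right a hsum
      _ = ∑ w ∈ A, r * (m-1) := by
          rw [Finset.sum_const, smul_eq_mul, hAcard, Nat.mul_comm]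
  obtain ⟨w, hwA, hwle⟩ := hpick
  set m' : ℕ := (TT (A.erase w)).card with hm'def
  have hgam' : gamma r Δ (↑(A.erase w) ∪ Y) = m' := hgamB (A.erase w) (A.erase_subset w)
  have hm'le : m' ≤ m := hTAm ▸ Finset.card_le_card (hTsub w)
  have hm'ne : m' ≠ m := by
    intro hEq
    apply hmin (a - 1) (by omega)
    refine ⟨A.erase w, Y, by rw [Finset.card_erase_of_mem hwA, hAcard], hYinf,
      hdisj.mono_left (by exact_mod_cast A.erase_subset w), ?_, hEq ▸ hgam'⟩
    intro e₁ e₂ hc1 hc2 hs1 hs2 htr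
    have hsub' : (↑(A.erase w) : Set ℕ) ∪ Y ⊆ ↑A ∪ Y :=
      Set.union_subset_union_left Y (by exact_mod_cast A.erase_subset w)
    apply hcanon e₁ e₂ hc1 hc2 (hs1.trans hsub') (hs2.trans hsub')
    rw [trace_eq (A.erase_subset w) hdisj hs1, trace_eq (A.erase_subset w) hdisj hs2, htr]
  have hm'lt : m' < m := lt_of_le_of_ne hm'le hm'ne
  have hdiffcard : (TT A \ TT (A.erase w)).card = m - m' := by
    rw [Finset.card_sdiff_of_subset (hTsub w), hTAm]
  refine ⟨m', ⟨↑(A.erase w) ∪ Y, hYinf.mono Set.subset_union_right, hgam'⟩, ?_, hm'lt⟩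
  have key : (m : ℚ) - m' = ((m - m' : ℕ) : ℚ) := by
    rw [Nat.cast_sub hm'le]
  rw [sub_le_iff_le_add, ← sub_le_iff_le_add']
  rw [key, ← hdiffcard]
  apply le_min
  · exact_mod_cast hB1 w hwA
  · have hapos : (0 : ℚ) < a := by exact_mod_cast ha1
    rw [le_div_iff₀ hapos]
    have : ((TT A \ TT (A.erase w)).card * a : ℕ) ≤ (r * (m - 1) : ℕ) := hwle
    calc ((TT A \ TT (A.erase w)).card : ℚ) * a = (((TT A \ TT (A.erase w)).card * a : ℕ) : ℚ) := by
          push_cast; ring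
      _ ≤ ((r * (m-1) : ℕ) : ℚ) := by exact_mod_cast this
      _ = (r : ℚ) * ((m : ℚ) - 1) := by
          push_cast [Nat.cast_sub (by omega : 1 ≤ m)]
          ring
end
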